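/- arXiv:1711.08584 — 6 statements merged into one kernel-verified Lean document; each statement's English description precedes it below -/
import Mathlib

section
/- For integers n ≥ 1 and 0 ≤ m ≤ n, the number of (n,m)-Dyck paths is independent of m and equals the n-th Catalan number C_n = (1/(n+1))·C(2n,n). -/
-- A lattice path is a list of steps: `true` = up step `(0,1)`, `false` = down step `(1,0)`.
/-- The number of up steps of `p` that lie strictly below the line `y = x`
(i.e. up steps starting at a point with `y < x`). -/
def upsBelow (p : List Bool) : ℕ :=
  (List.range p.length).countP fun i =>
    p.getD i false && decide ((p.take i).count true < (p.take i).count false)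

/-- `IsNM n m p`: `p` is an `(n,m)`-Dyck path, i.e. a path from `(0,0)` to `(n,n)`
with exactly `m` up steps below the line `y = x`. -/
def IsNM (n m : ℕ) (p : List Bool) : Prop :=
  p.length = 2 * n ∧ p.count true = n ∧ upsBelow p = m

/-- The number of peaks (`UD` factors) of `p`. -/
def peaks (p : List Bool) : ℕ :=
  (List.range (p.length - 1)).countP fun i => p.getD i false && !p.getD (i + 1) true

/-- The number of `(n,m)`-Dyck paths with exactly `k` peaks. -/
noncomputable def pC (n m k : ℕ) : ℕ :=
  Nat.card {p : List Bool // IsNM n m p ∧ peaks p = k}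

/-- The number of `(n,m)`-Dyck paths with exactly `k` peaks whose first step is `a`
and whose last step is `b`. -/
noncomputable def pXY (n m k : ℕ) (a b : Bool) : ℕ :=
  Nat.card {p : List Bool // IsNM n m p ∧ peaks p = k ∧
    p.head? = some a ∧ p.getLast? = some b}

namespace CF


def flaw (a b : ℕ) : List Bool → ℕ
  | [] => 0
  | true :: l => (if a < b then 1 else 0) + flaw (a+1) b l
  | false :: l => flaw a (b+1) l

theorem flaw_congr (l : List Bool) {a a' b b' : ℕ} (ha : a = a') (hb : b = b') :
    flaw a b l = flaw a' b' l := by subst ha; subst hb; rfl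

theorem flaw_append (l₁ l₂ : List Bool) : ∀ a b,
    flaw a b (l₁ ++ l₂) = flaw a b l₁ + flaw (a + l₁.count true) (b + l₁.count false) l₂ := by
  induction l₁ with
  | nil => simp [flaw]
  | cons x l ih =>
    intro a b
    have c1 : ∀ l' : List Bool, List.count true (false::l') = List.count true l' := by simp
    have c2 : ∀ l' : List Bool, List.count false (false::l') = List.count false l' + 1 := by simp
    have c3 : ∀ l' : List Bool, List.count true (true::l') = List.count true l' + 1 := by simp
    have c4 : ∀ l' : List Bool, List.count false (true::l') = List.count false l' := by simp
    cases x with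
    | false =>
      simp only [List.cons_append, flaw, List.append_eq, c1, c2]
      rw [ih a (b+1)]
      congr 1
      exact flaw_congr _ rfl (by omega)
    | true =>
      simp only [List.cons_append, flaw, List.append_eq, c3, c4]
      rw [ih (a+1) b]
      rw [flaw_congr l₂ (show (a + 1) + List.count true l = a + (List.count true l + 1) by omega)
        (rfl : b + List.count false l = b + List.count false l)]
      omega

theorem flaw_shift (l : List Bool) : ∀ a b c, flaw (a + c) (b + c) l = flaw a b l := by
  induction l with
  | nil => simp [flaw]
  | cons x l ih =>
    intro a b c
    cases x with
    | false =>
      simp only [flaw]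
      rw [show b + c + 1 = (b+1) + c by omega, ih]
    | true =>
      simp only [flaw]
      rw [show a + c + 1 = (a+1) + c by omega, ih]
      congr 1
      simp only [Nat.add_lt_add_iff_right]

theorem flaw_le_count (l : List Bool) : ∀ a b, flaw a b l ≤ l.count true := by
  induction l with
  | nil => simp [flaw]
  | cons x l ih =>
    intro a b
    cases x with
    | false =>
      simp only [flaw, List.count_cons, if_neg (by simp : ¬ (false == true) = true)]
      simpa using ih a (b+1)
    | true =>
      simp only [flaw, List.count_cons, if_pos (by simp : (true == true) = true)]
      have := ih (a+1) b
      split <;> omega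

theorem flaw_eq_zero (l : List Bool) : ∀ a b,
    (∀ i, b + ((l.take i).count false) ≤ a + (l.take i).count true) → flaw a b l = 0 := by
  induction l with
  | nil => simp [flaw]
  | cons x l ih =>
    intro a b h
    have h0 : b ≤ a := by simpa using h 0
    cases x with
    | true =>
      simp only [flaw, if_neg (by omega : ¬ a < b), Nat.zero_add]
      refine ih (a+1) b (fun i => ?_)
      have := h (i+1)
      simp only [List.take_succ_cons, List.count_cons] at this
      simp at this ⊢
      omega
    | false =>
      refine ih a (b+1) (fun i => ?_)
      have := h (i+1)
      simp only [List.take_succ_cons, List.count_cons] at this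
      simp at this ⊢
      omega

theorem flaw_eq_count (l : List Bool) : ∀ a b,
    (∀ i, a + (l.take i).count true < b + (l.take i).count false) → flaw a b l = l.count true := by
  induction l with
  | nil => simp [flaw]
  | cons x l ih =>
    intro a b h
    have h0 : a < b := by simpa using h 0
    cases x with
    | true =>
      simp only [flaw, if_pos h0, List.count_cons]
      rw [ih (a+1) b (fun i => by have := h (i+1); simp only [List.take_succ_cons, List.count_cons] at this; simp at this; omega)]
      simp [Nat.add_comm]
    | false =>
      simp only [flaw, List.count_cons]
      rw [ih a (b+1) (fun i => by have := h (i+1); simp only [List.take_succ_cons, List.count_cons] at this; simp at this; omega)]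
      simp

theorem count_eq_zero_of_flaw (l : List Bool) : ∀ a b, flaw a b l = 0 → a < b → l.count true = 0 := by
  induction l with
  | nil => simp
  | cons x l ih =>
    intro a b hf hab
    cases x with
    | true => simp [flaw, if_pos hab] at hf
    | false =>
      simp only [flaw] at hf
      simp [List.count_cons, ih a (b+1) hf (by omega)]

theorem nonneg_of_flaw_zero (l : List Bool) : ∀ a b, flaw a b l = 0 → b ≤ a →
    b + l.count false ≤ a + l.count true →
    ∀ i, b + (l.take i).count false ≤ a + (l.take i).count true := by
  induction l with
  | nil => simp
  | cons x l ih =>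
    intro a b hf hba hend i
    cases i with
    | zero => simpa
    | succ i =>
      simp only [List.take_succ_cons, List.count_cons]
      cases x with
      | true =>
        simp only [flaw, if_neg (by omega : ¬ a < b), Nat.zero_add] at hf
        have := ih (a+1) b hf (by omega)
          (by simp only [List.count_cons] at hend; simp at hend; omega) i
        simp
        omega
      | false =>
        simp only [flaw] at hf
        rcases Nat.lt_or_ge a (b+1) with hc | hc
        · have h0 : l.count true = 0 := count_eq_zero_of_flaw l a (b+1) hf hc
          simp only [List.count_cons] at hend
          simp [h0] at hend
          omega
        · have := ih a (b+1) hf hc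
            (by simp only [List.count_cons] at hend; simp at hend; omega) i
          simp
          omega




theorem upsBelow_eq_flaw_aux (l : List Bool) : ∀ a b : ℕ,
    (List.range l.length).countP (fun i =>
      l.getD i false && decide (a + (l.take i).count true < b + (l.take i).count false))
    = flaw a b l := by
  induction l with
  | nil => simp [flaw]
  | cons x l ih =>
    intro a b
    rw [List.length_cons, List.range_succ_eq_map, List.countP_cons, List.countP_map]
    cases x with
    | true =>
      have h2 : ((List.range l.length).countP ((fun i =>
          ((true :: l).getD i false && decide (a + ((true :: l).take i).count true < b + ((true :: l).take i).count false))) ∘ Nat.succ)) = flaw (a+1) b l := by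
        rw [← ih (a+1) b]
        apply List.countP_congr
        intro i _
        simp [List.take_succ_cons, List.count_cons, Nat.add_assoc, Nat.add_comm 1]
      rw [h2]
      simp only [flaw, List.getD_cons_zero, List.take_zero]
      simp [Nat.add_comm]
    | false =>
      have h2 : ((List.range l.length).countP ((fun i =>
          ((false :: l).getD i false && decide (a + ((false :: l).take i).count true < b + ((false :: l).take i).count false))) ∘ Nat.succ)) = flaw a (b+1) l := by
        rw [← ih a (b+1)]
        apply List.countP_congr
        intro i _
        simp [List.take_succ_cons, List.count_cons, Nat.add_assoc, Nat.add_comm 1]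
      rw [h2]
      simp [flaw]

theorem upsBelow_eq_flaw (p : List Bool) : upsBelow p = flaw 0 0 p := by
  rw [← upsBelow_eq_flaw_aux p 0 0, upsBelow]
  simp



def go (b : Bool) : ℕ → List Bool → List Bool × List Bool
  | _, [] => ([], [])
  | d, x :: l =>
    if x = b then
      let r := go b (d+1) l; (x :: r.1, r.2)
    else if d ≤ 1 then ([], l)
    else
      let r := go b (d-1) l; (x :: r.1, r.2)

theorem go_cons_same (b : Bool) (d : ℕ) (l : List Bool) :
    go b d (b :: l) = (b :: (go b (d+1) l).1, (go b (d+1) l).2) := by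
  simp [go]

theorem go_cons_other_one (b : Bool) (l : List Bool) :
    go b 1 ((!b) :: l) = ([], l) := by
  cases b <;> simp [go]

theorem go_cons_other (b : Bool) (d : ℕ) (hd : 2 ≤ d) (l : List Bool) :
    go b d ((!b) :: l) = ((!b) :: (go b (d-1) l).1, (go b (d-1) l).2) := by
  cases b <;> simp [go, (by omega : ¬ d ≤ 1)] <;> omega

theorem count_same (b : Bool) (l : List Bool) : (b :: l).count b = l.count b + 1 :=
  List.count_cons_self

theorem count_other (b : Bool) (l : List Bool) : (b :: l).count (!b) = l.count (!b) := by
  cases b <;> simp [List.count_cons]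

theorem count_other' (b : Bool) (l : List Bool) : ((!b) :: l).count b = l.count b := by
  cases b <;> simp [List.count_cons]

theorem count_same' (b : Bool) (l : List Bool) : ((!b) :: l).count (!b) = l.count (!b) + 1 :=
  List.count_cons_self

theorem go_spec (b : Bool) (l : List Bool) : ∀ d, 1 ≤ d → d + l.count b ≤ l.count (!b) →
    (go b d l).1 ++ (!b) :: (go b d l).2 = l ∧
    (go b d l).1.count (!b) + 1 = (go b d l).1.count b + d ∧
    (∀ i, (((go b d l).1.take i).count (!b)) < ((go b d l).1.take i).count b + d) := by
  induction l with
  | nil => intro d h1 h2; simp at h2; omega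
  | cons x l ih =>
    intro d h1 h2
    by_cases hx : x = b
    · subst hx
      rw [count_same, count_other] at h2
      obtain ⟨e1, e2, e3⟩ := ih (d+1) (by omega) (by omega)
      rw [go_cons_same]
      refine ⟨by simpa using e1, ?_, ?_⟩
      · rw [count_same, count_other]; omega
      · intro i
        cases i with
        | zero => simp; omega
        | succ i =>
          have := e3 i
          rw [List.take_succ_cons, count_same, count_other]
          omega
    · have hx' : x = !b := by cases b <;> cases x <;> simp_all
      subst hx'
      rw [count_other', count_same'] at h2
      by_cases hd : d ≤ 1
      · have hd1 : d = 1 := by omega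
        subst hd1
        rw [go_cons_other_one]
        exact ⟨rfl, by simp, fun i => by simp⟩
      · obtain ⟨e1, e2, e3⟩ := ih (d-1) (by omega) (by omega)
        rw [go_cons_other b d (by omega)]
        refine ⟨by simpa using e1, ?_, ?_⟩
        · rw [count_other', count_same']; omega
        · intro i
          cases i with
          | zero => simp; omega
          | succ i =>
            have := e3 i
            rw [List.take_succ_cons, count_other', count_same']
            omega

theorem go_eq (b : Bool) (A : List Bool) : ∀ d B, 1 ≤ d →
    (∀ i, ((A.take i).count (!b)) < (A.take i).count b + d) →
    A.count (!b) + 1 = A.count b + d →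
    go b d (A ++ (!b) :: B) = (A, B) := by
  induction A with
  | nil =>
    intro d B h1 _ hbal
    simp at hbal
    subst hbal
    rw [List.nil_append, go_cons_other_one]
  | cons x A ih =>
    intro d B h1 hpre hbal
    by_cases hx : x = b
    · subst hx
      rw [count_same, count_other] at hbal
      have hrec := ih (d+1) B (by omega) (fun i => by
        have := hpre (i+1)
        rw [List.take_succ_cons, count_same, count_other] at this
        omega) (by omega)
      rw [List.cons_append, go_cons_same, hrec]
    · have hx' : x = !b := by cases b <;> cases x <;> simp_all
      subst hx'
      have hd2 : 2 ≤ d := by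
        have := hpre 1
        rw [show (((!b) :: A).take 1) = (!b) :: ([] : List Bool) by simp,
          count_other', count_same'] at this
        simp at this
        omega
      rw [count_other', count_same'] at hbal
      have hrec := ih (d-1) B (by omega) (fun i => by
        have := hpre (i+1)
        rw [List.take_succ_cons, count_other', count_same'] at this
        omega) (by omega)
      rw [List.cons_append, go_cons_other b d hd2, hrec]


end CF

namespace CF

theorem length_eq_counts (l : List Bool) : l.length = l.count true + l.count false := by
  induction l with
  | nil => simp
  | cons x l ih => cases x <;> simp [List.count_cons] <;> omega

theorem count_true_map_not (l : List Bool) : (l.map not).count true = l.count false := by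
  induction l with
  | nil => simp
  | cons x l ih => cases x <;> simp [List.count_cons, ih]

theorem count_false_map_not (l : List Bool) : (l.map not).count false = l.count true := by
  induction l with
  | nil => simp
  | cons x l ih => cases x <;> simp [List.count_cons, ih]

theorem flaw_cons_true (a b : ℕ) (l : List Bool) :
    flaw a b (true :: l) = (if a < b then 1 else 0) + flaw (a+1) b l := rfl

theorem flaw_cons_false (a b : ℕ) (l : List Bool) :
    flaw a b (false :: l) = flaw a (b+1) l := rfl

theorem flaw_true_decomp (A B : List Bool)
    (h1 : ∀ i, (A.take i).count false ≤ (A.take i).count true)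
    (hbal : A.count false = A.count true) :
    flaw 0 0 (true :: (A ++ false :: B)) = flaw 0 0 B := by
  rw [flaw_cons_true, if_neg (lt_irrefl 0), flaw_append, flaw_eq_zero A 1 0
    (fun i => by have := h1 i; omega), flaw_cons_false,
    flaw_congr B (show 1 + A.count true = 0 + (A.count true + 1) by omega)
      (show 0 + A.count false + 1 = 0 + (A.count true + 1) by omega),
    flaw_shift]
  omega

theorem flaw_false_decomp (A B : List Bool)
    (h1 : ∀ i, (A.take i).count true ≤ (A.take i).count false)
    (hbal : A.count true = A.count false) :
    flaw 0 0 (false :: (A ++ true :: B)) = A.count true + 1 + flaw 0 0 B := by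
  rw [flaw_cons_false, flaw_append, flaw_eq_count A 0 1 (fun i => by have := h1 i; omega),
    flaw_cons_true, if_pos (by omega), flaw_congr B
      (show 0 + A.count true + 1 = 0 + (A.count true + 1) by omega)
      (show 1 + A.count false = 0 + (A.count true + 1) by omega), flaw_shift]
  omega

end CF

namespace CF

theorem map_not_map_not (l : List Bool) : (l.map not).map not = l := by
  simp [List.map_map, Function.comp_def]

theorem go_spec_true (l : List Bool) (h : 1 + l.count true ≤ l.count false) :
    (go true 1 l).1 ++ false :: (go true 1 l).2 = l ∧
    (go true 1 l).1.count false = (go true 1 l).1.count true ∧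
    ∀ i, (((go true 1 l).1.take i).count false ≤ ((go true 1 l).1.take i).count true) := by
  have h2 : (1:ℕ) + l.count true ≤ l.count (!true) := by simpa using h
  obtain ⟨e1, e2, e3⟩ := go_spec true l 1 le_rfl h2
  simp only [Bool.not_true] at e1 e2 e3
  exact ⟨e1, by omega, fun i => by have := e3 i; omega⟩

theorem go_spec_false (l : List Bool) (h : 1 + l.count false ≤ l.count true) :
    (go false 1 l).1 ++ true :: (go false 1 l).2 = l ∧
    (go false 1 l).1.count true = (go false 1 l).1.count false ∧
    ∀ i, (((go false 1 l).1.take i).count true ≤ ((go false 1 l).1.take i).count false) := by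
  have h2 : (1:ℕ) + l.count false ≤ l.count (!false) := by simpa using h
  obtain ⟨e1, e2, e3⟩ := go_spec false l 1 le_rfl h2
  simp only [Bool.not_false] at e1 e2 e3
  exact ⟨e1, by omega, fun i => by have := e3 i; omega⟩

theorem go_eq_true (A B : List Bool)
    (h1 : ∀ i, (A.take i).count false ≤ (A.take i).count true)
    (hbal : A.count false = A.count true) :
    go true 1 (A ++ false :: B) = (A, B) := by
  have := go_eq true A 1 B le_rfl
    (fun i => by have := h1 i; simp only [Bool.not_true]; omega)
    (by simp only [Bool.not_true]; omega)
  simpa using this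

theorem go_eq_false (A B : List Bool)
    (h1 : ∀ i, (A.take i).count true ≤ (A.take i).count false)
    (hbal : A.count true = A.count false) :
    go false 1 (A ++ true :: B) = (A, B) := by
  have := go_eq false A 1 B le_rfl
    (fun i => by have := h1 i; simp only [Bool.not_false]; omega)
    (by simp only [Bool.not_false]; omega)
  simpa using this

theorem finite_of_length {P : List Bool → Prop} (L : ℕ) (h : ∀ p, P p → p.length = L) :
    Finite {p : List Bool // P p} := by
  have hs : {p : List Bool | P p} ⊆ {l : List Bool | l.length = L} := fun p hp => h p hp
  exact ((List.finite_length_eq Bool L).subset hs).to_subtype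

instance (n m : ℕ) : Finite {p : List Bool // IsNM n m p} :=
  finite_of_length (2*n) (fun p hp => hp.1)

instance (n m : ℕ) (c : Prop) : Finite {p : List Bool // IsNM n m p ∧ c} :=
  finite_of_length (2*n) (fun p hp => hp.1.1)

noncomputable def f (n m : ℕ) : ℕ := Nat.card {p : List Bool // IsNM n m p}

theorem f_eq_zero (n m : ℕ) (h : n < m) : f n m = 0 := by
  have : IsEmpty {p : List Bool // IsNM n m p} := ⟨fun ⟨p, hp⟩ => by
    have h1 : upsBelow p ≤ p.count true := by
      rw [upsBelow_eq_flaw]; exact flaw_le_count p 0 0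
    rw [hp.2.1, hp.2.2] at h1
    omega⟩
  exact Nat.card_of_isEmpty

theorem isNM_nil : IsNM 0 0 [] := by
  refine ⟨by simp, by simp, ?_⟩
  simp [upsBelow]

theorem f_zero : f 0 0 = 1 := by
  haveI : Unique {p : List Bool // IsNM 0 0 p} :=
    { default := ⟨[], isNM_nil⟩
      uniq := fun ⟨p, hp⟩ => Subtype.ext (List.eq_nil_of_length_eq_zero (by
        have := hp.1; simpa using this)) }
  exact Nat.card_unique

theorem dyck_facts {k : ℕ} {A : List Bool} (hA : IsNM k 0 A) :
    A.count true = k ∧ A.count false = k ∧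
      (∀ i, (A.take i).count false ≤ (A.take i).count true) := by
  obtain ⟨hl, hc, hu⟩ := hA
  have hcf : A.count false = k := by have := length_eq_counts A; omega
  have hf : flaw 0 0 A = 0 := by rw [← upsBelow_eq_flaw]; exact hu
  exact ⟨hc, hcf, fun i => by
    have := nonneg_of_flaw_zero A 0 0 hf le_rfl (by omega) i; omega⟩

def Br (n m k : ℕ) : Type :=
  ({A : List Bool // IsNM k 0 A} × {B : List Bool // IsNM (n-k) m B}) ⊕
  ({A : List Bool // IsNM k 0 A} × {B : List Bool // IsNM (n-k) (m-(k+1)) B ∧ k+1 ≤ m})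

instance (n m k : ℕ) : Finite (Br n m k) := by unfold Br; infer_instance

def gmap (n m : ℕ) : (Σ k : Fin (n+1), Br n m (k : ℕ)) → {p : List Bool // IsNM (n+1) m p} :=
  fun x => match x with
  | ⟨k, Sum.inl (⟨A, hA⟩, ⟨B, hB⟩)⟩ => ⟨true :: (A ++ false :: B), by
      obtain ⟨hct, hcf, hpre⟩ := dyck_facts hA
      obtain ⟨hlB, hctB, huB⟩ := hB
      have hlA := hA.1
      have hk : (k : ℕ) ≤ n := Nat.lt_succ_iff.mp k.isLt
      refine ⟨?_, ?_, ?_⟩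
      · simp only [List.length_cons, List.length_append]
        omega
      · simp only [List.count_cons, List.count_append]
        simp
        omega
      · rw [upsBelow_eq_flaw, flaw_true_decomp A _ hpre (by omega), ← upsBelow_eq_flaw]
        exact huB⟩
  | ⟨k, Sum.inr (⟨A, hA⟩, ⟨B, hB⟩)⟩ => ⟨false :: ((A.map not) ++ true :: B), by
      obtain ⟨⟨hlB, hctB, huB⟩, hkm⟩ := hB
      obtain ⟨hct, hcf, hpre⟩ := dyck_facts hA
      have hlA := hA.1
      have hk : (k : ℕ) ≤ n := Nat.lt_succ_iff.mp k.isLt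
      have hct' : (A.map not).count true = (k:ℕ) := by rw [count_true_map_not]; omega
      have hcf' : (A.map not).count false = (k:ℕ) := by rw [count_false_map_not]; omega
      have hpre' : ∀ i, ((A.map not).take i).count true ≤ ((A.map not).take i).count false := by
        intro i
        rw [← List.map_take, count_true_map_not, count_false_map_not]
        exact hpre i
      refine ⟨?_, ?_, ?_⟩
      · simp only [List.length_cons, List.length_append, List.length_map]
        omega
      · simp only [List.count_cons, List.count_append]
        simp
        omega
      · rw [upsBelow_eq_flaw, flaw_false_decomp (A.map not) _ hpre' (by omega),
          ← upsBelow_eq_flaw]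
        omega⟩

end CF

namespace CF

theorem gmap_injective (n m : ℕ) : Function.Injective (gmap n m) := by
  rintro ⟨⟨k, hk⟩, (⟨⟨A, hA⟩, ⟨B, hB⟩⟩ | ⟨⟨A, hA⟩, ⟨B, hB⟩⟩)⟩
    ⟨⟨k', hk'⟩, (⟨⟨A', hA'⟩, ⟨B', hB'⟩⟩ | ⟨⟨A', hA'⟩, ⟨B', hB'⟩⟩)⟩ hxy <;>
    simp only [gmap, Subtype.mk.injEq, List.cons.injEq] at hxy
  · -- inl / inl
    obtain ⟨-, htail⟩ := hxy
    obtain ⟨hct, hcf, hpre⟩ := dyck_facts hA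
    obtain ⟨hct', hcf', hpre'⟩ := dyck_facts hA'
    have e1 := go_eq_true A B hpre (by omega)
    have e2 := go_eq_true A' B' hpre' (by omega)
    rw [htail, e2] at e1
    obtain ⟨eA, eB⟩ := Prod.mk.injEq .. ▸ e1
    subst eA; subst eB
    have hco : ((⟨k, hk⟩ : Fin (n+1)) : ℕ) = k := rfl
    have hco' : ((⟨k', hk'⟩ : Fin (n+1)) : ℕ) = k' := rfl
    rw [hco] at hct
    rw [hco'] at hct'
    have : k = k' := by omega
    subst this
    rfl
  · exact absurd hxy.1 (by simp)
  · exact absurd hxy.1 (by simp)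
  · -- inr / inr
    obtain ⟨-, htail⟩ := hxy
    obtain ⟨hct, hcf, hpre⟩ := dyck_facts hA
    obtain ⟨hct', hcf', hpre'⟩ := dyck_facts hA'
    have hpreM : ∀ i, (((A.map not).take i)).count true ≤ ((A.map not).take i).count false := by
      intro i
      rw [← List.map_take, count_true_map_not, count_false_map_not]
      exact hpre i
    have hpreM' : ∀ i, (((A'.map not).take i)).count true ≤ ((A'.map not).take i).count false := by
      intro i
      rw [← List.map_take, count_true_map_not, count_false_map_not]
      exact hpre' i
    have hbalM : (A.map not).count true = (A.map not).count false := by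
      rw [count_true_map_not, count_false_map_not]; omega
    have hbalM' : (A'.map not).count true = (A'.map not).count false := by
      rw [count_true_map_not, count_false_map_not]; omega
    have e1 := go_eq_false (A.map not) B hpreM hbalM
    have e2 := go_eq_false (A'.map not) B' hpreM' hbalM'
    rw [htail, e2] at e1
    obtain ⟨eA, eB⟩ := Prod.mk.injEq .. ▸ e1
    have eA' : A' = A := by
      rw [← map_not_map_not A', eA, map_not_map_not]
    subst eA'; subst eB
    have hco : ((⟨k, hk⟩ : Fin (n+1)) : ℕ) = k := rfl
    have hco' : ((⟨k', hk'⟩ : Fin (n+1)) : ℕ) = k' := rfl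
    rw [hco] at hct
    rw [hco'] at hct'
    have : k = k' := by omega
    subst this
    rfl

end CF

namespace CF

theorem gmap_surjective (n m : ℕ) : Function.Surjective (gmap n m) := by
  rintro ⟨p, hp⟩
  obtain ⟨hl, hc, hu⟩ := hp
  cases p with
  | nil => exact absurd hl (by simp)
  | cons x l =>
    have hll : l.length = 2*n + 1 := by
      have h := hl
      simp only [List.length_cons] at h
      omega
    rw [upsBelow_eq_flaw] at hu
    cases x with
    | true =>
      have hctl : l.count true = n := by
        simp only [List.count_cons] at hc
        simpa using hc
      have hcfl : l.count false = n + 1 := by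
        have := length_eq_counts l
        omega
      obtain ⟨e1, ebal, epre⟩ := go_spec_true l (by omega)
      set A := (go true 1 l).1 with hAdef
      set B := (go true 1 l).2 with hBdef
      set k := A.count true with hk
      have hcts : l.count true = A.count true + B.count true := by
        rw [← e1]; simp [List.count_append, List.count_cons]
      have hlen : l.length = A.length + 1 + B.length := by
        rw [← e1]; simp [List.length_append]; omega
      have hkn : k ≤ n := by omega
      have hA : IsNM k 0 A := by
        refine ⟨by rw [length_eq_counts A]; omega, rfl, ?_⟩
        rw [upsBelow_eq_flaw]
        exact flaw_eq_zero A 0 0 (fun i => by have := epre i; omega)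
      have hfl : flaw 0 0 (true :: (A ++ false :: B)) = m := by rw [e1]; exact hu
      rw [flaw_true_decomp A B epre ebal] at hfl
      have hB : IsNM (n-k) m B := by
        refine ⟨by have := length_eq_counts A; omega, by omega, ?_⟩
        rw [upsBelow_eq_flaw]; exact hfl
      refine ⟨⟨⟨k, by omega⟩, Sum.inl (⟨A, hA⟩, ⟨B, hB⟩)⟩, ?_⟩
      simp only [gmap]
      refine Subtype.ext ?_
      show true :: (A ++ false :: B) = true :: l
      rw [e1]
    | false =>
      have hctl : l.count true = n + 1 := by
        simp only [List.count_cons] at hc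
        simpa using hc
      have hcfl : l.count false = n := by
        have := length_eq_counts l
        omega
      obtain ⟨e1, ebal, epre⟩ := go_spec_false l (by omega)
      set A' := (go false 1 l).1 with hAdef
      set B := (go false 1 l).2 with hBdef
      set k := A'.count true with hk
      have hcts : l.count true = A'.count true + B.count true + 1 := by
        rw [← e1]; simp [List.count_append, List.count_cons]; omega
      have hlen : l.length = A'.length + 1 + B.length := by
        rw [← e1]; simp [List.length_append]; omega
      have hkn : k ≤ n := by omega
      have hA : IsNM k 0 (A'.map not) := by
        refine ⟨by simp only [List.length_map]; rw [length_eq_counts A']; omega,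
          by rw [count_true_map_not]; omega, ?_⟩
        rw [upsBelow_eq_flaw]
        refine flaw_eq_zero _ 0 0 (fun i => ?_)
        rw [← List.map_take, count_true_map_not, count_false_map_not]
        have := epre i
        omega
      have hfl : flaw 0 0 (false :: (A' ++ true :: B)) = m := by rw [e1]; exact hu
      rw [flaw_false_decomp A' B epre ebal] at hfl
      have hkm : k + 1 ≤ m := by omega
      have hB : IsNM (n-k) (m-(k+1)) B := by
        refine ⟨by have := length_eq_counts A'; omega, by omega, ?_⟩
        rw [upsBelow_eq_flaw]; omega
      refine ⟨⟨⟨k, by omega⟩, Sum.inr (⟨A'.map not, hA⟩, ⟨B, ⟨hB, hkm⟩⟩)⟩, ?_⟩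
      simp only [gmap]
      refine Subtype.ext ?_
      show false :: ((A'.map not).map not ++ true :: B) = false :: l
      rw [map_not_map_not, e1]

end CF

namespace CF

theorem card_sigma' {ι : Type} [Fintype ι] (F : ι → Type) [∀ i, Finite (F i)] :
    Nat.card (Σ i, F i) = ∑ i, Nat.card (F i) := by
  letI := fun i => Fintype.ofFinite (F i)
  classical
  rw [Nat.card_eq_fintype_card, Fintype.card_sigma]
  exact Finset.sum_congr rfl fun i _ => (Nat.card_eq_fintype_card).symm

theorem card_cond (j m' : ℕ) (c : Prop) [Decidable c] :
    Nat.card {B : List Bool // IsNM j m' B ∧ c} = if c then f j m' else 0 := by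
  by_cases hc : c
  · rw [if_pos hc]
    exact Nat.card_congr (Equiv.subtypeEquivRight fun B => and_iff_left hc)
  · rw [if_neg hc]
    haveI : IsEmpty {B : List Bool // IsNM j m' B ∧ c} := ⟨fun x => hc x.2.2⟩
    exact Nat.card_of_isEmpty

theorem card_Br (n m k : ℕ) :
    Nat.card (Br n m k)
      = f k 0 * f (n-k) m + (if k+1 ≤ m then f k 0 * f (n-k) (m-(k+1)) else 0) := by
  classical
  unfold Br
  rw [Nat.card_sum, Nat.card_prod, Nat.card_prod, card_cond]
  unfold f
  by_cases h : k+1 ≤ m <;> simp [h]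

theorem f_rec (n m : ℕ) :
    f (n+1) m = ∑ k ∈ Finset.range (n+1),
      (f k 0 * f (n-k) m + if k+1 ≤ m then f k 0 * f (n-k) (m-(k+1)) else 0) := by
  classical
  have hbij : Nat.card (Σ k : Fin (n+1), Br n m (k : ℕ)) = f (n+1) m :=
    Nat.card_eq_of_bijective _ ⟨gmap_injective n m, gmap_surjective n m⟩
  rw [← hbij, card_sigma']
  rw [← Fin.sum_univ_eq_sum_range (fun k =>
    (f k 0 * f (n-k) m + if k+1 ≤ m then f k 0 * f (n-k) (m-(k+1)) else 0)) (n+1)]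
  exact Finset.sum_congr rfl fun k _ => card_Br n m k

theorem f_eq_catalan : ∀ n m : ℕ, m ≤ n → f n m = catalan n := by
  intro n
  induction n using Nat.strong_induction_on with
  | _ n ih =>
    match n with
    | 0 =>
      intro m hm
      have : m = 0 := Nat.le_zero.mp hm
      subst this
      rw [f_zero, catalan_zero]
    | (N+1) =>
      intro m hm
      rw [f_rec]
      have step : ∀ k ∈ Finset.range (N+1),
          (f k 0 * f (N-k) m + if k+1 ≤ m then f k 0 * f (N-k) (m-(k+1)) else 0)
          = (if k + m ≤ N then catalan k * catalan (N-k) else 0)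
            + (if k+1 ≤ m then catalan k * catalan (N-k) else 0) := by
        intro k hk
        rw [Finset.mem_range] at hk
        rw [ih k (by omega) 0 (Nat.zero_le _)]
        congr 1
        · by_cases h : k + m ≤ N
          · rw [if_pos h, ih (N-k) (by omega) m (by omega)]
          · rw [if_neg h, f_eq_zero (N-k) m (by omega), Nat.mul_zero]
        · by_cases h : k+1 ≤ m
          · rw [if_pos h, if_pos h, ih (N-k) (by omega) (m-(k+1)) (by omega)]
          · rw [if_neg h, if_neg h]
      rw [Finset.sum_congr rfl step, Finset.sum_add_distrib]
      have e1 : ∑ k ∈ Finset.range (N+1), (if k + m ≤ N then catalan k * catalan (N-k) else 0)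
          = ∑ k ∈ Finset.range (N+1-m), catalan k * catalan (N-k) := by
        rw [← Finset.sum_filter]
        congr 1
        ext k
        simp only [Finset.mem_filter, Finset.mem_range]
        omega
      have e2 : ∑ k ∈ Finset.range (N+1), (if k+1 ≤ m then catalan k * catalan (N-k) else 0)
          = ∑ k ∈ Finset.range m, catalan k * catalan (N-k) := by
        rw [← Finset.sum_filter]
        congr 1
        ext k
        simp only [Finset.mem_filter, Finset.mem_range]
        omega
      have e3 : ∑ k ∈ Finset.range m, catalan k * catalan (N-k)
          = ∑ k ∈ Finset.Ico (N+1-m) (N+1), catalan k * catalan (N-k) := by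
        refine Finset.sum_nbij' (fun i => N - i) (fun j => N - j) ?_ ?_ ?_ ?_ ?_
        · intro a ha
          rw [Finset.mem_range] at ha
          rw [Finset.mem_Ico]
          omega
        · intro b hb
          rw [Finset.mem_Ico] at hb
          rw [Finset.mem_range]
          omega
        · intro a ha
          rw [Finset.mem_range] at ha
          omega
        · intro b hb
          rw [Finset.mem_Ico] at hb
          omega
        · intro a ha
          rw [Finset.mem_range] at ha
          rw [show N - (N - a) = a by omega, Nat.mul_comm]
      rw [e1, e2, e3]
      rw [Finset.range_eq_Ico, Finset.sum_Ico_consecutive _ (by omega : 0 ≤ N+1-m) (by omega : N+1-m ≤ N+1)]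
      rw [catalan_succ, Fin.sum_univ_eq_sum_range (fun k => catalan k * catalan (N-k)) (N+1),
        Finset.range_eq_Ico]

end CF

/-- Chung–Feller theorem: the number of `(n,m)`-Dyck paths is independent of `m` and
equals the Catalan number `C_n = (1/(n+1)) * C(2n, n)`. -/
theorem stmt_0 (n m : ℕ) (hn : 1 ≤ n) (hm : m ≤ n) :
    (n + 1) * Nat.card {p : List Bool // IsNM n m p} = Nat.choose (2 * n) n := by
  have h1 : Nat.card {p : List Bool // IsNM n m p} = catalan n := CF.f_eq_catalan n m hm
  rw [h1, succ_mul_catalan_eq_centralBinom, Nat.centralBinom_eq_two_mul_choose]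
end

section
/- For integers n ≥ 1, 0 ≤ m ≤ n, and 0 ≤ k ≤ n-1, the number of (n,m)-Dyck paths with exactly k double ascents is independent of m and equals the Narayana number (1/(k+1))·C(n-1,k)·C(n,k). -/
/-- The number of double ascents (`UU` factors) of `p`. -/
def doubleAscents (p : List Bool) : ℕ :=
  (List.range (p.length - 1)).countP fun i => p.getD i false && p.getD (i + 1) false

namespace CF2
def dl (w : List Bool) : ℤ := (w.count false : ℤ) - w.count true
def nb : List Bool → ℤ → ℕ
  | [], _ => 0
  | (true :: w), c => (if c ≤ 0 then 1 else 0) + nb w (c + 1)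
  | (false :: w), c => nb w (c - 1)
def das : List Bool → ℕ
  | [] => 0
  | [_] => 0
  | (a :: b₀ :: w) => (if a && b₀ then 1 else 0) + das (b₀ :: w)

@[simp] lemma dl_nil : dl [] = 0 := by simp [dl]
@[simp] lemma dl_cons_true (w : List Bool) : dl (true :: w) = dl w - 1 := by
  simp [dl, List.count_cons]; ring
@[simp] lemma dl_cons_false (w : List Bool) : dl (false :: w) = dl w + 1 := by
  simp [dl, List.count_cons]; ring
lemma dl_append (x y : List Bool) : dl (x ++ y) = dl x + dl y := by
  simp [dl, List.count_append]; ring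

@[simp] lemma nb_nil (c : ℤ) : nb [] c = 0 := rfl
lemma nb_true (w : List Bool) (c : ℤ) :
    nb (true :: w) c = (if c ≤ 0 then 1 else 0) + nb w (c + 1) := rfl
lemma nb_false (w : List Bool) (c : ℤ) : nb (false :: w) c = nb w (c - 1) := rfl

@[simp] lemma das_nil : das [] = 0 := rfl
@[simp] lemma das_single (a : Bool) : das [a] = 0 := rfl
lemma das_cons_cons (a b : Bool) (w : List Bool) :
    das (a :: b :: w) = (if a && b then 1 else 0) + das (b :: w) := rfl

lemma nb_append (x y : List Bool) (c : ℤ) :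
    nb (x ++ y) c = nb x c + nb y (c - dl x) := by
  induction x generalizing c with
  | nil => simp
  | cons a t ih =>
    cases a
    · show nb (t ++ y) (c - 1) = nb (false :: t) c + nb y (c - dl (false :: t))
      rw [ih, nb_false, dl_cons_false]
      congr 2
      ring
    · show (if c ≤ 0 then 1 else 0) + nb (t ++ y) (c + 1)
        = nb (true :: t) c + nb y (c - dl (true :: t))
      rw [ih, nb_true, dl_cons_true, Nat.add_assoc]
      congr 3
      ring

lemma nb_anti (w : List Bool) {c c' : ℤ} (h : c ≤ c') : nb w c' ≤ nb w c := by
  induction w generalizing c c' with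
  | nil => simp
  | cons a t ih =>
    cases a
    · rw [nb_false, nb_false]
      exact ih (by omega)
    · rw [nb_true, nb_true]
      have h1 := ih (show c + 1 ≤ c' + 1 by omega)
      have h2 : (if c' ≤ 0 then 1 else 0) ≤ (if c ≤ 0 then 1 else 0) := by
        split <;> split <;> omega
      omega

lemma nb_cross (w : List Bool) {c : ℤ} (hc : c ≤ 0) (hd : dl w < c) :
    nb w (c + 1) < nb w c := by
  induction w generalizing c with
  | nil => simp at hd; omega
  | cons a t ih =>
    cases a
    · rw [nb_false, nb_false]
      simp only [dl_cons_false] at hd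
      have h1 := ih (show c - 1 ≤ 0 by omega) (show dl t < c - 1 by omega)
      rw [show c + 1 - 1 = c - 1 + 1 by ring]
      exact h1
    · rw [nb_true, nb_true]
      simp only [dl_cons_true] at hd
      by_cases h1 : c + 1 ≤ 0
      · have h3 := ih h1 (by omega)
        have h2 : (if c + 1 ≤ 0 then 1 else 0) ≤ (if c ≤ 0 then 1 else 0) := by
          rw [if_pos h1, if_pos (by omega : c ≤ 0)]
        omega
      · have hc0 : c = 0 := by omega
        subst hc0
        rw [if_neg h1, if_pos le_rfl]
        have h4 := nb_anti t (show (0:ℤ)+1 ≤ 0+1+1 by omega)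
        omega

lemma nb_le_count (w : List Bool) (c : ℤ) : nb w c ≤ w.count true := by
  induction w generalizing c with
  | nil => simp
  | cons a t ih =>
    cases a
    · rw [nb_false]
      have := ih (c - 1)
      have h2 : (false :: t).count true = t.count true := by simp [List.count_cons]
      omega
    · rw [nb_true]
      have := ih (c + 1)
      have h2 : (true :: t).count true = t.count true + 1 := by simp [List.count_cons]
      split <;> omega

lemma das_cons_false (w : List Bool) : das (false :: w) = das w := by
  cases w with
  | nil => rfl
  | cons b u => rw [das_cons_cons]; simp

lemma das_append_false (x y : List Bool) :
    das (x ++ false :: y) = das x + das y := by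
  induction x with
  | nil => simp [das_cons_false]
  | cons a t ih =>
    cases t with
    | nil =>
      show das (a :: false :: y) = das [a] + das y
      rw [das_cons_cons, das_cons_false]
      simp
    | cons b u =>
      show das (a :: b :: (u ++ false :: y)) = das (a :: b :: u) + das y
      rw [das_cons_cons, das_cons_cons]
      have : das (b :: (u ++ false :: y)) = das (b :: u) + das y := ih
      omega

/-- prefix of w before its d-th false -/
def preF : List Bool → ℕ → List Bool
  | [], _ => []
  | (false :: _), 0 => []
  | (false :: w), (d+1) => false :: preF w d
  | (true :: w), d => true :: preF w d

def postF : List Bool → ℕ → List Bool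
  | [], _ => []
  | (false :: w), 0 => w
  | (false :: w), (d+1) => postF w d
  | (true :: w), d => postF w d

@[simp] lemma preF_false_zero (w : List Bool) : preF (false :: w) 0 = [] := rfl
@[simp] lemma preF_false_succ (w : List Bool) (d : ℕ) :
    preF (false :: w) (d + 1) = false :: preF w d := rfl
@[simp] lemma preF_true (w : List Bool) (d : ℕ) : preF (true :: w) d = true :: preF w d := by
  cases d <;> rfl
@[simp] lemma postF_false_zero (w : List Bool) : postF (false :: w) 0 = w := rfl
@[simp] lemma postF_false_succ (w : List Bool) (d : ℕ) :
    postF (false :: w) (d + 1) = postF w d := rfl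
@[simp] lemma postF_true (w : List Bool) (d : ℕ) : postF (true :: w) d = postF w d := by
  cases d <;> rfl

lemma preF_postF_split (w : List Bool) (d : ℕ) (h : d < w.count false) :
    w = preF w d ++ false :: postF w d := by
  induction w generalizing d with
  | nil => simp at h
  | cons a t ih =>
    cases a
    · cases d with
      | zero => simp
      | succ e =>
        simp only [preF_false_succ, postF_false_succ, List.cons_append, List.cons.injEq, true_and]
        exact ih e (by simp [List.count_cons] at h; omega)
    · simp only [preF_true, postF_true, List.cons_append, List.cons.injEq, true_and]
      exact ih d (by simpa [List.count_cons] using h)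

lemma count_false_preF (w : List Bool) (d : ℕ) (h : d < w.count false) :
    (preF w d).count false = d := by
  induction w generalizing d with
  | nil => simp at h
  | cons a t ih =>
    cases a
    · cases d with
      | zero => simp
      | succ e =>
        simp only [preF_false_succ, List.count_cons]
        rw [ih e (by simp [List.count_cons] at h; omega)]
        simp
    · simp only [preF_true, List.count_cons]
      rw [ih d (by simpa [List.count_cons] using h)]
      simp

lemma preF_append (c a : List Bool) : preF (c ++ false :: a) (c.count false) = c ∧
    postF (c ++ false :: a) (c.count false) = a := by
  induction c with
  | nil => simp
  | cons x t ih =>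
    cases x
    · simpa [List.count_cons] using ih
    · simpa [List.count_cons] using ih

/-- decomposition of later pre/post through an earlier cut -/
lemma preF_postF_decomp (w : List Bool) (d e : ℕ) (h : d + e + 1 < w.count false) :
    preF w (d + e + 1) = preF w d ++ false :: preF (postF w d) e ∧
    postF w (d + e + 1) = postF (postF w d) e := by
  induction w generalizing d with
  | nil => simp at h
  | cons a t ih =>
    cases a
    · cases d with
      | zero =>
        rw [show (0 : ℕ) + e + 1 = e + 1 by omega]
        simp
      | succ d' =>
        have hh : d' + e + 1 < t.count false := by simp [List.count_cons] at h; omega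
        have hd := ih d' hh
        rw [show d' + 1 + e + 1 = (d' + e + 1) + 1 by omega]
        simp only [preF_false_succ, postF_false_succ, List.cons_append, List.cons.injEq, true_and]
        exact hd
    · have hh : d + e + 1 < t.count false := by simpa [List.count_cons] using h
      have hd := ih d hh
      simp only [preF_true, postF_true, List.cons_append, List.cons.injEq, true_and]
      exact hd


-- ================= chunk 3 =================

def cutW (w : List Bool) (d : ℕ) : List Bool :=
  if d < w.count false then postF w d ++ false :: preF w d else w

lemma count_cutW (w : List Bool) (d : ℕ) (b : Bool) :
    (cutW w d).count b = w.count b := by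
  unfold cutW
  split
  · next h =>
    conv_rhs => rw [preF_postF_split w d h]
    simp [List.count_append, List.count_cons]
    omega
  · rfl

lemma dl_cutW (w : List Bool) (d : ℕ) : dl (cutW w d) = dl w := by
  simp [dl, count_cutW]

lemma das_cutW (w : List Bool) (d : ℕ) : das (cutW w d) = das w := by
  unfold cutW
  split
  · next h =>
    conv_rhs => rw [preF_postF_split w d h]
    rw [das_append_false, das_append_false]
    omega
  · rfl

lemma nbne {X Y : List Bool} (h : dl X + dl Y + 1 = 0) :
    nb (X ++ false :: Y) 1 ≠ nb (Y ++ false :: X) 1 := by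
  have e1 : nb (X ++ false :: Y) 1 = nb X 1 + nb Y (-dl X) := by
    rw [nb_append, nb_false]
    congr 2
    ring
  have e2 : nb (Y ++ false :: X) 1 = nb Y 1 + nb X (dl X + 1) := by
    rw [nb_append, nb_false]
    congr 2
    omega
  rw [e1, e2]
  rcases le_or_gt 0 (dl X) with ha | ha
  · have h1 : nb X (dl X + 1) ≤ nb X 1 := nb_anti X (by omega)
    have h2 : nb Y (-dl X + 1) < nb Y (-dl X) := nb_cross Y (by omega) (by omega)
    have h3 : nb Y 1 ≤ nb Y (-dl X + 1) := nb_anti Y (by omega)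
    omega
  · have h1 : nb Y (-dl X) ≤ nb Y 1 := nb_anti Y (by omega)
    have h2 : nb X (dl X + 1 + 1) < nb X (dl X + 1) := nb_cross X (by omega) (by omega)
    have h3 : nb X 1 ≤ nb X (dl X + 1 + 1) := nb_anti X (by omega)
    omega

lemma core_inj {n : ℕ} {w : List Bool} (hT : w.count true = n) (hF : w.count false = n)
    {d d' : ℕ} (hdd : d < d') (hd' : d' ≤ n) :
    nb (cutW w d) 1 ≠ nb (cutW w d') 1 := by
  have hdl : dl w = 0 := by simp [dl, hT, hF]
  have hdn : d < n := lt_of_lt_of_le hdd hd'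
  have hcutd : cutW w d = postF w d ++ false :: preF w d := by
    unfold cutW; rw [if_pos (by omega : d < w.count false)]
  rcases eq_or_lt_of_le hd' with rfl | hd'n
  · -- d' = n
    have hcutn : cutW w d' = w := by
      unfold cutW; rw [if_neg (by omega)]
    rw [hcutd, hcutn]
    have hw : w = preF w d ++ false :: postF w d := preF_postF_split w d (by omega)
    have hdlsum : dl (preF w d) + dl (postF w d) + 1 = 0 := by
      have := dl_append (preF w d) (false :: postF w d)
      rw [← hw, dl_cons_false] at this
      omega
    conv_rhs => rw [hw]
    exact nbne (by omega : dl (postF w d) + dl (preF w d) + 1 = 0)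
  · -- d < d' < n
    set A := preF w d with hA
    set e := d' - d - 1 with he
    have hd'e : d' = d + e + 1 := by omega
    have hdec := preF_postF_decomp w d e (by omega)
    set M := preF (postF w d) e with hM
    set B := postF (postF w d) e with hB
    -- postF w d = M ++ false :: B
    have hcfpost : (postF w d).count false = n - d - 1 := by
      have hw : w = preF w d ++ false :: postF w d := preF_postF_split w d (by omega)
      have h1 : (preF w d).count false = d := count_false_preF w d (by omega)
      have := congrArg (List.count false) hw
      simp [List.count_append, List.count_cons, h1] at this
      omega
    have hpost : postF w d = M ++ false :: B :=
      preF_postF_split (postF w d) e (by omega)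
    have hcutd' : cutW w d' = B ++ false :: (A ++ false :: M) := by
      unfold cutW
      rw [if_pos (by omega : d' < w.count false), hd'e, hdec.2, hdec.1]
    have hcutdXY : cutW w d = M ++ false :: ((B ++ false :: A)) := by
      rw [hcutd, hpost]
      simp
    have hcutd'XY : cutW w d' = (B ++ false :: A) ++ false :: M := by
      rw [hcutd']
      simp
    have hdlc : dl (cutW w d) = 0 := by rw [dl_cutW]; exact hdl
    have hsum : dl M + dl (B ++ false :: A) + 1 = 0 := by
      rw [hcutdXY] at hdlc
      rw [dl_append, dl_cons_false] at hdlc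
      omega
    rw [hcutdXY, hcutd'XY]
    exact nbne hsum

lemma cut_cut {n : ℕ} {w : List Bool} (hF : w.count false = n) (d : ℕ) :
    cutW (cutW w d) (if d < n then n - d - 1 else n) = w := by
  by_cases hdn : d < n
  · rw [if_pos hdn]
    have hcutd : cutW w d = postF w d ++ false :: preF w d := by
      unfold cutW; rw [if_pos (by omega : d < w.count false)]
    have hw : w = preF w d ++ false :: postF w d := preF_postF_split w d (by omega)
    have h1 : (preF w d).count false = d := count_false_preF w d (by omega)
    have hcfpost : (postF w d).count false = n - d - 1 := by
      have := congrArg (List.count false) hw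
      simp [List.count_append, List.count_cons, h1, hF] at this
      omega
    have hpp := preF_append (postF w d) (preF w d)
    rw [hcfpost] at hpp
    have hcnt : (postF w d ++ false :: preF w d).count false = n := by
      rw [← hcutd, count_cutW, hF]
    rw [hcutd]
    unfold cutW
    rw [if_pos (by rw [hcnt]; omega), hpp.1, hpp.2]
    exact hw.symm
  · rw [if_neg hdn]
    have h1 : cutW w d = w := by unfold cutW; rw [if_neg (by omega)]
    rw [h1]
    unfold cutW; rw [if_neg (by omega)]

lemma core_ne {n : ℕ} {w : List Bool} (hT : w.count true = n) (hF : w.count false = n)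
    {d d' : ℕ} (hne : d ≠ d') (hd : d ≤ n) (hd' : d' ≤ n) :
    nb (cutW w d) 1 ≠ nb (cutW w d') 1 := by
  rcases lt_or_gt_of_ne hne with h | h
  · exact core_inj hT hF h hd'
  · exact (core_inj hT hF h hd).symm

/-- inverse index -/
def invIdx (n d : ℕ) : ℕ := if d < n then n - d - 1 else n

lemma invIdx_le (n d : ℕ) : invIdx n d ≤ n := by unfold invIdx; split <;> omega

lemma invIdx_inj {n : ℕ} {d d' : ℕ} (hd : d ≤ n) (hd' : d' ≤ n)
    (h : invIdx n d = invIdx n d') : d = d' := by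
  unfold invIdx at h; split at h <;> split at h <;> omega

theorem card_partition (n m k : ℕ) (hm : m ≤ n) :
    Nat.card {w : List Bool // w.count true = n ∧ w.count false = n ∧ das w = k} =
      (n + 1) * Nat.card {w : List Bool //
        (w.count true = n ∧ w.count false = n ∧ nb w 1 = m) ∧ das w = k} := by
  set T := {w : List Bool // (w.count true = n ∧ w.count false = n ∧ nb w 1 = m) ∧ das w = k}
    with hTdef
  set S := {w : List Bool // w.count true = n ∧ w.count false = n ∧ das w = k} with hSdef
  have hF : ∀ (p : T × Fin (n+1)), (cutW p.1.1 p.2.1).count true = n ∧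
      (cutW p.1.1 p.2.1).count false = n ∧ das (cutW p.1.1 p.2.1) = k := by
    rintro ⟨⟨u, ⟨⟨h1, h2, h3⟩, h4⟩⟩, d⟩
    refine ⟨?_, ?_, ?_⟩
    · rw [count_cutW]; exact h1
    · rw [count_cutW]; exact h2
    · rw [das_cutW]; exact h4
  let F : T × Fin (n+1) → S := fun p => ⟨cutW p.1.1 p.2.1, hF p⟩
  have hbij : Function.Bijective F := by
    constructor
    · rintro ⟨⟨u, ⟨⟨hu1, hu2, hu3⟩, hu4⟩⟩, d⟩ ⟨⟨u', ⟨⟨hv1, hv2, hv3⟩, hv4⟩⟩, d'⟩ hEq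
      have hw0 : cutW u d.1 = cutW u' d'.1 := congrArg Subtype.val hEq
      set w0 := cutW u d.1 with hw0d
      have hrec : u = cutW w0 (invIdx n d.1) := by
        rw [hw0d]
        exact (cut_cut hu2 d.1).symm
      have hrec' : u' = cutW w0 (invIdx n d'.1) := by
        rw [hw0]
        exact (cut_cut hv2 d'.1).symm
      have hw0T : w0.count true = n := by rw [hw0d, count_cutW]; exact hu1
      have hw0F : w0.count false = n := by rw [hw0d, count_cutW]; exact hu2
      have heidx : invIdx n d.1 = invIdx n d'.1 := by
        by_contra hne
        have := core_ne hw0T hw0F hne (invIdx_le n d.1) (invIdx_le n d'.1)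
        rw [← hrec, ← hrec'] at this
        exact this (hu3.trans hv3.symm)
      have hdd : d = d' := by
        apply Fin.ext
        exact invIdx_inj (by omega : d.1 ≤ n) (by omega : d'.1 ≤ n) heidx
      subst hdd
      have huu : u = u' := by rw [hrec, hrec', heidx]
      subst huu
      rfl
    · rintro ⟨w, hw1, hw2, hw3⟩
      -- find d with nb (cutW w d) 1 = m
      have hle : ∀ d : Fin (n+1), nb (cutW w d.1) 1 ≤ n := by
        intro d
        calc nb (cutW w d.1) 1 ≤ (cutW w d.1).count true := nb_le_count _ _
        _ = n := by rw [count_cutW]; exact hw1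
      let g : Fin (n+1) → Fin (n+1) := fun d => ⟨nb (cutW w d.1) 1, by
        have := hle d; omega⟩
      have hginj : Function.Injective g := by
        intro d d' h
        by_contra hne
        exact core_ne hw1 hw2 (fun hc => hne (Fin.ext hc)) (by omega) (by omega)
          (congrArg Fin.val h)
      have hgsurj : Function.Surjective g := Finite.surjective_of_injective hginj
      obtain ⟨d, hd⟩ := hgsurj ⟨m, by omega⟩
      have hdm : nb (cutW w d.1) 1 = m := congrArg Fin.val hd
      refine ⟨⟨⟨cutW w d.1, ⟨⟨?_, ?_, hdm⟩, ?_⟩⟩, ⟨invIdx n d.1, by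
        have := invIdx_le n d.1; omega⟩⟩, ?_⟩
      · rw [count_cutW]; exact hw1
      · rw [count_cutW]; exact hw2
      · rw [das_cutW]; exact hw3
      · apply Subtype.ext
        show cutW (cutW w d.1) (invIdx n d.1) = w
        exact cut_cut hw2 d.1
  have := Nat.card_eq_of_bijective F hbij
  rw [Nat.card_prod, Nat.card_eq_fintype_card (α := Fin (n+1)), Fintype.card_fin] at this
  rw [← this, Nat.mul_comm]

-- ================= chunk 5 : counting tools =================

lemma count_true_add_count_false (w : List Bool) : w.count true + w.count false = w.length := by
  induction w with
  | nil => rfl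
  | cons a t ih => cases a <;> simp [List.count_cons] <;> omega

lemma finite_sub (P : List Bool → Prop) (N : ℕ) (h : ∀ w, P w → w.length = N) :
    Finite {w : List Bool // P w} := by
  have h1 : Finite {l : List Bool | l.length = N} := (List.finite_length_eq Bool N).to_subtype
  apply Finite.of_injective
    (fun w => (⟨w.1, h w.1 w.2⟩ : {l : List Bool | l.length = N}))
  intro a b hab
  apply Subtype.ext
  have h2 := congrArg Subtype.val hab
  exact h2

lemma card_split (P Q : List Bool → Prop) (hf : Finite {w : List Bool // P w}) :
    Nat.card {w : List Bool // P w} =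
      Nat.card {w : List Bool // P w ∧ Q w} + Nat.card {w : List Bool // P w ∧ ¬ Q w} := by
  classical
  have e1 : {w : List Bool // P w} ≃
      {a : {w : List Bool // P w} // Q a.1} ⊕ {a : {w : List Bool // P w} // ¬ Q a.1} :=
    (Equiv.sumCompl (fun a : {w : List Bool // P w} => Q a.1)).symm
  rw [Nat.card_congr e1, Nat.card_sum,
    Nat.card_congr (Equiv.subtypeSubtypeEquivSubtypeInter P Q),
    Nat.card_congr (Equiv.subtypeSubtypeEquivSubtypeInter P (fun w => ¬ Q w))]

def headEquiv (P : List Bool → Prop) (b : Bool) :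
    {w : List Bool // P w ∧ w.head? = some b} ≃ {w' : List Bool // P (b :: w')} where
  toFun w := ⟨w.1.tail, by
    have h : b :: w.1.tail = w.1 := List.cons_head?_tail (by rw [w.2.2]; rfl)
    rw [h]; exact w.2.1⟩
  invFun w' := ⟨b :: w'.1, ⟨w'.2, rfl⟩⟩
  left_inv w := Subtype.ext (List.cons_head?_tail (by rw [w.2.2]; rfl))
  right_inv w' := Subtype.ext rfl

lemma das_cons_true (w : List Bool) :
    das (true :: w) = (if w.head? = some true then 1 else 0) + das w := by
  cases w with
  | nil => rfl
  | cons b u =>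
    rw [das_cons_cons]
    cases b <;> simp

lemma head_true_count {w : List Bool} (h : w.head? = some true) : 1 ≤ w.count true := by
  have h1 : true :: w.tail = w := List.cons_head?_tail (by rw [h]; rfl)
  rw [← h1]
  simp [List.count_cons]

lemma head_false_count {w : List Bool} (h : w.head? = some false) : 1 ≤ w.count false := by
  have h1 : false :: w.tail = w := List.cons_head?_tail (by rw [h]; rfl)
  rw [← h1]
  simp [List.count_cons]

lemma das_le_count (w : List Bool) : das w ≤ w.count true := by
  induction w with
  | nil => simp
  | cons a t ih =>
    cases a
    · rw [das_cons_false]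
      simp [List.count_cons]
      omega
    · rw [das_cons_true]
      simp [List.count_cons]
      split <;> omega

lemma das_lt_count {w : List Bool} (h : 1 ≤ w.count true) : das w < w.count true := by
  induction w with
  | nil => simp at h
  | cons a t ih =>
    cases a
    · rw [das_cons_false]
      have h2 : (false :: t).count true = t.count true := by simp [List.count_cons]
      rw [h2] at h ⊢
      exact ih h
    · rw [das_cons_true]
      have h2 : (true :: t).count true = t.count true + 1 := by simp [List.count_cons]
      rw [h2]
      by_cases hh : t.head? = some true
      · rw [if_pos hh]
        have := ih (head_true_count hh)
        omega
      · rw [if_neg hh]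
        have := das_le_count t
        omega

lemma all_false {w : List Bool} (h : w.count true = 0) :
    w = List.replicate (w.count false) false := by
  rw [List.eq_replicate_iff]
  constructor
  · have := count_true_add_count_false w
    omega
  · intro b hb
    cases b
    · rfl
    · exfalso
      have := List.count_pos_iff.mpr hb
      omega

lemma das_replicate_false (q : ℕ) : das (List.replicate q false) = 0 := by
  induction q with
  | zero => rfl
  | succ e ih => rw [List.replicate_succ, das_cons_false, ih]

/-- the three counting quantities -/
noncomputable def fC (p q k : ℕ) : ℕ :=
  Nat.card {w : List Bool // w.count true = p ∧ w.count false = q ∧ das w = k}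
noncomputable def aC (p q k : ℕ) : ℕ :=
  Nat.card {w : List Bool // (w.count true = p ∧ w.count false = q ∧ das w = k) ∧
    w.head? = some true}
noncomputable def nC (p q k : ℕ) : ℕ :=
  Nat.card {w : List Bool // (w.count true = p ∧ w.count false = q ∧ das w = k) ∧
    ¬ w.head? = some true}

lemma finite_fC (p q k : ℕ) :
    Finite {w : List Bool // w.count true = p ∧ w.count false = q ∧ das w = k} := by
  apply finite_sub _ (p + q)
  intro w hw
  have := count_true_add_count_false w
  omega

-- T1
lemma fC_zero_left (q k : ℕ) : fC 0 q k = if k = 0 then 1 else 0 := by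
  split
  · next hk =>
    subst hk
    rw [fC]
    have : Nonempty {w : List Bool // w.count true = 0 ∧ w.count false = q ∧ das w = 0} :=
      ⟨⟨List.replicate q false, by
        constructor
        · simp [List.count_replicate]
        constructor
        · simp [List.count_replicate]
        · exact das_replicate_false q⟩⟩
    have : Subsingleton {w : List Bool // w.count true = 0 ∧ w.count false = q ∧ das w = 0} := by
      constructor
      rintro ⟨w1, h1, h2, h3⟩ ⟨w2, g1, g2, g3⟩
      apply Subtype.ext
      show w1 = w2
      rw [all_false h1, all_false g1, h2, g2]
    exact Nat.card_unique
  · next hk =>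
    rw [fC]
    have : IsEmpty {w : List Bool // w.count true = 0 ∧ w.count false = q ∧ das w = k} := by
      constructor
      rintro ⟨w, h1, h2, h3⟩
      apply hk
      rw [← h3, all_false h1, das_replicate_false]
    exact Nat.card_of_isEmpty

-- T2
lemma aC_zero_left (q k : ℕ) : aC 0 q k = 0 := by
  rw [aC]
  have : IsEmpty {w : List Bool // (w.count true = 0 ∧ w.count false = q ∧ das w = k) ∧
      w.head? = some true} := by
    constructor
    rintro ⟨w, ⟨h1, _, _⟩, h4⟩
    have := head_true_count h4
    omega
  exact Nat.card_of_isEmpty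

-- T3
lemma nC_zero_left (q k : ℕ) : nC 0 q k = fC 0 q k := by
  rw [nC, fC]
  apply Nat.card_congr
  apply Equiv.subtypeEquivRight
  intro w
  constructor
  · tauto
  · intro h
    refine ⟨h, ?_⟩
    intro hh
    have := head_true_count hh
    omega

-- T4
lemma fC_split (p q k : ℕ) : fC p q k = aC p q k + nC p q k := by
  rw [fC, aC, nC]
  exact card_split _ _ (finite_fC p q k)

-- T5
lemma nC_succ_q (p q k : ℕ) : nC p (q + 1) k = fC p q k := by
  rw [nC, fC]
  have step1 := card_split
    (fun w => (w.count true = p ∧ w.count false = q + 1 ∧ das w = k) ∧ ¬ w.head? = some true)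
    (fun w => w.head? = some false)
    (by
      apply finite_sub _ (p + (q+1))
      intro w hw
      have := count_true_add_count_false w
      omega)
  rw [step1]
  beta_reduce
  have e2 : {w : List Bool // ((w.count true = p ∧ w.count false = q + 1 ∧ das w = k) ∧
      ¬ w.head? = some true) ∧ w.head? = some false} ≃
      {w' : List Bool // w'.count true = p ∧ w'.count false = q ∧ das w' = k} := by
    refine (headEquiv _ false).trans (Equiv.subtypeEquivRight ?_)
    intro w'
    simp only [List.count_cons, das_cons_false, List.head?_cons]
    constructor
    · rintro ⟨⟨h1, h2, h3⟩, _⟩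
      refine ⟨by simpa using h1, by simp at h2; omega, h3⟩
    · rintro ⟨h1, h2, h3⟩
      refine ⟨⟨by simpa using h1, by simp; omega, h3⟩, by simp⟩
  have e3 : IsEmpty {w : List Bool // ((w.count true = p ∧ w.count false = q + 1 ∧ das w = k) ∧
      ¬ w.head? = some true) ∧ ¬ w.head? = some false} := by
    constructor
    rintro ⟨w, ⟨⟨h1, h2, h3⟩, h4⟩, h5⟩
    cases w with
    | nil => simp at h2
    | cons a t => cases a <;> simp at h4 h5
  have hz := @Nat.card_of_isEmpty _ e3
  rw [Nat.card_congr e2, hz]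
  omega

-- T6
lemma nC_q_zero (p k : ℕ) (hp : 1 ≤ p) : nC p 0 k = 0 := by
  rw [nC]
  have : IsEmpty {w : List Bool // (w.count true = p ∧ w.count false = 0 ∧ das w = k) ∧
      ¬ w.head? = some true} := by
    constructor
    rintro ⟨w, ⟨h1, h2, h3⟩, h4⟩
    cases w with
    | nil => simp at h1; omega
    | cons a t =>
      cases a
      · simp [List.count_cons] at h2
      · simp at h4
  exact Nat.card_of_isEmpty

-- T7 / T8 : peeling a leading `true`
lemma aC_succ (p q k : ℕ) :
    aC (p + 1) q k = (if 1 ≤ k then aC p q (k - 1) else 0) + nC p q k := by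
  rw [aC]
  have e1 : {w : List Bool // (w.count true = p + 1 ∧ w.count false = q ∧ das w = k) ∧
      w.head? = some true} ≃
      {w' : List Bool // w'.count true = p ∧ w'.count false = q ∧ das (true :: w') = k} := by
    refine (headEquiv _ true).trans (Equiv.subtypeEquivRight ?_)
    intro w'
    simp only [List.count_cons]
    constructor
    · rintro ⟨h1, h2, h3⟩
      exact ⟨by simp at h1; omega, by simpa using h2, h3⟩
    · rintro ⟨h1, h2, h3⟩
      exact ⟨by simp; omega, by simpa using h2, h3⟩
  rw [Nat.card_congr e1]
  have step := card_split
    (fun w' => w'.count true = p ∧ w'.count false = q ∧ das (true :: w') = k)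
    (fun w' => w'.head? = some true)
    (by
      apply finite_sub _ (p + q)
      intro w hw
      have := count_true_add_count_false w
      omega)
  rw [step]
  beta_reduce
  congr 1
  · -- head true part
    by_cases hk : 1 ≤ k
    · rw [if_pos hk, aC]
      apply Nat.card_congr
      apply Equiv.subtypeEquivRight
      intro w
      rw [das_cons_true]
      constructor
      · rintro ⟨⟨h1, h2, h3⟩, h4⟩
        rw [if_pos h4] at h3
        exact ⟨⟨h1, h2, by omega⟩, h4⟩
      · rintro ⟨⟨h1, h2, h3⟩, h4⟩
        rw [if_pos h4]
        exact ⟨⟨h1, h2, by omega⟩, h4⟩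
    · rw [if_neg hk]
      have : IsEmpty {w : List Bool // (w.count true = p ∧ w.count false = q ∧
          das (true :: w) = k) ∧ w.head? = some true} := by
        constructor
        rintro ⟨w, ⟨h1, h2, h3⟩, h4⟩
        rw [das_cons_true, if_pos h4] at h3
        omega
      exact Nat.card_of_isEmpty
  · -- head not true part
    rw [nC]
    apply Nat.card_congr
    apply Equiv.subtypeEquivRight
    intro w
    rw [das_cons_true]
    constructor
    · rintro ⟨⟨h1, h2, h3⟩, h4⟩
      rw [if_neg h4] at h3
      exact ⟨⟨h1, h2, by omega⟩, h4⟩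
    · rintro ⟨⟨h1, h2, h3⟩, h4⟩
      rw [if_neg h4]
      exact ⟨⟨h1, h2, by omega⟩, h4⟩

lemma fC_das_big (p q k : ℕ) (hp : 1 ≤ p) (hk : p ≤ k) : fC p q k = 0 := by
  rw [fC]
  have : IsEmpty {w : List Bool // w.count true = p ∧ w.count false = q ∧ das w = k} := by
    constructor
    rintro ⟨w, h1, h2, h3⟩
    have := das_lt_count (w := w) (by omega)
    omega
  exact Nat.card_of_isEmpty

-- ================= chunk 6 : the closed formulas =================

lemma main_count : ∀ N p q k, p + q ≤ N → 1 ≤ p → k + 1 ≤ p →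
    aC p q k = Nat.choose q (p - k - 1) * Nat.choose (p - 1) k ∧
    fC p q k = Nat.choose (q + 1) (p - k) * Nat.choose (p - 1) k := by
  intro N
  induction N with
  | zero => intro p q k h hp hk; omega
  | succ N ih =>
    intro p q k hpq hp hk
    obtain ⟨p', rfl⟩ : ∃ p', p = p' + 1 := ⟨p - 1, by omega⟩
    have hs1 : p' + 1 - k - 1 = p' - k := by omega
    have hs2 : p' + 1 - 1 = p' := by omega
    have haC : aC (p' + 1) q k = Nat.choose q (p' - k) * Nat.choose p' k := by
      cases k with
      | zero =>
        rw [aC_succ, if_neg (by omega), Nat.zero_add]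
        cases p' with
        | zero =>
          rw [nC_zero_left, fC_zero_left, if_pos rfl]
          simp
        | succ p'' =>
          cases q with
          | zero =>
            rw [nC_q_zero _ _ (by omega)]
            rw [Nat.choose_eq_zero_of_lt (by omega : 0 < p'' + 1 - 0)]
            simp
          | succ q' =>
            rw [nC_succ_q]
            have hF := (ih (p'' + 1) q' 0 (by omega) (by omega) (by omega)).2
            rw [hF]
            simp [Nat.choose_zero_right]
      | succ k' =>
        have hp' : k' + 1 ≤ p' := by omega
        obtain ⟨p'', rfl⟩ : ∃ p'', p' = p'' + 1 := ⟨p' - 1, by omega⟩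
        rw [aC_succ, if_pos (by omega)]
        have hA := (ih (p'' + 1) q k' (by omega) (by omega) (by omega)).1
        rw [show k' + 1 - 1 = k' by omega, hA]
        have hsub : p'' + 1 - k' - 1 = p'' + 1 - (k' + 1) := by omega
        rw [show p'' + 1 - 1 = p'' by omega]
        -- now handle nC
        rcases Nat.lt_or_ge (k' + 1) (p'' + 1) with hlt | hge
        · -- k' + 2 ≤ p'' + 1
          have hnC : nC (p'' + 1) q (k' + 1) =
              Nat.choose q (p'' + 1 - k' - 1) * Nat.choose p'' (k' + 1) := by
            cases q with
            | zero =>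
              rw [nC_q_zero _ _ (by omega)]
              rw [Nat.choose_eq_zero_of_lt (by omega : 0 < p'' + 1 - k' - 1)]
              simp
            | succ q' =>
              rw [nC_succ_q]
              have hF := (ih (p'' + 1) q' (k' + 1) (by omega) (by omega) (by omega)).2
              rw [hF, show p'' + 1 - (k' + 1) = p'' + 1 - k' - 1 by omega,
                show p'' + 1 - 1 = p'' by omega]
          rw [hnC]
          rw [show p'' + 1 - (k' + 1) = p'' + 1 - k' - 1 by omega]
          rw [Nat.choose_succ_succ p'' k']
          ring
        · -- k' + 1 = p'' + 1
          have hk'' : k' = p'' := by omega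
          subst hk''
          have hnC : nC (k' + 1) q (k' + 1) = 0 := by
            cases q with
            | zero => exact nC_q_zero _ _ (by omega)
            | succ q' =>
              rw [nC_succ_q]
              exact fC_das_big _ _ _ (by omega) (by omega)
          rw [hnC]
          simp [Nat.choose_self, Nat.sub_self]
    constructor
    · rw [hs1, hs2]; exact haC
    · rw [fC_split, haC, hs2]
      cases q with
      | zero =>
        rw [nC_q_zero _ _ (by omega)]
        rcases Nat.eq_or_lt_of_le hk with heq | hlt
        · have : k = p' := by omega
          subst this
          simp [Nat.sub_self, Nat.choose_zero_right, Nat.choose_one_right]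
        · rw [Nat.choose_eq_zero_of_lt (by omega : 0 < p' - k)]
          rw [Nat.choose_eq_zero_of_lt (by omega : 1 < p' + 1 - k)]
          simp
      | succ q' =>
        rw [nC_succ_q]
        have hF := (ih (p' + 1) q' k (by omega) (by omega) (by omega)).2
        rw [hF, hs2]
        rw [show p' + 1 - k = (p' - k) + 1 by omega]
        rw [Nat.choose_succ_succ (q' + 1) (p' - k)]
        ring

lemma fC_formula (p q k : ℕ) (hp : 1 ≤ p) (hk : k + 1 ≤ p) :
    fC p q k = Nat.choose (q + 1) (p - k) * Nat.choose (p - 1) k :=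
  (main_count (p + q) p q k le_rfl hp hk).2

lemma doubleAscents_cons_cons (a b : Bool) (w : List Bool) :
    doubleAscents (a :: b :: w) = (if a && b then 1 else 0) + doubleAscents (b :: w) := by
  unfold doubleAscents
  simp only [List.length_cons]
  have h1 : a :: b :: w = [a] ++ (b :: w) := rfl
  rw [show (w.length + 1 + 1 - 1) = (w.length + 1 - 1) + 1 by simp,
    List.range_succ_eq_map, List.countP_cons, List.countP_map]
  have : ∀ i, ((fun i => (a :: b :: w).getD i false && (a :: b :: w).getD (i + 1) false) ∘
      Nat.succ) i = (fun i => (b :: w).getD i false && (b :: w).getD (i + 1) false) i := by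
    intro i; rfl
  rw [List.countP_congr (fun x _ => by rw [this x])]
  simp [List.getD_cons_zero, List.getD_cons_succ]
  omega

lemma doubleAscents_eq_das (w : List Bool) : doubleAscents w = das w := by
  induction w with
  | nil => rfl
  | cons a t ih =>
    cases t with
    | nil => rfl
    | cons b u =>
      rw [doubleAscents_cons_cons, ih, das]

lemma nb_spec (w : List Bool) (c : ℤ) :
    nb w c = (List.range w.length).countP fun i =>
      w.getD i false && decide (c + (w.take i).count true ≤ ((w.take i).count false : ℤ)) := by
  induction w generalizing c with
  | nil => simp [nb]
  | cons a t ih =>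
    rw [List.length_cons, List.range_succ_eq_map, List.countP_cons, List.countP_map]
    have key : ∀ i, ((fun i => (a :: t).getD i false &&
        decide (c + ((a :: t).take i).count true ≤ (((a :: t).take i).count false : ℤ))) ∘
        Nat.succ) i = (fun i => t.getD i false &&
        decide ((c + if a then 1 else -1) + (t.take i).count true ≤ ((t.take i).count false : ℤ))) i := by
      intro i
      simp only [Function.comp_apply, List.take_succ_cons, List.getD_cons_succ,
        List.count_cons]
      congr 1
      cases a <;> simp <;> constructor <;> intro h <;> push_cast at * <;> omega
    rw [List.countP_congr (fun x _ => by rw [key x])]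
    cases a
    · simp only [nb, ih]
      norm_num
      simp only [sub_eq_add_neg]
    · simp only [nb, ih]
      simp only [List.take_zero, List.count_nil, List.getD_cons_zero, Nat.cast_zero, add_zero]
      norm_num
      exact Nat.add_comm _ _

lemma upsBelow_eq_nb (w : List Bool) : upsBelow w = nb w 1 := by
  rw [nb_spec, upsBelow]
  apply List.countP_congr
  intro i _
  cases h : w.getD i false <;> simp only [h, Bool.false_and, Bool.true_and]
  simp only [decide_eq_true_eq]
  constructor <;> intro h2
  · push_cast; omega
  · exact_mod_cast (by push_cast at h2 ⊢; omega : ((w.take i).count true :ℤ) < (w.take i).count false)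



theorem key_card (n m k : ℕ) (hn : 1 ≤ n) (hm : m ≤ n) (hk : k ≤ n - 1) :
    (n + 1) * Nat.card {p : List Bool // IsNM n m p ∧ doubleAscents p = k} =
      Nat.choose (n + 1) (n - k) * Nat.choose (n - 1) k := by
  have hcard : Nat.card {p : List Bool // IsNM n m p ∧ doubleAscents p = k} =
      Nat.card {w : List Bool //
        (w.count true = n ∧ w.count false = n ∧ nb w 1 = m) ∧ das w = k} := by
    apply Nat.card_congr
    apply Equiv.subtypeEquivRight
    intro w
    unfold IsNM
    rw [upsBelow_eq_nb, doubleAscents_eq_das]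
    have := count_true_add_count_false w
    constructor
    · rintro ⟨⟨h1, h2, h3⟩, h4⟩
      exact ⟨⟨h2, by omega, h3⟩, h4⟩
    · rintro ⟨⟨h1, h2, h3⟩, h4⟩
      exact ⟨⟨by omega, h1, h3⟩, h4⟩
  rw [hcard, ← card_partition n m k hm]
  have : Nat.card {w : List Bool // w.count true = n ∧ w.count false = n ∧ das w = k}
      = fC n n k := rfl
  rw [this, fC_formula n n k (by omega) (by omega)]

end CF2

/-- The number of `(n,m)`-Dyck paths with exactly `k` double ascents is independent of `m`
and equals the Narayana number `(1/(k+1)) * C(n-1,k) * C(n,k)`. -/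
theorem stmt_1 (n m k : ℕ) (hn : 1 ≤ n) (hm : m ≤ n) (hk : k ≤ n - 1) :
    (k + 1) * Nat.card {p : List Bool // IsNM n m p ∧ doubleAscents p = k} =
      Nat.choose (n - 1) k * Nat.choose n k := by
  have key := CF2.key_card n m k hn hm hk
  have hsymm : Nat.choose (n + 1) (n - k) = Nat.choose (n + 1) (k + 1) := by
    rw [show n - k = (n + 1) - (k + 1) by omega]
    exact Nat.choose_symm (by omega)
  have hmul : (n + 1) * Nat.choose n k = Nat.choose (n + 1) (k + 1) * (k + 1) :=
    Nat.add_one_mul_choose_eq n k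
  apply Nat.eq_of_mul_eq_mul_left (show 0 < n + 1 by omega)
  calc (n + 1) * ((k + 1) * Nat.card {p : List Bool // IsNM n m p ∧ doubleAscents p = k})
      = (k + 1) * ((n + 1) * Nat.card {p : List Bool // IsNM n m p ∧ doubleAscents p = k}) := by
        ring
    _ = (k + 1) * (Nat.choose (n + 1) (n - k) * Nat.choose (n - 1) k) := by rw [key]
    _ = (Nat.choose (n + 1) (k + 1) * (k + 1)) * Nat.choose (n - 1) k := by rw [hsymm]; ring
    _ = ((n + 1) * Nat.choose n k) * Nat.choose (n - 1) k := by rw [hmul]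
    _ = (n + 1) * (Nat.choose (n - 1) k * Nat.choose n k) := by ring
end

section
/- For integers n ≥ 1, 0 ≤ m ≤ n, and 1 ≤ k ≤ n, the number of (n,m)-Dyck paths with exactly k peaks equals the number of (n,n-m)-Dyck paths with exactly n-k peaks. -/
namespace S2

def pk : List Bool → ℕ
  | [] => 0
  | [_] => 0
  | a :: b :: l => (if a && !b then 1 else 0) + pk (b :: l)

def hd0 : List Bool → ℕ
  | false :: _ => 1
  | _ => 0

def xf : List Bool → ℕ → ℕ
  | [], _ => 0
  | false :: l, h => xf l h + 1
  | true :: _, 0 => 0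
  | true :: l, h+1 => xf l h

lemma countP_congr' {α : Type*} {l : List α} {p q : α → Bool} (h : ∀ x ∈ l, p x = q x) :
    l.countP p = l.countP q :=
  List.countP_congr (fun x hx => by rw [h x hx])

lemma countP_range_succ (f : ℕ → Bool) (n : ℕ) :
    (List.range (n+1)).countP f = (if f 0 then 1 else 0) + (List.range n).countP (fun i => f (i+1)) := by
  rw [List.range_succ_eq_map, List.countP_cons, List.countP_map]
  exact Nat.add_comm _ _

lemma peaks_cons2 (a b : Bool) (l : List Bool) :
    peaks (a :: b :: l) = (if a && !b then 1 else 0) + peaks (b :: l) := by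
  show (List.range ((l.length + 2) - 1)).countP _ = _
  have : l.length + 2 - 1 = (l.length + 1 - 1) + 1 := rfl
  rw [this, countP_range_succ]
  simp only [List.getD_cons_succ, List.getD_cons_zero]
  rfl

lemma peaks_eq_pk (p : List Bool) : peaks p = pk p := by
  induction p with
  | nil => rfl
  | cons a l ih =>
    cases l with
    | nil => cases a <;> rfl
    | cons b l' => rw [peaks_cons2, ih]; rfl

lemma count_true_add_count_false (p : List Bool) : p.count true + p.count false = p.length := by
  induction p with
  | nil => rfl
  | cons a l ih => cases a <;> simp [List.count_cons] <;> omega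

lemma upsBelow_gen (p : List Bool) : ∀ u d : ℕ,
    ((List.range p.length).countP fun i =>
      p.getD i false && decide (u + (p.take i).count true < d + (p.take i).count false))
    = (List.range (p.count true)).countP fun h => decide (u + h < d + xf p h) := by
  induction p with
  | nil => intro u d; rfl
  | cons a l ih =>
    intro u d
    show (List.range (l.length + 1)).countP _ = _
    rw [countP_range_succ]
    cases a with
    | false =>
      rw [if_neg (by simp)]
      have hcnt : (false :: l).count true = l.count true := by simp [List.count_cons]
      rw [hcnt, Nat.zero_add]
      have step : ∀ i ∈ List.range l.length,
          ((false :: l).getD (i+1) false &&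
            decide (u + ((false :: l).take (i+1)).count true < d + ((false :: l).take (i+1)).count false))
          = (l.getD i false && decide (u + (l.take i).count true < (d+1) + (l.take i).count false)) := by
        intro i _
        rw [List.getD_cons_succ, List.take_succ_cons]
        have e1 : (false :: l.take i).count true = (l.take i).count true := by simp [List.count_cons]
        have e2 : (false :: l.take i).count false = (l.take i).count false + 1 := by simp [List.count_cons]
        rw [e1, e2]
        congr 1
        simp only [decide_eq_decide]
        omega
      rw [countP_congr' step, ih u (d+1)]
      apply countP_congr'
      intro h _
      simp only [decide_eq_decide, xf]
      exact decide_eq_decide.mpr (by omega)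
    | true =>
      have hcnt : (true :: l).count true = l.count true + 1 := by simp [List.count_cons]
      rw [hcnt, countP_range_succ]
      have step : ∀ i ∈ List.range l.length,
            ((true :: l).getD (i+1) false &&
              decide (u + ((true :: l).take (i+1)).count true < d + ((true :: l).take (i+1)).count false))
            = (l.getD i false && decide ((u+1) + (l.take i).count true < d + (l.take i).count false)) := by
          intro i _
          rw [List.getD_cons_succ, List.take_succ_cons]
          have e1 : (true :: l.take i).count true = (l.take i).count true + 1 := by simp [List.count_cons]
          have e2 : (true :: l.take i).count false = (l.take i).count false := by simp [List.count_cons]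
          rw [e1, e2]
          congr 1
          simp only [decide_eq_decide]
          omega
      have step2 : ∀ h ∈ List.range (l.count true),
          (decide ((u+1) + h < d + xf l h)) = (decide (u + (h+1) < d + xf (true :: l) (h+1))) := by
        intro h _
        simp only [decide_eq_decide, xf]
        exact decide_eq_decide.mpr (by omega)
      rw [countP_congr' step, ih (u+1) d, countP_congr' step2]
      simp [xf]

lemma upsBelow_eq (p : List Bool) :
    upsBelow p = (List.range (p.count true)).countP fun h => decide (h < xf p h) := by
  show (List.range p.length).countP _ = _
  have step : ∀ i ∈ List.range p.length,
      (p.getD i false && decide ((p.take i).count true < (p.take i).count false))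
      = (p.getD i false && decide (0 + (p.take i).count true < 0 + (p.take i).count false)) := by
    intro i _
    congr 1
    simp only [decide_eq_decide]
    omega
  rw [countP_congr' step, upsBelow_gen p 0 0]
  apply countP_congr'
  intro h _
  simp only [decide_eq_decide]
  omega

def cX : List Bool → ℕ → ℕ
  | [], _ => 0
  | false :: _, 0 => 0
  | false :: l, t+1 => cX l t
  | true :: l, t => hd0 l + cX l t

def cY : List Bool → ℕ → ℕ
  | [], _ => 0
  | false :: l, h => cY l h
  | true :: _, 0 => 0
  | true :: l, h+1 => hd0 l + cY l h

def Xs : List Bool → Finset ℕ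
  | [] => ∅
  | false :: l => (Xs l).image (· + 1)
  | true :: l => if hd0 l = 1 then insert 0 (Xs l) else Xs l

def Ys : List Bool → Finset ℕ
  | [] => ∅
  | false :: l => Ys l
  | true :: l => if hd0 l = 1 then insert 0 ((Ys l).image (· + 1)) else (Ys l).image (· + 1)

lemma cX_pos (w : List Bool) (t : ℕ) (hf : false ∈ w) (h0 : hd0 w = 0) : 1 ≤ cX w t := by
  induction w with
  | nil => simp at hf
  | cons a l ih =>
    cases a with
    | false => simp [hd0] at h0
    | true =>
      rw [cX]
      rcases Nat.eq_zero_or_pos (hd0 l) with h | h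
      · have hfl : false ∈ l := by
          cases l with
          | nil => simp at hf
          | cons b l' =>
            cases b with
            | false => simp [hd0] at h
            | true => simpa using hf
        have := ih hfl h
        omega
      · omega

lemma master (p : List Bool) : ∀ (h t : ℕ), false ∈ p → t < p.count false →
    (cX p t ≤ cY p h ↔ t < xf p h) := by
  induction p with
  | nil => intro h t hf; simp at hf
  | cons a l ih =>
    intro h t hf hcnt
    cases a with
    | false =>
      rw [xf]
      cases t with
      | zero => simp [cX]
      | succ t =>
        rw [cX, cY]
        have hcnt' : t < l.count false := by
          have : (false :: l).count false = l.count false + 1 := by simp [List.count_cons]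
          omega
        have hfl : false ∈ l := by
          by_contra hc
          have : l.count false = 0 := by
            rw [List.count_eq_zero]; exact hc
          omega
        rw [ih h t hfl hcnt']
        omega
    | true =>
      have hfl : false ∈ l := by simpa using hf
      have hcnt' : t < l.count false := by
        have : (true :: l).count false = l.count false := by simp [List.count_cons]
        omega
      cases h with
      | zero =>
        rw [cX, cY, xf]
        constructor
        · intro hle
          exfalso
          rcases Nat.eq_zero_or_pos (hd0 l) with h1 | h1
          · have := cX_pos l t hfl h1
            omega
          · omega
        · omega
      | succ h =>
        rw [cX, cY, xf]
        have := ih h t hfl hcnt'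
        omega

lemma xf_le (p : List Bool) : ∀ h, xf p h ≤ p.count false := by
  induction p with
  | nil => intro h; simp [xf]
  | cons a l ih =>
    intro h
    cases a with
    | false =>
      rw [xf]
      have : (false :: l).count false = l.count false + 1 := by simp [List.count_cons]
      have := ih h
      omega
    | true =>
      have hc : (true :: l).count false = l.count false := by simp [List.count_cons]
      cases h with
      | zero => rw [xf]; omega
      | succ h => rw [xf, hc]; exact ih h

lemma xf_inj : ∀ (p q : List Bool), p.length = q.length → p.count true = q.count true →
    (∀ h, xf p h = xf q h) → p = q := by
  intro p
  induction p with
  | nil =>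
    intro q hl _ _
    cases q with
    | nil => rfl
    | cons b w => simp at hl
  | cons a l ih =>
    intro q hl hc hxf
    cases q with
    | nil => simp at hl
    | cons b w =>
      cases a <;> cases b
      · -- false false
        have : l = w := by
          apply ih w (by simpa using hl) (by simpa [List.count_cons] using hc)
          intro h
          have := hxf h
          rw [xf, xf] at this
          omega
        rw [this]
      · -- false, true
        exfalso
        have := hxf 0
        rw [xf, xf] at this
        omega
      · -- true, false
        exfalso
        have := hxf 0
        rw [xf, xf] at this
        omega
      · -- true true
        have : l = w := by
          apply ih w (by simpa using hl) (by simpa [List.count_cons] using hc)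
          intro h
          have := hxf (h+1)
          rwa [xf, xf] at this
        rw [this]

lemma pk_cons (a : Bool) (l : List Bool) : pk (a :: l) = (if a then hd0 l else 0) + pk l := by
  cases l with
  | nil => cases a <;> rfl
  | cons b l' => cases a <;> cases b <;> rfl

lemma mem_Xs {p : List Bool} {x : ℕ} (hx : x ∈ Xs p) : x < p.count false := by
  induction p generalizing x with
  | nil => simp [Xs] at hx
  | cons a l ih =>
    cases a with
    | false =>
      rw [Xs] at hx
      simp only [Finset.mem_image] at hx
      obtain ⟨y, hy, rfl⟩ := hx
      have := ih hy
      simp [List.count_cons]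
      omega
    | true =>
      rw [Xs] at hx
      have hc : (true :: l).count false = l.count false := by simp [List.count_cons]
      rw [hc]
      by_cases h1 : hd0 l = 1
      · rw [if_pos h1] at hx
        rcases Finset.mem_insert.1 hx with rfl | hx
        · cases l with
          | nil => simp [hd0] at h1
          | cons b l' =>
            cases b with
            | true => simp [hd0] at h1
            | false => simp [List.count_cons]
        · exact ih hx
      · rw [if_neg h1] at hx
        exact ih hx

lemma mem_Ys {p : List Bool} {y : ℕ} (hy : y ∈ Ys p) : y < p.count true := by
  induction p generalizing y with
  | nil => simp [Ys] at hy
  | cons a l ih =>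
    cases a with
    | false =>
      rw [Ys] at hy
      have hc : (false :: l).count true = l.count true := by simp [List.count_cons]
      rw [hc]; exact ih hy
    | true =>
      rw [Ys] at hy
      have hc : (true :: l).count true = l.count true + 1 := by simp [List.count_cons]
      rw [hc]
      by_cases h1 : hd0 l = 1
      · rw [if_pos h1] at hy
        rcases Finset.mem_insert.1 hy with rfl | hy
        · omega
        · simp only [Finset.mem_image] at hy
          obtain ⟨z, hz, rfl⟩ := hy
          have := ih hz
          omega
      · rw [if_neg h1] at hy
        simp only [Finset.mem_image] at hy
        obtain ⟨z, hz, rfl⟩ := hy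
        have := ih hz
        omega

lemma zero_not_mem_Xs {l : List Bool} (h1 : hd0 l = 1) : 0 ∉ Xs l := by
  cases l with
  | nil => simp [hd0] at h1
  | cons b l' =>
    cases b with
    | true => simp [hd0] at h1
    | false =>
      rw [Xs]
      simp

lemma card_Xs (p : List Bool) : (Xs p).card = pk p := by
  induction p with
  | nil => rfl
  | cons a l ih =>
    rw [pk_cons]
    cases a with
    | false =>
      rw [Xs, Finset.card_image_of_injective _ (add_left_injective 1)]
      simpa using ih
    | true =>
      by_cases h1 : hd0 l = 1
      · rw [Xs, if_pos h1, Finset.card_insert_of_notMem (zero_not_mem_Xs h1), if_pos rfl, h1, ih]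
        omega
      · rw [Xs, if_neg h1, ih]
        have : hd0 l = 0 := by
          cases l with
          | nil => rfl
          | cons b l' => cases b with
            | true => rfl
            | false => simp [hd0] at h1
        simp [this]

lemma card_Ys (p : List Bool) : (Ys p).card = pk p := by
  induction p with
  | nil => rfl
  | cons a l ih =>
    rw [pk_cons]
    cases a with
    | false => rw [Ys]; simpa using ih
    | true =>
      have himg : ((Ys l).image (· + 1)).card = (Ys l).card :=
        Finset.card_image_of_injective _ (add_left_injective 1)
      by_cases h1 : hd0 l = 1
      · rw [Ys, if_pos h1, Finset.card_insert_of_notMem (by simp), himg, if_pos rfl, h1, ih]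
        omega
      · rw [Ys, if_neg h1, himg, ih]
        have : hd0 l = 0 := by
          cases l with
          | nil => rfl
          | cons b l' => cases b with
            | true => rfl
            | false => simp [hd0] at h1
        simp [this]

lemma cXS_Xs (p : List Bool) : ∀ t, ((Xs p).filter (· ≤ t)).card = cX p t := by
  induction p with
  | nil => intro t; rfl
  | cons a l ih =>
    intro t
    cases a with
    | false =>
      rw [Xs, cX.eq_def]
      cases t with
      | zero =>
        rw [Finset.filter_image]
        simp
      | succ t =>
        rw [Finset.filter_image]
        have : ((Xs l).filter (fun a => a + 1 ≤ t + 1)) = (Xs l).filter (· ≤ t) := by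
          apply Finset.filter_congr
          intro x _
          simp
        rw [this, Finset.card_image_of_injective _ (add_left_injective 1)]
        exact ih t
    | true =>
      rw [Xs, cX]
      by_cases h1 : hd0 l = 1
      · rw [if_pos h1, Finset.filter_insert, if_pos (Nat.zero_le t), 
          Finset.card_insert_of_notMem (fun hc => zero_not_mem_Xs h1 (Finset.mem_of_mem_filter _ hc)),
          ih t, h1]
        omega
      · have : hd0 l = 0 := by
          cases l with
          | nil => rfl
          | cons b l' => cases b with
            | true => rfl
            | false => simp [hd0] at h1
        rw [if_neg h1, ih t, this]
        omega

lemma cYS_Ys (p : List Bool) : ∀ h, ((Ys p).filter (· < h)).card = cY p h := by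
  induction p with
  | nil => intro h; rfl
  | cons a l ih =>
    intro h
    cases a with
    | false => rw [Ys, cY]; exact ih h
    | true =>
      cases h with
      | zero =>
        rw [cY]
        have : ∀ (S : Finset ℕ), S.filter (· < 0) = ∅ := by
          intro S; apply Finset.filter_false_of_mem; intro x _; omega
        rw [Ys]
        by_cases h1 : hd0 l = 1 <;> simp [h1, this]
      | succ h =>
        have himg : (((Ys l).image (· + 1)).filter (· < h + 1)).card = cY l h := by
          rw [Finset.filter_image]
          have : ((Ys l).filter (fun a => a + 1 < h + 1)) = (Ys l).filter (· < h) := by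
            apply Finset.filter_congr
            intro x _
            simp
          rw [this, Finset.card_image_of_injective _ (add_left_injective 1)]
          exact ih h
        rw [Ys, cY]
        by_cases h1 : hd0 l = 1
        · rw [if_pos h1, Finset.filter_insert, if_pos (Nat.succ_pos h),
            Finset.card_insert_of_notMem (by simp), himg, h1]
          omega
        · have : hd0 l = 0 := by
            cases l with
            | nil => rfl
            | cons b l' => cases b with
              | true => rfl
              | false => simp [hd0] at h1
          rw [if_neg h1, himg, this]
          omega

def cXS (X : Finset ℕ) (t : ℕ) : ℕ := (X.filter (· ≤ t)).card
def cYS (Y : Finset ℕ) (h : ℕ) : ℕ := (Y.filter (· < h)).card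
def MM (n : ℕ) (X Y : Finset ℕ) : ℕ := (List.range n).countP fun h => decide (cXS X h ≤ cYS Y h)

lemma MM_le (n : ℕ) (X Y : Finset ℕ) : MM n X Y ≤ n := by
  have := List.countP_le_length (p := fun h => decide (cXS X h ≤ cYS Y h)) (l := List.range n)
  simpa [MM] using this

lemma filter_sdiff' (s t : Finset ℕ) (P : ℕ → Prop) [DecidablePred P] :
    (s \ t).filter P = s.filter P \ t.filter P := by
  ext x
  simp only [Finset.mem_filter, Finset.mem_sdiff]
  tauto

lemma cXS_le {n : ℕ} {X : Finset ℕ} (hX : X ⊆ Finset.range n) (h : ℕ) : cXS X h ≤ h + 1 := by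
  have : X.filter (· ≤ h) ⊆ Finset.range (h+1) := by
    intro x hx
    rcases Finset.mem_filter.1 hx with ⟨_, h2⟩
    simp only [Finset.mem_range]
    omega
  have := Finset.card_le_card this
  simpa [cXS] using this

lemma cYS_le {n : ℕ} {Y : Finset ℕ} (hY : Y ⊆ Finset.range n) (h : ℕ) : cYS Y h ≤ h := by
  have : Y.filter (· < h) ⊆ Finset.range h := by
    intro x hx
    rcases Finset.mem_filter.1 hx with ⟨_, h2⟩
    simpa using h2
  have := Finset.card_le_card this
  simpa [cYS] using this

lemma cXS_compl {n : ℕ} {X : Finset ℕ} (hX : X ⊆ Finset.range n) {h : ℕ} (hh : h < n) :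
    cXS (Finset.range n \ X) h = h + 1 - cXS X h := by
  unfold cXS
  rw [filter_sdiff']
  rw [Finset.card_sdiff_of_subset (Finset.filter_subset_filter _ hX)]
  congr 2
  have : (Finset.range n).filter (· ≤ h) = Finset.range (h+1) := by
    ext x; simp only [Finset.mem_filter, Finset.mem_range]; omega
  rw [this, Finset.card_range]

lemma cYS_compl {n : ℕ} {Y : Finset ℕ} (hY : Y ⊆ Finset.range n) {h : ℕ} (hh : h < n) :
    cYS (Finset.range n \ Y) h = h - cYS Y h := by
  unfold cYS
  rw [filter_sdiff']
  rw [Finset.card_sdiff_of_subset (Finset.filter_subset_filter _ hY)]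
  congr 2
  have : (Finset.range n).filter (· < h) = Finset.range h := by
    ext x; simp only [Finset.mem_filter, Finset.mem_range]; omega
  rw [this, Finset.card_range]

lemma MM_compl {n : ℕ} {X Y : Finset ℕ} (hX : X ⊆ Finset.range n) (hY : Y ⊆ Finset.range n) :
    MM n (Finset.range n \ X) (Finset.range n \ Y) = n - MM n X Y := by
  unfold MM
  have step : ∀ h ∈ List.range n,
      (decide (cXS (Finset.range n \ X) h ≤ cYS (Finset.range n \ Y) h))
      = (!decide (cXS X h ≤ cYS Y h)) := by
    intro h hmem
    have hh : h < n := List.mem_range.1 hmem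
    rw [cXS_compl hX hh, cYS_compl hY hh, ← decide_not]
    simp only [decide_eq_decide]
    have h1 := cXS_le hX h
    have h2 := cYS_le hY h
    omega
  rw [countP_congr' step]
  have := List.length_eq_countP_add_countP (fun h => decide (cXS X h ≤ cYS Y h)) (l := List.range n)
  simp only [List.length_range] at this
  have e : (List.range n).countP (fun a => decide ¬(decide (cXS X a ≤ cYS Y a)) = true)
      = (List.range n).countP (fun h => !decide (cXS X h ≤ cYS Y h)) := by
    apply countP_congr'
    intro x _
    simp only [decide_eq_true_eq, ← decide_not]
  omega

lemma count_false_eq {n : ℕ} {p : List Bool} (h1 : p.length = 2*n) (h2 : p.count true = n) :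
    p.count false = n := by
  have := count_true_add_count_false p
  omega

def PathT (n : ℕ) : Type := {p : List Bool // p.length = 2*n ∧ p.count true = n}
def PairT (n : ℕ) : Type :=
  {q : Finset ℕ × Finset ℕ // q.1 ⊆ Finset.range n ∧ q.2 ⊆ Finset.range n ∧ q.1.card = q.2.card}

def Psi (n : ℕ) (a : PathT n) : PairT n :=
  ⟨(Xs a.1, Ys a.1),
    fun x hx => Finset.mem_range.2 (by
      have := mem_Xs hx
      rwa [count_false_eq a.2.1 a.2.2] at this),
    fun y hy => Finset.mem_range.2 (by
      have := mem_Ys hy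
      rwa [a.2.2] at this),
    by rw [card_Xs, card_Ys]⟩

lemma false_mem {n : ℕ} (hn : 1 ≤ n) {p : List Bool} (h1 : p.length = 2*n) (h2 : p.count true = n) :
    false ∈ p := by
  rw [← List.count_pos_iff, count_false_eq h1 h2]
  omega

lemma Psi_inj {n : ℕ} (hn : 1 ≤ n) : Function.Injective (Psi n) := by
  intro a b hab
  have hX : Xs a.1 = Xs b.1 := congrArg (fun q => q.1.1) hab
  have hY : Ys a.1 = Ys b.1 := congrArg (fun q => q.1.2) hab
  have hcX : ∀ t, cX a.1 t = cX b.1 t := by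
    intro t; rw [← cXS_Xs, ← cXS_Xs, hX]
  have hcY : ∀ h, cY a.1 h = cY b.1 h := by
    intro h; rw [← cYS_Ys, ← cYS_Ys, hY]
  have hfa : false ∈ a.1 := false_mem hn a.2.1 a.2.2
  have hfb : false ∈ b.1 := false_mem hn b.2.1 b.2.2
  have hca : a.1.count false = n := count_false_eq a.2.1 a.2.2
  have hcb : b.1.count false = n := count_false_eq b.2.1 b.2.2
  have hxf : ∀ h, xf a.1 h = xf b.1 h := by
    intro h
    rcases lt_trichotomy (xf a.1 h) (xf b.1 h) with hlt | heq | hlt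
    · exfalso
      have ht : xf a.1 h < b.1.count false := lt_of_lt_of_le hlt (xf_le b.1 h)
      have ht' : xf a.1 h < a.1.count false := by omega
      have m1 := master a.1 h (xf a.1 h) hfa ht'
      have m2 := master b.1 h (xf a.1 h) hfb ht
      rw [hcX, hcY] at m1
      omega
    · exact heq
    · exfalso
      have ht : xf b.1 h < a.1.count false := lt_of_lt_of_le hlt (xf_le a.1 h)
      have ht' : xf b.1 h < b.1.count false := by omega
      have m1 := master b.1 h (xf b.1 h) hfb ht'
      have m2 := master a.1 h (xf b.1 h) hfa ht
      rw [hcX, hcY] at m2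
      omega
  exact Subtype.ext (xf_inj a.1 b.1 (by rw [a.2.1, b.2.1]) (by rw [a.2.2, b.2.2]) hxf)

lemma cnt_mem : ∀ (n : ℕ) (X : Finset ℕ), X ⊆ Finset.range n →
    (List.range n).countP (fun i => decide (i ∈ X)) = X.card := by
  intro n
  induction n with
  | zero =>
    intro X hX
    have : X = ∅ := Finset.subset_empty.1 (by simpa using hX)
    simp [this]
  | succ n ih =>
    intro X hX
    rw [List.range_succ, List.countP_append, List.countP_singleton]
    have step : ∀ i ∈ List.range n, (decide (i ∈ X)) = (decide (i ∈ X.erase n)) := by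
      intro i hi
      have : i < n := List.mem_range.1 hi
      simp only [decide_eq_decide, Finset.mem_erase]
      constructor
      · intro h; exact ⟨by omega, h⟩
      · tauto
    rw [countP_congr' step, ih (X.erase n) (fun x hx => by
      have h1 := Finset.mem_of_mem_erase hx
      have h2 := Finset.ne_of_mem_erase hx
      have := Finset.mem_range.1 (hX h1)
      exact Finset.mem_range.2 (by omega))]
    by_cases hm : n ∈ X
    · rw [if_pos (by simpa using hm)]
      have := Finset.card_erase_add_one hm
      omega
    · rw [if_neg (by simpa using hm), Finset.erase_eq_of_notMem hm]
      omega

lemma cnt_not_mem (n : ℕ) (X : Finset ℕ) (hX : X ⊆ Finset.range n) :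
    (List.range n).countP (fun i => !decide (i ∈ X)) = n - X.card := by
  have h1 := List.length_eq_countP_add_countP (fun i => decide (i ∈ X)) (l := List.range n)
  simp only [List.length_range] at h1
  have e : (List.range n).countP (fun a => decide ¬(decide (a ∈ X)) = true)
      = (List.range n).countP (fun i => !decide (i ∈ X)) := by
    apply countP_congr'
    intro x _
    simp only [decide_eq_true_eq, ← decide_not]
  rw [← e, cnt_mem n X hX] at *
  omega

def gl (n : ℕ) (X Y : Finset ℕ) : List Bool :=
  (List.range n).map (fun i => !decide (i ∈ X)) ++ (List.range n).map (fun i => decide (i ∈ Y))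

lemma count_map_range (n : ℕ) (f : ℕ → Bool) :
    ((List.range n).map f).count true = (List.range n).countP f := by
  rw [List.count_eq_countP, List.countP_map]
  apply countP_congr'
  intro x _
  simp

def g (n : ℕ) (b : PairT n) : PathT n :=
  ⟨gl n b.1.1 b.1.2, by simp [gl, two_mul], by
    rw [gl, List.count_append, count_map_range, count_map_range,
      cnt_not_mem n b.1.1 b.2.1, cnt_mem n b.1.2 b.2.2.1]
    have h1 : b.1.1.card = b.1.2.card := b.2.2.2
    have h2 : b.1.2.card ≤ n := by
      have := Finset.card_le_card b.2.2.1
      simpa using this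
    omega⟩

lemma g_inj (n : ℕ) : Function.Injective (g n) := by
  intro b1 b2 h
  have hval : gl n b1.1.1 b1.1.2 = gl n b2.1.1 b2.1.2 := congrArg Subtype.val h
  rw [gl, gl] at hval
  have hlen : ((List.range n).map (fun i => !decide (i ∈ b1.1.1))).length
      = ((List.range n).map (fun i => !decide (i ∈ b2.1.1))).length := by simp
  obtain ⟨e1, e2⟩ := List.append_inj hval hlen
  have p1 := List.map_inj_left.1 e1
  have p2 := List.map_inj_left.1 e2
  apply Subtype.ext
  have hX : b1.1.1 = b2.1.1 := by
    apply Finset.ext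
    intro x
    by_cases hx : x < n
    · have := p1 x (List.mem_range.2 hx)
      have := Bool.not_inj this
      rw [decide_eq_decide] at this
      exact this
    · constructor
      · intro hmem; exact absurd (Finset.mem_range.1 (b1.2.1 hmem)) hx
      · intro hmem; exact absurd (Finset.mem_range.1 (b2.2.1 hmem)) hx
  have hY : b1.1.2 = b2.1.2 := by
    apply Finset.ext
    intro x
    by_cases hx : x < n
    · have := p2 x (List.mem_range.2 hx)
      rw [decide_eq_decide] at this
      exact this
    · constructor
      · intro hmem; exact absurd (Finset.mem_range.1 (b1.2.2.1 hmem)) hx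
      · intro hmem; exact absurd (Finset.mem_range.1 (b2.2.2.1 hmem)) hx
  exact Prod.ext hX hY

instance finPathT (n : ℕ) : Finite (PathT n) := by
  apply Finite.of_injective (fun a : PathT n => (fun i : Fin (2*n) => a.1.getD i.1 false))
  intro a b h
  apply Subtype.ext
  apply List.ext_getElem (by rw [a.2.1, b.2.1])
  intro i h1 h2
  have hi : i < 2*n := by rw [← a.2.1]; exact h1
  have := congrFun h ⟨i, hi⟩
  simp only at this
  rwa [List.getD_eq_getElem _ _ h1, List.getD_eq_getElem _ _ h2] at this

instance finPairT (n : ℕ) : Finite (PairT n) := by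
  apply Finite.of_injective (fun b : PairT n =>
    ((fun i : Fin n => decide (i.1 ∈ b.1.1)), (fun i : Fin n => decide (i.1 ∈ b.1.2))))
  intro b1 b2 h
  have h1 := congrArg Prod.fst h
  have h2 := congrArg Prod.snd h
  apply Subtype.ext
  apply Prod.ext
  · apply Finset.ext
    intro x
    by_cases hx : x < n
    · have := congrFun h1 ⟨x, hx⟩
      rw [decide_eq_decide] at this
      exact this
    · exact ⟨fun hmem => absurd (Finset.mem_range.1 (b1.2.1 hmem)) hx,
        fun hmem => absurd (Finset.mem_range.1 (b2.2.1 hmem)) hx⟩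
  · apply Finset.ext
    intro x
    by_cases hx : x < n
    · have := congrFun h2 ⟨x, hx⟩
      rw [decide_eq_decide] at this
      exact this
    · exact ⟨fun hmem => absurd (Finset.mem_range.1 (b1.2.2.1 hmem)) hx,
        fun hmem => absurd (Finset.mem_range.1 (b2.2.2.1 hmem)) hx⟩

lemma Psi_bij {n : ℕ} (hn : 1 ≤ n) : Function.Bijective (Psi n) := by
  rw [Nat.bijective_iff_injective_and_card]
  refine ⟨Psi_inj hn, le_antisymm ?_ ?_⟩
  · exact Nat.card_le_card_of_injective _ (Psi_inj hn)
  · exact Nat.card_le_card_of_injective _ (g_inj n)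

lemma peaks_card_Xs (p : List Bool) : peaks p = (Xs p).card := by
  rw [peaks_eq_pk, card_Xs]

lemma upsBelow_MM {n : ℕ} (hn : 1 ≤ n) {p : List Bool} (h1 : p.length = 2*n) (h2 : p.count true = n) :
    upsBelow p = MM n (Xs p) (Ys p) := by
  rw [upsBelow_eq, h2, MM]
  apply countP_congr'
  intro h hmem
  have hh : h < n := List.mem_range.1 hmem
  have e1 : cXS (Xs p) h = cX p h := cXS_Xs p h
  have e2 : cYS (Ys p) h = cY p h := cYS_Ys p h
  rw [e1, e2]
  simp only [decide_eq_decide]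
  exact (master p h h (false_mem hn h1 h2) (by rw [count_false_eq h1 h2]; exact hh)).symm

def E0 (n m k : ℕ) : {p : List Bool // IsNM n m p ∧ peaks p = k} ≃
    {a : PathT n // upsBelow a.1 = m ∧ peaks a.1 = k} where
  toFun x := ⟨⟨x.1, x.2.1.1, x.2.1.2.1⟩, x.2.1.2.2, x.2.2⟩
  invFun a := ⟨a.1.1, ⟨a.1.2.1, a.1.2.2, a.2.1⟩, a.2.2⟩
  left_inv x := rfl
  right_inv a := rfl

lemma card_eq_pairs {n : ℕ} (hn : 1 ≤ n) (m k : ℕ) :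
    Nat.card {p : List Bool // IsNM n m p ∧ peaks p = k}
    = Nat.card {b : PairT n // MM n b.1.1 b.1.2 = m ∧ b.1.1.card = k} := by
  apply Nat.card_congr
  refine (E0 n m k).trans ?_
  refine (Equiv.ofBijective (Psi n) (Psi_bij hn)).subtypeEquiv ?_
  intro a
  show (upsBelow a.1 = m ∧ peaks a.1 = k) ↔ (MM n (Xs a.1) (Ys a.1) = m ∧ (Xs a.1).card = k)
  rw [upsBelow_MM hn a.2.1 a.2.2, peaks_card_Xs]

def compl (n : ℕ) (b : PairT n) : PairT n :=
  ⟨(Finset.range n \ b.1.1, Finset.range n \ b.1.2), Finset.sdiff_subset, Finset.sdiff_subset, by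
    rw [Finset.card_sdiff_of_subset b.2.1, Finset.card_sdiff_of_subset b.2.2.1, b.2.2.2]⟩

lemma compl_compl (n : ℕ) (b : PairT n) : compl n (compl n b) = b := by
  apply Subtype.ext
  have hx : Finset.range n \ (Finset.range n \ b.1.1) = b.1.1 := by
    rw [sdiff_sdiff_right_self, Finset.inf_eq_inter]
    exact Finset.inter_eq_right.2 b.2.1
  have hy : Finset.range n \ (Finset.range n \ b.1.2) = b.1.2 := by
    rw [sdiff_sdiff_right_self, Finset.inf_eq_inter]
    exact Finset.inter_eq_right.2 b.2.2.1
  exact Prod.ext hx hy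

lemma MM_compl_b (n : ℕ) (b : PairT n) :
    MM n (compl n b).1.1 (compl n b).1.2 = n - MM n b.1.1 b.1.2 :=
  MM_compl b.2.1 b.2.2.1

lemma card_compl_b (n : ℕ) (b : PairT n) :
    (compl n b).1.1.card = n - b.1.1.card := by
  show (Finset.range n \ b.1.1).card = n - b.1.1.card
  rw [Finset.card_sdiff_of_subset b.2.1, Finset.card_range]

lemma card_le_b (n : ℕ) (b : PairT n) : b.1.1.card ≤ n := by
  have := Finset.card_le_card b.2.1
  simpa using this

end S2

/-- `p_{n,m,k} = p_{n,n-m,n-k}`. -/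
theorem stmt_2 (n m k : ℕ) (hn : 1 ≤ n) (hm : m ≤ n) (hk : 1 ≤ k) (hk' : k ≤ n) :
    pC n m k = pC n (n - m) (n - k) := by
  unfold pC
  rw [S2.card_eq_pairs hn m k, S2.card_eq_pairs hn (n - m) (n - k)]
  apply Nat.card_congr
  refine ⟨fun x => ⟨S2.compl n x.1, ?_, ?_⟩, fun y => ⟨S2.compl n y.1, ?_, ?_⟩, ?_, ?_⟩
  · rw [S2.MM_compl_b, x.2.1]
  · rw [S2.card_compl_b, x.2.2]
  · rw [S2.MM_compl_b, y.2.1]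
    have := S2.MM_le n y.1.1.1 y.1.1.2
    omega
  · rw [S2.card_compl_b, y.2.2]
    have := S2.card_le_b n y.1
    omega
  · intro x
    exact Subtype.ext (S2.compl_compl n x.1)
  · intro y
    exact Subtype.ext (S2.compl_compl n y.1)
end

section
/- For integers n ≥ 1, 0 ≤ m ≤ n, and 1 ≤ k ≤ n, the number of (n,m)-Dyck paths with k peaks that start with U and end with D equals the number of (n,n-m)-Dyck paths with n-k peaks that start with D and end with U, i.e., p^{UD}_{n,m,k} = p^{DU}_{n,n-m,n-k}. -/
namespace StmtAux

theorem countP_range_succ (P : ℕ → Bool) (n : ℕ) :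
    (List.range (n+1)).countP P
      = (if P 0 then 1 else 0) + (List.range n).countP (fun i => P (i+1)) := by
  rw [List.range_succ_eq_map, List.countP_cons, List.countP_map]
  have h : (P ∘ Nat.succ) = fun i => P (i+1) := rfl
  rw [h, Nat.add_comm]

/-- recursive version of `upsBelow` with accumulators -/
def ub (u d : ℕ) : List Bool → ℕ
  | [] => 0
  | true :: r => (if u < d then 1 else 0) + ub (u + 1) d r
  | false :: r => ub u (d + 1) r

theorem ub_eq (p : List Bool) : ∀ u d : ℕ,
    (List.range p.length).countP (fun i =>
      p.getD i false && decide (u + (p.take i).count true < d + (p.take i).count false))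
    = ub u d p := by
  induction p with
  | nil => intro u d; simp [ub]
  | cons x r ih =>
    intro u d
    rw [List.length_cons, countP_range_succ]
    have h1 : ∀ i, (x :: r).getD (i+1) false = r.getD i false := fun i => rfl
    have h2 : ∀ i, ((x :: r).take (i+1)) = x :: r.take i := fun i => rfl
    cases x with
    | true =>
      have : ((List.range r.length).countP (fun i =>
          (true :: r).getD (i+1) false && decide (u + ((true :: r).take (i+1)).count true < d + ((true :: r).take (i+1)).count false)))
          = (List.range r.length).countP (fun i =>
          r.getD i false && decide ((u+1) + (r.take i).count true < d + (r.take i).count false)) := by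
        apply List.countP_congr
        intro i _
        rw [h1 i, h2 i]
        have hc : List.count true (true :: List.take i r) = List.count true (List.take i r) + 1 := by
          simp [List.count_cons]
        have hc2 : List.count false (true :: List.take i r) = List.count false (List.take i r) := by
          simp [List.count_cons]
        rw [hc, hc2]
        have hiff : (u + (List.count true (List.take i r) + 1) < d + List.count false (List.take i r)) ↔ (u + 1 + List.count true (List.take i r) < d + List.count false (List.take i r)) := by omega
        simp [hiff]
      rw [this, ih (u+1) d]
      simp [ub]
    | false =>
      have : ((List.range r.length).countP (fun i =>
          (false :: r).getD (i+1) false && decide (u + ((false :: r).take (i+1)).count true < d + ((false :: r).take (i+1)).count false)))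
          = (List.range r.length).countP (fun i =>
          r.getD i false && decide (u + (r.take i).count true < (d+1) + (r.take i).count false)) := by
        apply List.countP_congr
        intro i _
        rw [h1 i, h2 i]
        have hc : List.count false (false :: List.take i r) = List.count false (List.take i r) + 1 := by
          simp [List.count_cons]
        have hc2 : List.count true (false :: List.take i r) = List.count true (List.take i r) := by
          simp [List.count_cons]
        rw [hc, hc2]
        have hiff : (u + List.count true (List.take i r) < d + (List.count false (List.take i r) + 1)) ↔ (u + List.count true (List.take i r) < d + 1 + List.count false (List.take i r)) := by omega
        simp [hiff]
      rw [this, ih u (d+1)]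
      simp [ub]

theorem upsBelow_eq_ub (p : List Bool) : upsBelow p = ub 0 0 p := by
  rw [← ub_eq p 0 0]
  unfold upsBelow
  apply List.countP_congr
  intro i _
  simp

/-- cons recursion for peaks -/
theorem peaks_cons (x : Bool) (r : List Bool) :
    peaks (x :: r) = (if x && !(r.getD 0 true) then 1 else 0) + peaks r := by
  unfold peaks
  cases r with
  | nil => simp
  | cons y t =>
    have hl : (x :: y :: t).length - 1 = ((y :: t).length - 1) + 1 := by
      simp
    rw [hl, countP_range_succ]
    have e0 : ((x :: y :: t).getD 0 false && !(x :: y :: t).getD (0+1) true) = (x && !(y :: t).getD 0 true) := rfl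
    rw [e0]
    congr 1

/-- `fv d p` : list of (d + number of `false`s before each `true`). -/
def fv : ℕ → List Bool → List ℕ
  | _, [] => []
  | d, true :: r => d :: fv d r
  | d, false :: r => fv (d+1) r

/-- decode: rebuild word from the `fv`-list; `F` = total downs (absolute). -/
def wd (F : ℕ) : ℕ → List ℕ → List Bool
  | d, [] => List.replicate (F - d) false
  | d, a :: l => List.replicate (a - d) false ++ true :: wd F a l

/-- number of indices with `j + i < l[i]`. -/
def exc : ℕ → List ℕ → ℕ
  | _, [] => 0
  | j, a :: l => (if j < a then 1 else 0) + exc (j+1) l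

/-- number of ascents of a list. -/
def asc : List ℕ → ℕ
  | [] => 0
  | [_] => 0
  | a :: b :: l => (if a < b then 1 else 0) + asc (b :: l)

theorem asc_cons (x : ℕ) (L : List ℕ) :
    asc (x :: L) = (if x < L.headD x then 1 else 0) + asc L := by
  cases L <;> simp [asc]

theorem asc_concat (l : List ℕ) (c : ℕ) :
    asc (l ++ [c]) = asc l + (if l.getLastD c < c then 1 else 0) := by
  induction l with
  | nil => simp [asc]
  | cons a l ih =>
    cases l with
    | nil => simp [asc]
    | cons b t =>
      have e1 : ((a :: b :: t) ++ [c]) = a :: ((b :: t) ++ [c]) := rfl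
      rw [e1, asc_cons, ih]
      have e2 : asc (a :: b :: t) = (if a < b then 1 else 0) + asc (b :: t) := by
        simp [asc]
      rw [e2]
      have hh : ((b :: t) ++ [c]).headD a = b := rfl
      have hg : (a :: b :: t).getLastD c = (b :: t).getLastD c := by
        rw [List.getLastD_eq_getLast?, List.getLastD_eq_getLast?, List.getLast?_cons_cons]
      rw [hh, hg]
      omega

theorem fv_length (p : List Bool) : ∀ d, (fv d p).length = p.count true := by
  induction p with
  | nil => intro d; simp [fv]
  | cons x r ih =>
    intro d
    cases x <;> simp [fv, ih, List.count_cons]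

theorem fv_ge (p : List Bool) : ∀ d v, v ∈ fv d p → d ≤ v := by
  induction p with
  | nil => intro d v h; simp [fv] at h
  | cons x r ih =>
    intro d v h
    cases x with
    | true =>
      simp only [fv, List.mem_cons] at h
      rcases h with rfl | h
      · exact le_refl _
      · exact ih d v h
    | false =>
      have := ih (d+1) v h
      omega

theorem fv_le (p : List Bool) : ∀ d v, v ∈ fv d p → v ≤ d + p.count false := by
  induction p with
  | nil => intro d v h; simp [fv] at h
  | cons x r ih =>
    intro d v h
    cases x with
    | true =>
      simp only [fv, List.mem_cons] at h
      have hc : (true :: r).count false = r.count false := by simp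
      rcases h with rfl | h
      · omega
      · have := ih d v h; omega
    | false =>
      have := ih (d+1) v h
      have hc : (false :: r).count false = r.count false + 1 := by simp
      omega

theorem count_false_pos_of_last (r : List Bool) (h : r.getLast? = some false) :
    1 ≤ r.count false := by
  rcases List.getLast?_eq_some_iff.1 h with ⟨ys, rfl⟩
  simp

theorem fv_lt_of_last (p : List Bool) : ∀ d, p.getLast? = some false →
    ∀ v ∈ fv d p, v < d + p.count false := by
  induction p with
  | nil => intro d h; simp at h
  | cons x r ih =>
    intro d hlast v hv
    cases r with
    | nil =>
      cases x with
      | true => simp at hlast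
      | false => simp [fv] at hv
    | cons y t =>
      have hlast' : (y :: t).getLast? = some false := by
        rwa [List.getLast?_cons_cons] at hlast
      cases x with
      | true =>
        simp only [fv, List.mem_cons] at hv
        have hc : (true :: y :: t).count false = (y :: t).count false := by simp
        rcases hv with rfl | hv
        · have := count_false_pos_of_last _ hlast'
          omega
        · have := ih d hlast' v hv
          omega
      | false =>
        have := ih (d+1) hlast' v hv
        have hc : (false :: y :: t).count false = (y :: t).count false + 1 := by simp
        omega

theorem fv_sorted (p : List Bool) : ∀ d, (fv d p).Pairwise (· ≤ ·) := by
  induction p with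
  | nil => intro d; simp [fv]
  | cons x r ih =>
    intro d
    cases x with
    | true =>
      rw [show fv d (true :: r) = d :: fv d r from rfl, List.pairwise_cons]
      exact ⟨fun b hb => fv_ge r d b hb, ih d⟩
    | false => exact ih (d+1)

theorem ub_eq_exc (p : List Bool) : ∀ u d, ub u d p = exc u (fv d p) := by
  induction p with
  | nil => intro u d; simp [ub, fv, exc]
  | cons x r ih =>
    intro u d
    cases x with
    | true => simp [ub, fv, exc, ih (u+1) d]
    | false => simp [ub, fv, ih u (d+1)]

theorem exc_eq_countP (l : List ℕ) : ∀ j, exc j l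
    = (List.range l.length).countP fun i => decide (j + i < l.getD i 0) := by
  induction l with
  | nil => intro j; simp [exc]
  | cons a l ih =>
    intro j
    rw [List.length_cons, countP_range_succ]
    have e0 : (decide (j + 0 < (a :: l).getD 0 0)) = decide (j < a) := by
      simp
    rw [e0]
    have e1 : ((List.range l.length).countP fun i => decide (j + (i+1) < (a :: l).getD (i+1) 0))
        = (List.range l.length).countP fun i => decide ((j+1) + i < l.getD i 0) := by
      apply List.countP_congr
      intro i _
      simp only [decide_eq_true_eq]
      have h : (a :: l).getD (i+1) 0 = l.getD i 0 := rfl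
      rw [h]
      omega
    rw [e1, ← ih (j+1)]
    simp [exc]

theorem peaks_zero_of_no_true (p : List Bool) (h : p.count true = 0) : peaks p = 0 := by
  induction p with
  | nil => simp [peaks]
  | cons x r ih =>
    have hx : x = false := by
      cases x
      · rfl
      · simp [List.count_cons] at h
    subst hx
    rw [peaks_cons]
    have : r.count true = 0 := by simpa [List.count_cons] using h
    simp [ih this]

theorem head_false_of_no_true (p : List Bool) (h : p.count true = 0) :
    p.getD 0 true = true → p = [] := by
  cases p with
  | nil => intro _; rfl
  | cons x r =>
    intro hx
    cases x
    · simp at hx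
    · simp [List.count_cons] at h

theorem peaks_eq_asc (p : List Bool) : ∀ d, peaks p = asc (fv d p ++ [d + p.count false]) := by
  induction p with
  | nil => intro d; simp [fv, asc, peaks]
  | cons x r ih =>
    intro d
    cases x with
    | true =>
      have hfv : fv d (true :: r) = d :: fv d r := rfl
      have hc : (true :: r).count false = r.count false := by simp
      rw [hfv, hc, List.cons_append, asc_cons, peaks_cons, ← ih d]
      congr 1
      cases r with
      | nil => simp [fv]
      | cons y t =>
        cases y with
        | true =>
          have h1 : fv d (true :: t) = d :: fv d t := rfl
          simp [h1]
        | false =>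
          have h1 : fv d (false :: t) = fv (d+1) t := rfl
          have h2 : (false :: t).count false = t.count false + 1 := by simp
          rw [h1, h2]
          rcases hfvt : fv (d+1) t with _ | ⟨a, l'⟩
          · have hd : d < d + (t.count false + 1) := by omega
            simp [hd]
          · have ha : d + 1 ≤ a := fv_ge t (d+1) a (by rw [hfvt]; exact List.mem_cons_self)
            have hd : d < a := by omega
            simp [hd]
    | false =>
      have hfv : fv d (false :: r) = fv (d+1) r := rfl
      have hc : (false :: r).count false = r.count false + 1 := by simp
      have he : d + (r.count false + 1) = (d+1) + r.count false := by omega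
      rw [hfv, hc, he, peaks_cons, ← ih (d+1)]
      simp
theorem ub_not (p : List Bool) : ∀ u d, ub u d p + ub d u (p.map not)
    + ((d + p.count false) - (u + p.count true)) = p.count false + (d - u) := by
  induction p with
  | nil => intro u d; simp [ub]
  | cons x r ih =>
    intro u d
    cases x with
    | true =>
      have hm : (true :: r).map not = false :: r.map not := rfl
      have hct : (true :: r).count true = r.count true + 1 := by simp
      have hcf : (true :: r).count false = r.count false := by simp
      have e1 : ub u d (true :: r) = (if u < d then 1 else 0) + ub (u+1) d r := rfl
      have e2 : ub d u (false :: r.map not) = ub d (u+1) (r.map not) := rfl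
      rw [hm, hct, hcf, e1, e2]
      have h := ih (u+1) d
      by_cases h' : u < d <;> simp [h'] <;> omega
    | false =>
      have hm : (false :: r).map not = true :: r.map not := rfl
      have hct : (false :: r).count true = r.count true := by simp
      have hcf : (false :: r).count false = r.count false + 1 := by simp
      have e1 : ub u d (false :: r) = ub u (d+1) r := rfl
      have e2 : ub d u (true :: r.map not) = (if d < u then 1 else 0) + ub (d+1) u (r.map not) := rfl
      rw [hm, hct, hcf, e1, e2]
      have h := ih u (d+1)
      by_cases h' : d < u <;> simp [h'] <;> omega

theorem peaks_not (p : List Bool) :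
    peaks p + (if p.getLast? = some true then 1 else 0)
    = peaks (p.map not) + (if p.head? = some true then 1 else 0) := by
  induction p with
  | nil => simp [peaks]
  | cons x r ih =>
    cases r with
    | nil => cases x <;> simp [peaks]
    | cons y t =>
      have hm : (x :: y :: t).map not = (!x) :: ((y :: t).map not) := rfl
      have hm2 : (y :: t).map not = (!y) :: t.map not := rfl
      rw [peaks_cons x (y :: t), hm, peaks_cons (!x) ((y :: t).map not)]
      have g1 : (y :: t).getD 0 true = y := rfl
      have g2 : ((y :: t).map not).getD 0 true = (!y) := by rw [hm2]; rfl
      rw [g1, g2]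
      have hl : (x :: y :: t).getLast? = (y :: t).getLast? := List.getLast?_cons_cons
      rw [hl]
      have hh : (x :: y :: t).head? = some x := rfl
      have hh2 : (y :: t).head? = some y := rfl
      rw [hh]
      rw [hh2] at ih
      cases x <;> cases y <;> simp at ih ⊢ <;> omega

theorem fv_replicate (c : ℕ) : ∀ d, fv d (List.replicate c false) = [] := by
  induction c with
  | zero => intro d; rfl
  | succ c ih =>
    intro d
    rw [List.replicate_succ]
    have e : fv d (false :: List.replicate c false) = fv (d+1) (List.replicate c false) := rfl
    rw [e]; exact ih (d+1)

theorem fv_append_replicate (c : ℕ) : ∀ (d : ℕ) (q : List Bool),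
    fv d (List.replicate c false ++ q) = fv (d + c) q := by
  induction c with
  | zero => intro d q; simp
  | succ c ih =>
    intro d q
    rw [List.replicate_succ]
    have e : fv d ((false :: List.replicate c false) ++ q) = fv (d+1) (List.replicate c false ++ q) := rfl
    rw [e, ih (d+1) q]
    congr 1
    omega

theorem fv_wd (l : List ℕ) : ∀ d F, l.Pairwise (· ≤ ·) → (∀ v ∈ l, d ≤ v) →
    fv d (wd F d l) = l := by
  induction l with
  | nil =>
    intro d F _ _
    exact fv_replicate _ _
  | cons a l ih =>
    intro d F hs hb
    have e : wd F d (a :: l) = List.replicate (a - d) false ++ true :: wd F a l := rfl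
    rw [e, fv_append_replicate]
    have hda : d ≤ a := hb a (List.mem_cons_self)
    rw [show d + (a - d) = a by omega]
    have e2 : fv a (true :: wd F a l) = a :: fv a (wd F a l) := rfl
    rw [e2]
    rw [List.pairwise_cons] at hs
    rw [ih a F hs.2 (fun v hv => hs.1 v hv)]

theorem wd_shift (l : List ℕ) (d F : ℕ) (h1 : ∀ v ∈ l, d + 1 ≤ v) (h2 : d + 1 ≤ F) :
    wd F d l = false :: wd F (d+1) l := by
  cases l with
  | nil =>
    show List.replicate (F - d) false = false :: List.replicate (F - (d+1)) false
    rw [show F - d = (F - (d+1)) + 1 by omega, List.replicate_succ]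
  | cons a t =>
    have ha : d + 1 ≤ a := h1 a (List.mem_cons_self)
    show List.replicate (a - d) false ++ true :: wd F a t
        = false :: (List.replicate (a - (d+1)) false ++ true :: wd F a t)
    rw [show a - d = (a - (d+1)) + 1 by omega, List.replicate_succ]
    rfl

theorem wd_fv (p : List Bool) : ∀ d, wd (d + p.count false) d (fv d p) = p := by
  induction p with
  | nil =>
    intro d
    show List.replicate (d + List.count false [] - d) false = []
    simp
  | cons x r ih =>
    intro d
    cases x with
    | true =>
      have e : fv d (true :: r) = d :: fv d r := rfl
      have hc : (true :: r).count false = r.count false := by simp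
      rw [e, hc]
      show List.replicate (d - d) false ++ true :: wd (d + r.count false) d (fv d r) = true :: r
      rw [Nat.sub_self, List.replicate_zero, List.nil_append, ih d]
    | false =>
      have e : fv d (false :: r) = fv (d+1) r := rfl
      have hc : (false :: r).count false = r.count false + 1 := by simp
      rw [e, hc, show d + (r.count false + 1) = (d+1) + r.count false by omega]
      rw [wd_shift _ _ _ (fun v hv => fv_ge r (d+1) v hv) (by omega), ih (d+1)]

theorem wd_count_true (l : List ℕ) : ∀ d F, (wd F d l).count true = l.length := by
  induction l with
  | nil => intro d F; simp [wd, List.count_replicate]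
  | cons a l ih =>
    intro d F
    have e : wd F d (a :: l) = List.replicate (a - d) false ++ true :: wd F a l := rfl
    rw [e]
    simp [List.count_append, List.count_cons, ih a F, List.count_replicate]

theorem wd_count_false (l : List ℕ) : ∀ d F, d ≤ F → (∀ v ∈ l, d ≤ v ∧ v ≤ F) →
    l.Pairwise (· ≤ ·) → (wd F d l).count false = F - d := by
  induction l with
  | nil => intro d F h _ _; simp [wd, List.count_replicate]
  | cons a l ih =>
    intro d F hdF hb hs
    have e : wd F d (a :: l) = List.replicate (a - d) false ++ true :: wd F a l := rfl
    have ha := hb a (List.mem_cons_self)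
    rw [List.pairwise_cons] at hs
    have hrec : (wd F a l).count false = F - a :=
      ih a F ha.2 (fun v hv => ⟨hs.1 v hv, (hb v (List.mem_cons_of_mem a hv)).2⟩) hs.2
    rw [e]
    simp [List.count_append, List.count_cons, hrec, List.count_replicate]
    omega

theorem wd_last (l : List ℕ) : ∀ d F, d < F → (∀ v ∈ l, v < F) →
    (wd F d l).getLast? = some false := by
  induction l with
  | nil =>
    intro d F h _
    show (List.replicate (F - d) false).getLast? = some false
    rw [List.getLast?_replicate]
    simp
    omega
  | cons a l ih =>
    intro d F hdF hb
    have ha : a < F := hb a (List.mem_cons_self)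
    have hrec := ih a F ha (fun v hv => hb v (List.mem_cons_of_mem a hv))
    rcases List.getLast?_eq_some_iff.1 hrec with ⟨ys, hys⟩
    have e : wd F d (a :: l) = List.replicate (a - d) false ++ true :: wd F a l := rfl
    rw [e, hys]
    have e2 : List.replicate (a - d) false ++ true :: (ys ++ [false])
        = (List.replicate (a - d) false ++ true :: ys) ++ [false] := by
      simp
    rw [e2, List.getLast?_concat]

theorem length_eq_counts (q : List Bool) : q.length = q.count true + q.count false := by
  induction q with
  | nil => simp
  | cons x r ih => cases x <;> simp [List.count_cons] <;> omega
/-! ### Finset-side machinery -/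

/-- positions of ascents ("jumps") of a list, as a Finset -/
def jumpF (l : List ℕ) : Finset ℕ :=
  (Finset.range l.length).filter (fun i => i ≠ 0 ∧ l.getD (i-1) 0 < l.getD i 0)

def TOf (l : List ℕ) (F : ℕ) : Finset ℕ := insert F (jumpF l)

def idx (T : Finset ℕ) (j : ℕ) : ℕ :=
  ((Finset.range (j+1)).filter (fun y => y ≠ 0 ∧ y ∈ T)).card

noncomputable def nthS (S : Finset ℕ) (i : ℕ) : ℕ := Nat.nth (· ∈ S) i

noncomputable def mstat (n : ℕ) (S T : Finset ℕ) : ℕ :=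
  (List.range n).countP fun j => decide (j < nthS S (idx T j))

theorem toFinset_setOf (S : Finset ℕ) (hf : (Set.ofPred (· ∈ S)).Finite) : hf.toFinset = S := by
  ext x; simp

theorem lt_nth_iff (S : Finset ℕ) {i j : ℕ} (hi : i < S.card) :
    j < Nat.nth (· ∈ S) i ↔ Nat.count (· ∈ S) (j+1) ≤ i := by
  constructor
  · exact fun h => Nat.le_nth_of_count_le h
  · intro h
    by_contra hc
    push_neg at hc
    have h1 : Nat.count (· ∈ S) (Nat.nth (· ∈ S) i + 1) = i + 1 :=
      Nat.count_nth_succ (fun hf => by rwa [toFinset_setOf S hf])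
    have h2 : Nat.count (· ∈ S) (Nat.nth (· ∈ S) i + 1) ≤ Nat.count (· ∈ S) (j+1) :=
      Nat.count_monotone _ (by omega)
    omega

theorem idx_zero (T : Finset ℕ) : idx T 0 = 0 := by
  unfold idx
  rw [Finset.card_eq_zero, Finset.filter_eq_empty_iff]
  intro y hy
  simp only [Finset.mem_range] at hy
  have : y = 0 := by omega
  simp [this]

theorem idx_succ (T : Finset ℕ) (j : ℕ) :
    idx T (j+1) = idx T j + (if (j+1) ∈ T then 1 else 0) := by
  unfold idx
  rw [Finset.range_add_one, Finset.filter_insert]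
  by_cases h : (j+1) ∈ T
  · have hne : j + 1 ≠ 0 := by omega
    rw [if_pos ⟨hne, h⟩, Finset.card_insert_of_notMem, if_pos h]
    intro hmem
    have := Finset.mem_of_mem_filter _ hmem
    simp at this
  · rw [if_neg (by tauto), if_neg h]
    omega

theorem idx_mono (T : Finset ℕ) {j j' : ℕ} (h : j ≤ j') : idx T j ≤ idx T j' := by
  apply Finset.card_le_card
  apply Finset.filter_subset_filter
  intro y hy
  simp only [Finset.mem_range] at hy ⊢
  omega

theorem idx_lt_card {T : Finset ℕ} {n j : ℕ} (hn : n ∈ T) (hj : j < n) : idx T j < T.card := by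
  have hsub : (Finset.range (j+1)).filter (fun y => y ≠ 0 ∧ y ∈ T) ⊆ T.erase n := by
    intro y hy
    simp only [Finset.mem_filter, Finset.mem_range, Finset.mem_erase] at hy ⊢
    exact ⟨by omega, hy.2.2⟩
  have h1 := Finset.card_le_card hsub
  have h2 := Finset.card_erase_of_mem hn
  have h3 : 0 < T.card := Finset.card_pos.2 ⟨n, hn⟩
  unfold idx
  omega

theorem idx_TOf (l : List ℕ) (F j : ℕ) (hj : j < F) :
    idx (TOf l F) j = idx (jumpF l) j := by
  unfold idx
  congr 1
  apply Finset.filter_congr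
  intro y hy
  simp only [Finset.mem_range] at hy
  unfold TOf
  simp only [Finset.mem_insert]
  constructor
  · rintro ⟨h0, rfl | h⟩
    · omega
    · exact ⟨h0, h⟩
  · rintro ⟨h0, h⟩
    exact ⟨h0, Or.inr h⟩

theorem sorted_getD_mono {l : List ℕ} (hs : l.Pairwise (· ≤ ·)) {i j : ℕ}
    (hij : i ≤ j) (hj : j < l.length) : l.getD i 0 ≤ l.getD j 0 := by
  rcases Nat.eq_or_lt_of_le hij with rfl | hlt
  · exact le_refl _
  · rw [List.getD_eq_getElem l 0 (by omega), List.getD_eq_getElem l 0 hj]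
    exact (List.pairwise_iff_getElem.1 hs) i j (by omega) hj hlt

theorem mem_toFinset_getD {l : List ℕ} {x : ℕ} :
    x ∈ l.toFinset ↔ ∃ i, ∃ (_ : i < l.length), l.getD i 0 = x := by
  rw [List.mem_toFinset, List.mem_iff_getElem]
  constructor
  · rintro ⟨i, hi, rfl⟩
    exact ⟨i, hi, (List.getD_eq_getElem l 0 hi)⟩
  · rintro ⟨i, hi, h⟩
    exact ⟨i, hi, by rw [← List.getD_eq_getElem l 0 hi, h]⟩

theorem count_stag (p : ℕ → Prop) [DecidablePred p] {a b : ℕ} (hab : a ≤ b)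
    (h : ∀ x, a ≤ x → x < b → ¬ p x) : Nat.count p b = Nat.count p a := by
  induction b, hab using Nat.le_induction with
  | base => rfl
  | succ b hab ih =>
    rw [Nat.count_succ, ih (fun x hx hxb => h x hx (by omega))]
    simp [h b hab (by omega)]

/-- key counting lemma: the number of elements of `l.toFinset` below `l[j]`
equals the number of jumps in positions `1..j`. -/
theorem count_getD (l : List ℕ) (hs : l.Pairwise (· ≤ ·)) :
    ∀ j, j < l.length →
      Nat.count (· ∈ l.toFinset) (l.getD j 0) = idx (jumpF l) j := by
  intro j
  induction j with
  | zero =>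
    intro hj
    rw [idx_zero, Nat.count_iff_forall_not]
    intro m hm hmem
    rcases mem_toFinset_getD.1 hmem with ⟨i, hi, hieq⟩
    have := sorted_getD_mono hs (Nat.zero_le i) hi
    omega
  | succ j ih =>
    intro hj
    have hj' : j < l.length := by omega
    have hmemjump : ((j+1) ∈ jumpF l) ↔ l.getD j 0 < l.getD (j+1) 0 := by
      unfold jumpF
      simp only [Finset.mem_filter, Finset.mem_range]
      constructor
      · rintro ⟨_, _, h⟩
        simpa using h
      · intro h
        exact ⟨hj, by omega, by simpa using h⟩
    rw [idx_succ]
    rcases Nat.eq_or_lt_of_le (sorted_getD_mono hs (by omega : j ≤ j + 1) hj) with heq | hlt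
    · rw [← heq, ih hj']
      rw [if_neg (by rw [hmemjump]; omega), Nat.add_zero]
    · rw [if_pos (hmemjump.2 hlt)]
      have hstag : Nat.count (· ∈ l.toFinset) (l.getD (j+1) 0)
          = Nat.count (· ∈ l.toFinset) (l.getD j 0 + 1) := by
        apply count_stag _ (by omega)
        intro x hx hxb hmem
        rcases mem_toFinset_getD.1 hmem with ⟨i, hi, hieq⟩
        rcases Nat.lt_or_ge i (j+1) with hij | hij
        · have := sorted_getD_mono hs (by omega : i ≤ j) hj'
          omega
        · have := sorted_getD_mono hs hij hi
          omega
      rw [hstag, Nat.count_succ, ih hj']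
      have hmem : l.getD j 0 ∈ l.toFinset := mem_toFinset_getD.2 ⟨j, hj', rfl⟩
      rw [if_pos hmem]

theorem nth_getD (l : List ℕ) (hs : l.Pairwise (· ≤ ·)) {j : ℕ} (hj : j < l.length) :
    Nat.nth (· ∈ l.toFinset) (idx (jumpF l) j) = l.getD j 0 := by
  rw [← count_getD l hs j hj]
  exact Nat.nth_count (mem_toFinset_getD.2 ⟨j, hj, rfl⟩)
theorem card_filter_range (N : ℕ) (P : ℕ → Prop) [DecidablePred P] :
    ((Finset.range N).filter P).card = (List.range N).countP (fun i => decide (P i)) := by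
  induction N with
  | zero => simp
  | succ n ih =>
    rw [Finset.range_add_one, List.range_succ, List.countP_append, Finset.filter_insert]
    by_cases h : P n
    · rw [if_pos h, Finset.card_insert_of_notMem (by simp)]
      simp [h, ← ih]
    · rw [if_neg h]
      simp [h, ← ih]

/-- positional count of ascents -/
def ascP (l : List ℕ) : ℕ :=
  (List.range (l.length - 1)).countP (fun i => decide (l.getD i 0 < l.getD (i+1) 0))

theorem ascP_cons_cons (a b : ℕ) (t : List ℕ) :
    ascP (a :: b :: t) = (if a < b then 1 else 0) + ascP (b :: t) := by
  unfold ascP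
  have hl : (a :: b :: t).length - 1 = ((b :: t).length - 1) + 1 := by simp
  rw [hl, countP_range_succ]
  have e0 : (decide ((a :: b :: t).getD 0 0 < (a :: b :: t).getD (0+1) 0)) = decide (a < b) := rfl
  rw [e0]
  congr 1
  by_cases h : a < b <;> simp [h]

theorem asc_eq_ascP (l : List ℕ) : asc l = ascP l := by
  match l with
  | [] => simp [asc, ascP]
  | [a] => simp [asc, ascP]
  | a :: b :: t =>
    have e : asc (a :: b :: t) = (if a < b then 1 else 0) + asc (b :: t) := by simp [asc]
    rw [e, asc_eq_ascP (b :: t), ascP_cons_cons]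

theorem jumpF_card (l : List ℕ) : (jumpF l).card = asc l := by
  rw [asc_eq_ascP]
  cases l with
  | nil => simp [jumpF, ascP]
  | cons a t =>
    unfold jumpF
    rw [card_filter_range]
    have hl : (a :: t).length = t.length + 1 := rfl
    rw [hl, countP_range_succ]
    have e0 : (decide ((0:ℕ) ≠ 0 ∧ (a :: t).getD (0-1) 0 < (a :: t).getD 0 0)) = false := by simp
    rw [e0, if_neg Bool.false_ne_true, Nat.zero_add]
    have e1 : ((List.range t.length).countP fun i =>
        decide ((i+1) ≠ 0 ∧ (a :: t).getD ((i+1)-1) 0 < (a :: t).getD (i+1) 0))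
        = (List.range t.length).countP fun i =>
        decide ((a :: t).getD i 0 < (a :: t).getD (i+1) 0) := by
      apply List.countP_congr
      intro i _
      simp
    rw [e1]
    unfold ascP
    rw [show (a :: t).length - 1 = t.length by simp]

theorem getLastD_mem (l : List ℕ) (c : ℕ) (h : l ≠ []) : l.getLastD c ∈ l := by
  rw [List.getLastD_eq_getLast?, List.getLast?_eq_getLast_of_ne_nil h]
  exact List.getLast_mem h

theorem card_toFinset_sorted (l : List ℕ) (hs : l.Pairwise (· ≤ ·)) (hne : l ≠ []) :
    l.toFinset.card = (jumpF l).card + 1 := by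
  have hlen : 0 < l.length := List.length_pos_iff.2 hne
  have hlast : l.length - 1 < l.length := by omega
  have h1 : Nat.count (· ∈ l.toFinset) (l.getD (l.length - 1) 0 + 1) = l.toFinset.card := by
    rw [Nat.count_eq_card_filter_range]
    congr 1
    apply Finset.ext
    intro x
    simp only [Finset.mem_filter, Finset.mem_range]
    constructor
    · exact fun h => h.2
    · intro hx
      refine ⟨?_, hx⟩
      rcases mem_toFinset_getD.1 hx with ⟨i, hi, rfl⟩
      have := sorted_getD_mono hs (by omega : i ≤ l.length - 1) hlast
      omega
  have h2 : Nat.count (· ∈ l.toFinset) (l.getD (l.length - 1) 0 + 1)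
      = Nat.count (· ∈ l.toFinset) (l.getD (l.length - 1) 0) + 1 := by
    rw [Nat.count_succ, if_pos (mem_toFinset_getD.2 ⟨_, hlast, rfl⟩)]
  have h3 := count_getD l hs (l.length - 1) hlast
  have h4 : idx (jumpF l) (l.length - 1) = (jumpF l).card := by
    unfold idx
    congr 1
    apply Finset.ext
    intro y
    simp only [Finset.mem_filter, Finset.mem_range]
    constructor
    · exact fun h => h.2.2
    · intro hy
      have hy' := hy
      unfold jumpF at hy'
      simp only [Finset.mem_filter, Finset.mem_range] at hy'
      exact ⟨by omega, hy'.2.1, hy⟩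
  omega

theorem idx_eq_count (T : Finset ℕ) (h0 : 0 ∉ T) (j : ℕ) :
    idx T j = Nat.count (· ∈ T) (j+1) := by
  rw [Nat.count_eq_card_filter_range]
  unfold idx
  congr 1
  apply Finset.filter_congr
  intro y _
  constructor
  · exact fun h => h.2
  · intro h
    refine ⟨?_, h⟩
    rintro rfl
    exact h0 h
def Cond (n k : ℕ) (S T : Finset ℕ) : Prop :=
  S ⊆ Finset.range (n+1) ∧ T ⊆ Finset.range (n+1) ∧ 0 ∈ S ∧ n ∉ S ∧ 0 ∉ T ∧ n ∈ T ∧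
    S.card = k ∧ T.card = k

noncomputable def decL (n : ℕ) (S T : Finset ℕ) : List ℕ :=
  (List.range n).map fun j => nthS S (idx T j)

noncomputable def decW (n : ℕ) (S T : Finset ℕ) : List Bool := wd n 0 (decL n S T)

theorem encode_facts {n m k : ℕ} {p : List Bool}
    (hNM : IsNM n m p) (hpk : peaks p = k) (hhd : p.head? = some true)
    (hlst : p.getLast? = some false) :
    Cond n k (fv 0 p).toFinset (TOf (fv 0 p) n) ∧
      mstat n (fv 0 p).toFinset (TOf (fv 0 p) n) = m ∧
      decW n (fv 0 p).toFinset (TOf (fv 0 p) n) = p := by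
  obtain ⟨hlen2, hct, hub⟩ := hNM
  have hcf : p.count false = n := by have := length_eq_counts p; omega
  have hlenl : (fv 0 p).length = n := by rw [fv_length]; exact hct
  have hsort := fv_sorted p 0
  have hblt : ∀ v ∈ fv 0 p, v < n := by
    intro v hv
    have := fv_lt_of_last p 0 hlst v hv
    omega
  have hp : ∃ r, p = true :: r := by
    cases p with
    | nil => simp at hhd
    | cons x r =>
      have : x = true := by simpa using hhd
      exact ⟨r, by rw [this]⟩
  have hn1 : 1 ≤ n := by
    obtain ⟨r, rfl⟩ := hp
    rw [← hct]
    simp [List.count_cons]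
  have hlne : fv 0 p ≠ [] := by
    intro h
    rw [h] at hlenl
    simp at hlenl
    omega
  have h0mem : 0 ∈ fv 0 p := by
    obtain ⟨r, rfl⟩ := hp
    have : fv 0 (true :: r) = 0 :: fv 0 r := rfl
    rw [this]
    exact List.mem_cons_self
  -- peaks p = asc l + 1
  have hasc : asc (fv 0 p) + 1 = k := by
    have h1 := peaks_eq_asc p 0
    rw [hcf, Nat.zero_add] at h1
    rw [asc_concat] at h1
    have hmem := getLastD_mem (fv 0 p) n hlne
    have hlt := hblt _ hmem
    rw [if_pos hlt] at h1
    omega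
  have hjsub : jumpF (fv 0 p) ⊆ Finset.range n := by
    unfold jumpF
    rw [hlenl]
    exact Finset.filter_subset _ _
  have hnjump : n ∉ jumpF (fv 0 p) := by
    intro h
    have := hjsub h
    simp at this
  have hScard : (fv 0 p).toFinset.card = k := by
    rw [card_toFinset_sorted _ hsort hlne, jumpF_card]
    exact hasc
  have hTcard : (TOf (fv 0 p) n).card = k := by
    unfold TOf
    rw [Finset.card_insert_of_notMem hnjump, jumpF_card]
    exact hasc
  have hcond : Cond n k (fv 0 p).toFinset (TOf (fv 0 p) n) := by
    refine ⟨?_, ?_, ?_, ?_, ?_, ?_, hScard, hTcard⟩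
    · intro v hv
      rw [List.mem_toFinset] at hv
      have := hblt v hv
      simp only [Finset.mem_range]
      omega
    · unfold TOf
      intro y hy
      rcases Finset.mem_insert.1 hy with rfl | h
      · simp
      · have := hjsub h
        simp only [Finset.mem_range] at this ⊢
        omega
    · rwa [List.mem_toFinset]
    · intro h
      rw [List.mem_toFinset] at h
      exact absurd (hblt n h) (by omega)
    · unfold TOf
      intro h
      rcases Finset.mem_insert.1 h with h | h
      · omega
      · unfold jumpF at h
        simp at h
    · exact Finset.mem_insert_self _ _
  have hms : mstat n (fv 0 p).toFinset (TOf (fv 0 p) n) = m := by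
    rw [← hub, upsBelow_eq_ub, ub_eq_exc, exc_eq_countP, hlenl]
    unfold mstat
    apply List.countP_congr
    intro j hj
    rw [List.mem_range] at hj
    simp only [decide_eq_true_eq]
    rw [idx_TOf _ _ _ hj]
    unfold nthS
    rw [nth_getD _ hsort (by omega)]
    omega
  refine ⟨hcond, hms, ?_⟩
  have hdecl : decL n (fv 0 p).toFinset (TOf (fv 0 p) n) = fv 0 p := by
    apply List.ext_getElem
    · simp [decL, hlenl]
    · intro i h1 h2
      simp only [decL, List.getElem_map, List.getElem_range]
      have hi : i < n := by simpa [decL] using h1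
      rw [idx_TOf _ _ _ hi]
      unfold nthS
      rw [nth_getD _ hsort (by omega), List.getD_eq_getElem _ 0 (by omega)]
  unfold decW
  rw [hdecl]
  have h := wd_fv p 0
  rwa [hcf, Nat.zero_add] at h

theorem decode_facts {n m k : ℕ} {S T : Finset ℕ}
    (hc : Cond n k S T) (hms : mstat n S T = m) :
    IsNM n m (decW n S T) ∧ peaks (decW n S T) = k ∧
      (decW n S T).head? = some true ∧ (decW n S T).getLast? = some false ∧
      (fv 0 (decW n S T)).toFinset = S ∧ TOf (fv 0 (decW n S T)) n = T := by
  obtain ⟨hSsub, hTsub, h0S, hnS, h0T, hnT, hSc, hTc⟩ := hc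
  have hn1 : 1 ≤ n := by
    rcases Nat.eq_zero_or_pos n with rfl | h
    · exact absurd hnT h0T
    · exact h
  have hk1 : 1 ≤ k := by
    rw [← hSc]
    exact Finset.card_pos.2 ⟨0, h0S⟩
  have hfin : (Set.ofPred (· ∈ S)).Finite := S.finite_toSet
  have hfinT : (Set.ofPred (· ∈ T)).Finite := T.finite_toSet
  have hvalid : ∀ j < n, idx T j < S.card := by
    intro j hj
    rw [hSc, ← hTc]
    exact idx_lt_card hnT hj
  have hLlen : (decL n S T).length = n := by simp [decL]
  have hLget : ∀ j, j < n → (decL n S T).getD j 0 = nthS S (idx T j) := by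
    intro j hj
    unfold decL
    rw [List.getD_eq_getElem _ 0 (by simp; omega), List.getElem_map, List.getElem_range]
  have hmemS : ∀ j, j < n → (decL n S T).getD j 0 ∈ S := by
    intro j hj
    rw [hLget j hj]
    exact Nat.nth_mem_of_lt_card hfin (by rw [toFinset_setOf]; exact hvalid j hj)
  have hLlt : ∀ j, j < n → (decL n S T).getD j 0 < n := by
    intro j hj
    have h1 := hSsub (hmemS j hj)
    simp only [Finset.mem_range] at h1
    have h2 : (decL n S T).getD j 0 ≠ n := fun h => hnS (h ▸ hmemS j hj)
    omega
  have hmemL : ∀ v ∈ decL n S T, v < n := by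
    intro v hv
    rcases List.mem_iff_getElem.1 hv with ⟨i, hi, rfl⟩
    have hi' : i < n := by rwa [hLlen] at hi
    rw [← List.getD_eq_getElem _ 0 hi]
    exact hLlt i hi'
  have hsortL : (decL n S T).Pairwise (· ≤ ·) := by
    rw [List.pairwise_iff_getElem]
    intro i j hi hj hij
    rw [hLlen] at hi hj
    rw [← List.getD_eq_getElem _ 0 (by rw [hLlen]; omega),
        ← List.getD_eq_getElem _ 0 (by rw [hLlen]; omega),
        hLget i hi, hLget j hj]
    unfold nthS
    exact Nat.nth_le_nth_of_lt_card hfin (idx_mono T (by omega))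
      (by rw [toFinset_setOf]; exact hvalid j hj)
  have hL0 : (decL n S T).getD 0 0 = 0 := by
    rw [hLget 0 hn1, idx_zero]
    unfold nthS
    exact Nat.nth_zero_of_zero h0S
  have hLne : decL n S T ≠ [] := by
    intro h
    rw [h] at hLlen
    simp at hLlen
    omega
  have hfvq : fv 0 (decW n S T) = decL n S T :=
    fv_wd _ 0 n hsortL (fun v _ => Nat.zero_le v)
  have hqct : (decW n S T).count true = n := by
    unfold decW
    rw [wd_count_true, hLlen]
  have hqcf : (decW n S T).count false = n := by
    unfold decW
    rw [wd_count_false _ 0 n (by omega) (fun v hv => ⟨Nat.zero_le v, le_of_lt (hmemL v hv)⟩) hsortL]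
    omega
  have hqlen : (decW n S T).length = 2 * n := by
    rw [length_eq_counts, hqct, hqcf]
    omega
  have hqhd : (decW n S T).head? = some true := by
    have hcons : ∃ L', decL n S T = 0 :: L' := by
      rcases h : decL n S T with _ | ⟨a, L'⟩
      · exact absurd h hLne
      · refine ⟨L', ?_⟩
        have : a = 0 := by rw [h] at hL0; simpa using hL0
        rw [this]
    obtain ⟨L', hL'⟩ := hcons
    unfold decW
    rw [hL']
    have e : wd n 0 (0 :: L') = List.replicate (0-0) false ++ true :: wd n 0 L' := rfl
    rw [e]
    simp
  have hqlst : (decW n S T).getLast? = some false :=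
    wd_last _ 0 n (by omega) hmemL
  have hub : upsBelow (decW n S T) = m := by
    rw [upsBelow_eq_ub, ub_eq_exc, exc_eq_countP, hfvq, hLlen, ← hms]
    unfold mstat
    apply List.countP_congr
    intro j hj
    rw [List.mem_range] at hj
    simp only [decide_eq_true_eq]
    rw [hLget j hj]
    omega
  -- jump positions of decL correspond to membership in T
  have hjump_iff : ∀ j, j + 1 < n →
      ((decL n S T).getD j 0 < (decL n S T).getD (j+1) 0 ↔ (j+1) ∈ T) := by
    intro j hj
    rw [hLget j (by omega), hLget (j+1) hj]
    unfold nthS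
    constructor
    · intro hlt
      by_contra hmem
      rw [idx_succ T j, if_neg hmem, Nat.add_zero] at hlt
      exact lt_irrefl _ hlt
    · intro hmem
      have hidx : idx T j < idx T (j+1) := by
        rw [idx_succ T j, if_pos hmem]
        omega
      exact Nat.nth_lt_nth_of_lt_card hfin hidx
        (by rw [toFinset_setOf]; exact hvalid (j+1) hj)
  have hTOf : TOf (decL n S T) n = T := by
    apply Finset.ext
    intro y
    unfold TOf jumpF
    simp only [Finset.mem_insert, Finset.mem_filter, Finset.mem_range]
    constructor
    · rintro (rfl | ⟨hylen, hy0, hjump⟩)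
      · exact hnT
      · rw [hLlen] at hylen
        obtain ⟨j, rfl⟩ : ∃ j, y = j + 1 := ⟨y - 1, by omega⟩
        have e : j + 1 - 1 = j := by omega
        rw [e] at hjump
        exact (hjump_iff j hylen).1 hjump
    · intro hy
      have hyn : y ≤ n := by
        have := hTsub hy
        simp only [Finset.mem_range] at this
        omega
      rcases Nat.eq_or_lt_of_le hyn with rfl | hylt
      · exact Or.inl rfl
      · right
        have hy0 : y ≠ 0 := fun h => h0T (h ▸ hy)
        obtain ⟨j, rfl⟩ : ∃ j, y = j + 1 := ⟨y - 1, by omega⟩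
        have e : j + 1 - 1 = j := by omega
        rw [e]
        exact ⟨by rw [hLlen]; omega, by omega, (hjump_iff j hylt).2 hy⟩
  have hSrec : (decL n S T).toFinset = S := by
    apply Finset.ext
    intro s
    constructor
    · intro hs
      rcases mem_toFinset_getD.1 hs with ⟨i, hi, rfl⟩
      rw [hLlen] at hi
      exact hmemS i hi
    · intro hs
      have hnthc : Nat.nth (· ∈ S) (Nat.count (· ∈ S) s) = s := Nat.nth_count hs
      have hck : Nat.count (· ∈ S) s < k := by
        have := Nat.count_lt_card hfin hs
        rwa [toFinset_setOf, hSc] at this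
      rcases Nat.eq_zero_or_pos (Nat.count (· ∈ S) s) with hc0 | hcpos
      · apply mem_toFinset_getD.2 ⟨0, by rw [hLlen]; omega, ?_⟩
        rw [hLget 0 hn1, idx_zero]
        unfold nthS
        rw [hc0] at hnthc
        exact hnthc
      · have htmem : Nat.nth (· ∈ T) (Nat.count (· ∈ S) s - 1) ∈ T :=
          Nat.nth_mem_of_lt_card hfinT (by rw [toFinset_setOf, hTc]; omega)
        have ht0 : Nat.nth (· ∈ T) (Nat.count (· ∈ S) s - 1) ≠ 0 :=
          fun h => h0T (h ▸ htmem)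
        have htn : Nat.nth (· ∈ T) (Nat.count (· ∈ S) s - 1) ≤ n := by
          have := hTsub htmem
          simp only [Finset.mem_range] at this
          omega
        have hcountn : Nat.count (· ∈ T) n = k - 1 := by
          rw [Nat.count_eq_card_filter_range]
          have he : (Finset.range n).filter (· ∈ T) = T.erase n := by
            apply Finset.ext
            intro y
            simp only [Finset.mem_filter, Finset.mem_range, Finset.mem_erase]
            constructor
            · rintro ⟨h1, h2⟩
              exact ⟨by omega, h2⟩
            · rintro ⟨h1, h2⟩
              have := hTsub h2
              simp only [Finset.mem_range] at this
              exact ⟨by omega, h2⟩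
          rw [he, Finset.card_erase_of_mem hnT, hTc]
        have htltn : Nat.nth (· ∈ T) (Nat.count (· ∈ S) s - 1) < n := by
          rcases Nat.lt_or_ge (Nat.nth (· ∈ T) (Nat.count (· ∈ S) s - 1)) n with h | h
          · exact h
          · exfalso
            have heq : Nat.nth (· ∈ T) (Nat.count (· ∈ S) s - 1) = n := by omega
            have hcnt : Nat.count (· ∈ T) (Nat.nth (· ∈ T) (Nat.count (· ∈ S) s - 1))
                = Nat.count (· ∈ S) s - 1 :=
              Nat.count_nth (fun hf => by rw [toFinset_setOf, hTc]; omega)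
            rw [heq, hcountn] at hcnt
            omega
        have hidxt : idx T (Nat.nth (· ∈ T) (Nat.count (· ∈ S) s - 1)) = Nat.count (· ∈ S) s := by
          rw [idx_eq_count T h0T]
          have := Nat.count_nth_succ (p := (· ∈ T)) (n := Nat.count (· ∈ S) s - 1)
            (fun hf => by rw [toFinset_setOf, hTc]; omega)
          omega
        apply mem_toFinset_getD.2 ⟨Nat.nth (· ∈ T) (Nat.count (· ∈ S) s - 1), by rw [hLlen]; omega, ?_⟩
        rw [hLget _ htltn, hidxt]
        exact hnthc
  have hnjumpL : n ∉ jumpF (decL n S T) := by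
    intro h
    have h2 : n ∈ Finset.range (decL n S T).length := Finset.mem_of_mem_filter _ h
    rw [hLlen] at h2
    simp at h2
  have hjcard : (jumpF (decL n S T)).card = k - 1 := by
    have he : (TOf (decL n S T) n).card = T.card := by rw [hTOf]
    unfold TOf at he
    rw [Finset.card_insert_of_notMem hnjumpL, hTc] at he
    omega
  have hpeaks : peaks (decW n S T) = k := by
    rw [peaks_eq_asc _ 0, hfvq, hqcf, Nat.zero_add, asc_concat]
    have hmem := getLastD_mem _ n hLne
    rw [if_pos (hmemL _ hmem), ← jumpF_card, hjcard]
    omega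
  exact ⟨⟨hqlen, hqct, hub⟩, hpeaks, hqhd, hqlst,
    by rw [hfvq]; exact hSrec, by rw [hfvq]; exact hTOf⟩
abbrev WSet (n m k : ℕ) := {p : List Bool // IsNM n m p ∧ peaks p = k ∧
    p.head? = some true ∧ p.getLast? = some false}
abbrev BSet (n m k : ℕ) := {p : List Bool // IsNM n m p ∧ peaks p = k ∧
    p.head? = some false ∧ p.getLast? = some true}
abbrev MSet (n m k : ℕ) := {ST : Finset ℕ × Finset ℕ //
    Cond n k ST.1 ST.2 ∧ mstat n ST.1 ST.2 = m}

noncomputable def equivWM (n m k : ℕ) : WSet n m k ≃ MSet n m k where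
  toFun p := ⟨((fv 0 p.1).toFinset, TOf (fv 0 p.1) n),
    (encode_facts p.2.1 p.2.2.1 p.2.2.2.1 p.2.2.2.2).1,
    (encode_facts p.2.1 p.2.2.1 p.2.2.2.1 p.2.2.2.2).2.1⟩
  invFun st := ⟨decW n st.1.1 st.1.2, by
    obtain ⟨a, b, c, d, _⟩ := decode_facts st.2.1 st.2.2
    exact ⟨a, b, c, d⟩⟩
  left_inv := by
    rintro ⟨p, h1, h2, h3, h4⟩
    apply Subtype.ext
    exact (encode_facts h1 h2 h3 h4).2.2
  right_inv := by
    rintro ⟨⟨S, T⟩, hc, hm⟩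
    apply Subtype.ext
    obtain ⟨_, _, _, _, h5, h6⟩ := decode_facts hc hm
    rw [Prod.ext_iff]
    exact ⟨h5, h6⟩

def compl (n : ℕ) (X : Finset ℕ) : Finset ℕ := Finset.range (n+1) \ X

theorem compl_compl {n : ℕ} {X : Finset ℕ} (h : X ⊆ Finset.range (n+1)) :
    compl n (compl n X) = X := by
  unfold compl
  rw [Finset.sdiff_sdiff_self_left]
  exact Finset.inter_eq_right.2 h

theorem count_compl {n : ℕ} (X : Finset ℕ) (hX : X ⊆ Finset.range (n+1)) {j : ℕ} (hj : j < n) :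
    Nat.count (· ∈ compl n X) (j+1) = (j+1) - Nat.count (· ∈ X) (j+1) := by
  rw [Nat.count_eq_card_filter_range, Nat.count_eq_card_filter_range]
  have h1 : (Finset.range (j+1)).filter (· ∈ compl n X)
      = Finset.range (j+1) \ (Finset.range (j+1)).filter (· ∈ X) := by
    apply Finset.ext
    intro y
    simp only [Finset.mem_filter, Finset.mem_sdiff, Finset.mem_range, compl]
    constructor
    · rintro ⟨h1, _, h3⟩
      exact ⟨h1, fun hh => h3 hh.2⟩
    · rintro ⟨h1, h2⟩
      refine ⟨h1, by omega, fun hy => h2 ⟨h1, hy⟩⟩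
  rw [h1, Finset.card_sdiff_of_subset (Finset.filter_subset _ _), Finset.card_range]

theorem cond_compl {n k : ℕ} {S T : Finset ℕ} (hc : Cond n k S T) :
    Cond n (n+1-k) (compl n T) (compl n S) := by
  obtain ⟨hSsub, hTsub, h0S, hnS, h0T, hnT, hSc, hTc⟩ := hc
  refine ⟨Finset.sdiff_subset, Finset.sdiff_subset, ?_, ?_, ?_, ?_, ?_, ?_⟩
  · simp only [compl, Finset.mem_sdiff, Finset.mem_range]
    exact ⟨by omega, h0T⟩
  · simp only [compl, Finset.mem_sdiff, Finset.mem_range]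
    intro h
    exact h.2 hnT
  · simp only [compl, Finset.mem_sdiff, Finset.mem_range]
    intro h
    exact h.2 h0S
  · simp only [compl, Finset.mem_sdiff, Finset.mem_range]
    exact ⟨by omega, hnS⟩
  · rw [compl, Finset.card_sdiff_of_subset hTsub, Finset.card_range, hTc]
  · rw [compl, Finset.card_sdiff_of_subset hSsub, Finset.card_range, hSc]

theorem mstat_compl {n k : ℕ} {S T : Finset ℕ} (hc : Cond n k S T) :
    mstat n (compl n T) (compl n S) = mstat n S T := by
  obtain ⟨hSsub, hTsub, h0S, hnS, h0T, hnT, hSc, hTc⟩ := hc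
  unfold mstat
  apply List.countP_congr
  intro j hj
  rw [List.mem_range] at hj
  simp only [decide_eq_true_eq]
  have hnCS : n ∈ compl n S := by
    simp only [compl, Finset.mem_sdiff, Finset.mem_range]
    exact ⟨by omega, hnS⟩
  have h0CS : 0 ∉ compl n S := by
    simp only [compl, Finset.mem_sdiff, Finset.mem_range]
    intro h
    exact h.2 h0S
  have hCTcard : (compl n T).card = n + 1 - k := by
    rw [compl, Finset.card_sdiff_of_subset hTsub, Finset.card_range, hTc]
  have hCScard : (compl n S).card = n + 1 - k := by
    rw [compl, Finset.card_sdiff_of_subset hSsub, Finset.card_range, hSc]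
  have hvalid1 : idx T j < S.card := by
    rw [hSc, ← hTc]
    exact idx_lt_card hnT hj
  have hvalid2 : idx (compl n S) j < (compl n T).card := by
    rw [hCTcard, ← hCScard]
    exact idx_lt_card hnCS hj
  unfold nthS
  rw [lt_nth_iff S hvalid1, lt_nth_iff (compl n T) hvalid2]
  have e1 : idx (compl n S) j = (j+1) - Nat.count (· ∈ S) (j+1) := by
    rw [idx_eq_count _ h0CS, count_compl S hSsub hj]
  have e2 : Nat.count (· ∈ compl n T) (j+1) = (j+1) - idx T j := by
    rw [count_compl T hTsub hj, idx_eq_count T h0T]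
  have h3 : Nat.count (· ∈ S) (j+1) ≤ j + 1 := Nat.count_le _
  have h4 : idx T j ≤ j + 1 := by
    rw [idx_eq_count T h0T]
    exact Nat.count_le _
  rw [e1, e2]
  omega

noncomputable def equivMM (n m k : ℕ) (hk : 1 ≤ k) (hk' : k ≤ n) :
    MSet n m k ≃ MSet n m (n+1-k) where
  toFun st := ⟨(compl n st.1.2, compl n st.1.1), cond_compl st.2.1, by
    rw [mstat_compl st.2.1]; exact st.2.2⟩
  invFun st := ⟨(compl n st.1.2, compl n st.1.1), by
    have h := cond_compl st.2.1
    rwa [show n+1-(n+1-k) = k by omega] at h, by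
    rw [mstat_compl st.2.1]; exact st.2.2⟩
  left_inv := by
    rintro ⟨⟨S, T⟩, hc, hm⟩
    apply Subtype.ext
    rw [Prod.ext_iff]
    exact ⟨compl_compl hc.1, compl_compl hc.2.1⟩
  right_inv := by
    rintro ⟨⟨S, T⟩, hc, hm⟩
    apply Subtype.ext
    rw [Prod.ext_iff]
    exact ⟨compl_compl hc.1, compl_compl hc.2.1⟩

theorem count_true_map_not (l : List Bool) : (l.map not).count true = l.count false := by
  induction l with
  | nil => simp
  | cons x r ih => cases x <;> simp [List.count_cons, ih]

theorem count_false_map_not (l : List Bool) : (l.map not).count false = l.count true := by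
  induction l with
  | nil => simp
  | cons x r ih => cases x <;> simp [List.count_cons, ih]

theorem map_not_not (l : List Bool) : (l.map not).map not = l := by
  rw [List.map_map]
  have : (not ∘ not) = id := funext fun x => Bool.not_not x
  rw [this, List.map_id]

theorem ub_not' (p : List Bool) (hbal : p.count true = p.count false) :
    ub 0 0 p + ub 0 0 (p.map not) = p.count false := by
  have := ub_not p 0 0
  simp only [Nat.zero_add, Nat.add_zero] at this
  omega

noncomputable def equivBW (n m k : ℕ) (hm : m ≤ n) (hk : 1 ≤ k) (hk' : k ≤ n) :
    BSet n (n-m) (n-k) ≃ WSet n m (n+1-k) where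
  toFun q := ⟨q.1.map not, by
    obtain ⟨⟨hlen, hct, hub⟩, hpk, hhd, hlst⟩ := q.2
    have hcf : q.1.count false = n := by have := length_eq_counts q.1; omega
    have hbal : q.1.count true = q.1.count false := by omega
    have hlen' : (q.1.map not).length = 2 * n := by simpa using hlen
    have hct' : (q.1.map not).count true = n := by rw [count_true_map_not, hcf]
    have hub' : upsBelow (q.1.map not) = m := by
      rw [upsBelow_eq_ub]
      rw [upsBelow_eq_ub] at hub
      have := ub_not' q.1 hbal
      omega
    have hpk' : peaks (q.1.map not) = n + 1 - k := by
      have h2 := peaks_not q.1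
      rw [hhd, hlst] at h2
      have e1 : (if (some true : Option Bool) = some true then 1 else 0) = 1 := if_pos rfl
      have e2 : (if (some false : Option Bool) = some true then 1 else 0) = 0 := if_neg (by simp)
      rw [e1, e2] at h2
      omega
    refine ⟨⟨hlen', hct', hub'⟩, hpk', ?_, ?_⟩
    · rw [List.head?_map, hhd]; rfl
    · rw [List.getLast?_map, hlst]; rfl⟩
  invFun p := ⟨p.1.map not, by
    obtain ⟨⟨hlen, hct, hub⟩, hpk, hhd, hlst⟩ := p.2
    have hcf : p.1.count false = n := by have := length_eq_counts p.1; omega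
    have hbal : p.1.count true = p.1.count false := by omega
    have hlen' : (p.1.map not).length = 2 * n := by simpa using hlen
    have hct' : (p.1.map not).count true = n := by rw [count_true_map_not, hcf]
    have hub' : upsBelow (p.1.map not) = n - m := by
      rw [upsBelow_eq_ub]
      rw [upsBelow_eq_ub] at hub
      have := ub_not' p.1 hbal
      omega
    have hpk' : peaks (p.1.map not) = n - k := by
      have h2 := peaks_not p.1
      rw [hhd, hlst] at h2
      have e1 : (if (some true : Option Bool) = some true then 1 else 0) = 1 := if_pos rfl
      have e2 : (if (some false : Option Bool) = some true then 1 else 0) = 0 := if_neg (by simp)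
      rw [e1, e2] at h2
      omega
    refine ⟨⟨hlen', hct', hub'⟩, hpk', ?_, ?_⟩
    · rw [List.head?_map, hhd]; rfl
    · rw [List.getLast?_map, hlst]; rfl⟩
  left_inv := by
    rintro ⟨q, hq⟩
    apply Subtype.ext
    exact map_not_not q
  right_inv := by
    rintro ⟨p, hp⟩
    apply Subtype.ext
    exact map_not_not p

end StmtAux

/-- `p^{UD}_{n,m,k} = p^{DU}_{n,n-m,n-k}`. -/
theorem stmt_8 (n m k : ℕ) (hn : 1 ≤ n) (hm : m ≤ n) (hk : 1 ≤ k) (hk' : k ≤ n) :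
    pXY n m k true false = pXY n (n - m) (n - k) false true := by
  have h1 : pXY n m k true false = Nat.card (StmtAux.WSet n m k) := rfl
  have h2 : pXY n (n - m) (n - k) false true = Nat.card (StmtAux.BSet n (n - m) (n - k)) := rfl
  rw [h1, h2, Nat.card_congr (StmtAux.equivWM n m k),
      Nat.card_congr (StmtAux.equivMM n m k hk hk'),
      ← Nat.card_congr (StmtAux.equivWM n m (n+1-k)),
      ← Nat.card_congr (StmtAux.equivBW n m k hm hk hk')]
end

section
/- For integers n ≥ 1, 0 ≤ m ≤ n, and 1 ≤ k ≤ n-1, the number of (n,m)-Dyck paths with k peaks that start with D and end with U equals the number of (n,n-m)-Dyck paths with k+1 peaks that start with U and end with D, i.e., p^{DU}_{n,m,k} = p^{UD}_{n,n-m,k+1}. -/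
lemma countP_range_comp (N : ℕ) (f : ℕ → Bool) :
    (List.range N).countP f = (List.range N).countP (fun j => f (N - 1 - j)) := by
  have h : (List.range N).reverse = (List.range N).map (fun x => N - 1 - x) := by
    conv_lhs => rw [List.range_eq_range', List.reverse_range']
    simp
  rw [← List.countP_reverse, h, List.countP_map]
  rfl

lemma count_true_add_count_false (l : List Bool) : l.count true + l.count false = l.length := by
  induction l with
  | nil => simp
  | cons a t ih => cases a <;> simp [List.count_cons] <;> omega

lemma countP_and_split (l : List ℕ) (h b : ℕ → Bool) :
    l.countP (fun i => h i && b i) + l.countP (fun i => h i && !b i) = l.countP h := by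
  induction l with
  | nil => simp
  | cons a t ih =>
    simp only [List.countP_cons]
    cases hh : h a <;> cases hb : b a <;> simp [hh, hb] <;> omega

lemma countP_range_getD (p : List Bool) :
    (List.range p.length).countP (fun i => p.getD i false) = p.count true := by
  induction p with
  | nil => simp
  | cons a t ih =>
    rw [List.length_cons, List.range_succ_eq_map, List.countP_cons, List.countP_map]
    have h : (List.range t.length).countP
        ((fun i => (a :: t).getD i false) ∘ Nat.succ) = t.count true := by
      rw [← ih]; apply List.countP_congr; intro x _; simp [List.getD_cons_succ]
    rw [h]; cases a <;> simp [List.count_cons, List.getD_cons_zero]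

lemma count_take_drop (p : List Bool) (k : ℕ) (b : Bool) :
    (p.take k).count b + (p.drop k).count b = p.count b := by
  rw [← List.count_append, List.take_append_drop]

lemma take_reverse_eq (p : List Bool) (j : ℕ) :
    p.reverse.take j = (p.drop (p.length - j)).reverse := by
  have h := @List.reverse_take Bool p.reverse j
  rw [List.reverse_reverse, List.length_reverse] at h
  rw [← List.reverse_reverse (p.reverse.take j), h]

lemma upsBelow_reverse (p : List Bool) (hbal : p.count true = p.count false) :
    upsBelow p.reverse + upsBelow p = p.count true := by
  unfold upsBelow
  rw [List.length_reverse, countP_range_comp]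
  have key : ∀ i ∈ List.range p.length,
      ((p.reverse.getD (p.length - 1 - i) false &&
        decide ((p.reverse.take (p.length - 1 - i)).count true <
          (p.reverse.take (p.length - 1 - i)).count false)) = true)
      ↔ ((p.getD i false &&
        !decide ((p.take i).count true < (p.take i).count false)) = true) := by
    intro i hi
    rw [List.mem_range] at hi
    have h1 : p.length - 1 - i < p.length := by omega
    have hrd : p.reverse.getD (p.length - 1 - i) false = p.getD i false := by
      rw [List.getD_eq_getElem _ _ (by simpa using h1), List.getD_eq_getElem _ _ hi,
        List.getElem_reverse]
      congr 1
      omega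
    have htake : p.reverse.take (p.length - 1 - i) = (p.drop (i + 1)).reverse := by
      rw [take_reverse_eq]
      congr 2
      omega
    rw [hrd, htake]
    have hct := count_take_drop p (i + 1) true
    have hcf := count_take_drop p (i + 1) false
    cases hpi : p.getD i false with
    | false => simp
    | true =>
      have hpe : p[i] = true := by rw [← List.getD_eq_getElem p false hi]; exact hpi
      have hsucc : p.take (i + 1) = p.take i ++ [true] := by
        rw [List.take_succ, List.getElem?_eq_getElem hi, hpe]; rfl
      have e1 : (p.take (i + 1)).count true = (p.take i).count true + 1 := by
        simp [hsucc, List.count_append]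
      have e2 : (p.take (i + 1)).count false = (p.take i).count false := by
        simp [hsucc, List.count_append]
      simp only [List.count_reverse, Bool.true_and, decide_eq_true_eq, Bool.not_eq_true',
        decide_eq_false_iff_not, not_lt]
      omega
  rw [List.countP_congr key]
  have h1 := countP_and_split (List.range p.length) (fun i => p.getD i false)
    (fun i => decide ((p.take i).count true < (p.take i).count false))
  have h2 := countP_range_getD p
  omega

def valleys (p : List Bool) : ℕ :=
  (List.range (p.length - 1)).countP fun i => p.getD (i + 1) false && !p.getD i true

lemma peaks_reverse (p : List Bool) : peaks p.reverse = valleys p := by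
  unfold peaks valleys
  rw [List.length_reverse, countP_range_comp]
  apply List.countP_congr
  intro i hi
  rw [List.mem_range] at hi
  have e1 : p.reverse.getD (p.length - 1 - 1 - i) false = p.getD (i + 1) false := by
    rw [List.getD_eq_getElem _ _ (by simp; omega), List.getD_eq_getElem _ _ (by omega),
      List.getElem_reverse]
    congr 1
    omega
  have e2 : p.reverse.getD (p.length - 1 - 1 - i + 1) true = p.getD i true := by
    rw [List.getD_eq_getElem _ _ (by simp; omega), List.getD_eq_getElem _ _ (by omega),
      List.getElem_reverse]
    congr 1
    omega
  rw [e1, e2]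

lemma peaks_cons₂ (a b : Bool) (t : List Bool) :
    peaks (a :: b :: t) = (if a && !b then 1 else 0) + peaks (b :: t) := by
  unfold peaks
  simp only [List.length_cons, Nat.add_sub_cancel]
  rw [List.range_succ_eq_map, List.countP_cons, List.countP_map]
  have h : (List.range t.length).countP
      ((fun i => (a :: b :: t).getD i false && !(a :: b :: t).getD (i + 1) true) ∘ Nat.succ)
      = (List.range t.length).countP
        (fun i => (b :: t).getD i false && !(b :: t).getD (i + 1) true) := by
    apply List.countP_congr; intro x _; simp [List.getD_cons_succ]
  rw [h]
  cases a <;> cases b <;> simp [List.getD_cons_zero, List.getD_cons_succ] <;> omega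

lemma valleys_cons₂ (a b : Bool) (t : List Bool) :
    valleys (a :: b :: t) = (if b && !a then 1 else 0) + valleys (b :: t) := by
  unfold valleys
  simp only [List.length_cons, Nat.add_sub_cancel]
  rw [List.range_succ_eq_map, List.countP_cons, List.countP_map]
  have h : (List.range t.length).countP
      ((fun i => (a :: b :: t).getD (i + 1) false && !(a :: b :: t).getD i true) ∘ Nat.succ)
      = (List.range t.length).countP
        (fun i => (b :: t).getD (i + 1) false && !(b :: t).getD i true) := by
    apply List.countP_congr; intro x _; simp [List.getD_cons_succ]
  rw [h]
  cases a <;> cases b <;> simp [List.getD_cons_zero, List.getD_cons_succ] <;> omega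

lemma tel (t : List Bool) : ∀ a : Bool,
    valleys (a :: t) + (if a then 1 else 0)
      = peaks (a :: t) + (if (a :: t).getLast? = some true then 1 else 0) := by
  induction t with
  | nil => intro a; cases a <;> simp [peaks, valleys]
  | cons b t ih =>
    intro a
    have h := ih b
    rw [peaks_cons₂, valleys_cons₂, List.getLast?_cons_cons]
    cases a <;> cases b <;> simp only [if_true, if_false, Bool.and_true, Bool.and_false,
      Bool.not_true, Bool.not_false, Bool.true_and, Bool.false_and] at h ⊢ <;> simp at h ⊢ <;> omega

lemma valleys_of_head_last (p : List Bool) (a : Bool) (hh : p.head? = some a) :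
    valleys p + (if a then 1 else 0)
      = peaks p + (if p.getLast? = some true then 1 else 0) := by
  cases p with
  | nil => simp at hh
  | cons x t =>
    have : x = a := by simpa using hh
    subst this
    exact tel t x

lemma forward_dir (n m k : ℕ) (p : List Bool)
    (h : IsNM n m p ∧ peaks p = k ∧ p.head? = some false ∧ p.getLast? = some true) :
    IsNM n (n - m) p.reverse ∧ peaks p.reverse = k + 1 ∧
      p.reverse.head? = some true ∧ p.reverse.getLast? = some false := by
  obtain ⟨⟨hl, hc, hub⟩, hpk, hh, hlast⟩ := h
  have hcf : p.count false = n := by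
    have := count_true_add_count_false p; omega
  have hrev := upsBelow_reverse p (by omega)
  have htel := valleys_of_head_last p false hh
  rw [hlast] at htel
  refine ⟨⟨by simp [hl], by simp [hc], by omega⟩, ?_,
    by rw [List.head?_reverse]; exact hlast, by rw [List.getLast?_reverse]; exact hh⟩
  rw [peaks_reverse]
  simp at htel
  omega

lemma backward_dir (n m k : ℕ) (hm : m ≤ n) (q : List Bool)
    (h : IsNM n (n - m) q ∧ peaks q = k + 1 ∧ q.head? = some true ∧ q.getLast? = some false) :
    IsNM n m q.reverse ∧ peaks q.reverse = k ∧
      q.reverse.head? = some false ∧ q.reverse.getLast? = some true := by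
  obtain ⟨⟨hl, hc, hub⟩, hpk, hh, hlast⟩ := h
  have hcf : q.count false = n := by
    have := count_true_add_count_false q; omega
  have hrev := upsBelow_reverse q (by omega)
  have htel := valleys_of_head_last q true hh
  rw [hlast] at htel
  refine ⟨⟨by simp [hl], by simp [hc], by omega⟩, ?_,
    by rw [List.head?_reverse]; exact hlast, by rw [List.getLast?_reverse]; exact hh⟩
  rw [peaks_reverse]
  simp at htel
  omega


/-- `p^{DU}_{n,m,k} = p^{UD}_{n,n-m,k+1}`. -/
theorem stmt_9 (n m k : ℕ) (hn : 1 ≤ n) (hm : m ≤ n) (hk : 1 ≤ k) (hk' : k ≤ n - 1) :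
    pXY n m k false true = pXY n (n - m) (k + 1) true false := by
  unfold pXY
  apply Nat.card_congr
  exact {
    toFun := fun x => ⟨x.1.reverse, forward_dir n m k x.1 x.2⟩
    invFun := fun y => ⟨y.1.reverse, backward_dir n m k hm y.1 y.2⟩
    left_inv := fun x => Subtype.ext (by simp)
    right_inv := fun y => Subtype.ext (by simp) }
end

section
/- For integers n ≥ 1 and 1 ≤ k ≤ n, the number of (n,m)-Dyck paths with k peaks summed over all m from 1 to n-1 that start and end with an up step equals C(n-1,k)·C(n-1,k-1). -/
namespace Stmt10

/-! ### Run-length encoding machinery -/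

def bu : Bool → List ℕ → List ℕ → List Bool
  | _, [], _ => []
  | b, x :: xs, ys => List.replicate x b ++ bu (!b) ys xs
termination_by _ xs ys => xs.length + ys.length
decreasing_by simp; omega

def de : List Bool → List ℕ × List ℕ
  | [] => ([], [])
  | c :: t =>
    (((t.takeWhile (· == c)).length + 1) :: (de (t.dropWhile (· == c))).2,
     (de (t.dropWhile (· == c))).1)
termination_by l => l.length
decreasing_by exact Nat.lt_succ_of_le ((List.dropWhile_sublist _).length_le)

def pk : List Bool → ℕ
  | [] => 0
  | [_] => 0
  | a :: b :: t => (if a = true ∧ b = false then 1 else 0) + pk (b :: t)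

lemma peaks_cons_cons (a b : Bool) (t : List Bool) :
    peaks (a :: b :: t) = (if a = true ∧ b = false then 1 else 0) + peaks (b :: t) := by
  simp only [peaks, List.length_cons]
  rw [show t.length + 1 + 1 - 1 = t.length + 1 from rfl,
    show t.length + 1 - 1 = t.length from rfl, List.range_succ_eq_map]
  rw [List.countP_cons, List.countP_map]
  have h1 : ((fun i => (a :: b :: t).getD i false && !(a :: b :: t).getD (i + 1) true) ∘ Nat.succ)
      = fun i => (b :: t).getD i false && !(b :: t).getD (i + 1) true := by
    funext i; rfl
  rw [h1]
  have h2 : ((a :: b :: t).getD 0 false && !(a :: b :: t).getD 1 true) = (a && !b) := rfl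
  rw [h2]
  cases a <;> cases b <;> simp <;> omega

lemma peaks_eq_pk (p : List Bool) : peaks p = pk p := by
  induction p using pk.induct with
  | case1 => rfl
  | case2 a => rfl
  | case3 a b t ih => rw [peaks_cons_cons, pk, ih]

lemma pk_cons (c : Bool) (q : List Bool) :
    pk (c :: q) = (if c = true ∧ q.head? = some false then 1 else 0) + pk q := by
  cases q with
  | nil => simp [pk]
  | cons d t => cases d <;> simp [pk]

lemma pk_append (l q : List Bool) :
    pk (l ++ q) = pk l + pk q +
      (if l.getLast? = some true ∧ q.head? = some false then 1 else 0) := by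
  induction l with
  | nil => simp [pk]
  | cons c l ih =>
    cases l with
    | nil =>
      rw [List.cons_append, List.nil_append, pk_cons]
      simp only [pk, List.getLast?_singleton, Option.some.injEq]
      omega
    | cons d l' =>
      rw [List.cons_append, pk_cons, ih, pk_cons (c := c) (q := d :: l'),
        List.getLast?_cons_cons]
      simp only [List.cons_append, List.head?_cons, Option.some.injEq]
      cases c <;> cases d <;> simp <;> omega

lemma pk_replicate (m : ℕ) (c : Bool) : pk (List.replicate m c) = 0 := by
  induction m with
  | zero => rfl
  | succ m ih =>
    rw [List.replicate_succ, pk_cons, ih]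
    cases m with
    | zero => simp
    | succ m => cases c <;> simp [List.replicate_succ]

lemma bu_nil (b : Bool) (ys : List ℕ) : bu b [] ys = [] := by simp [bu]

lemma bu_cons (b : Bool) (x : ℕ) (xs ys : List ℕ) :
    bu b (x :: xs) ys = List.replicate x b ++ bu (!b) ys xs := by simp [bu]

lemma bu_head? (b : Bool) (xs ys : List ℕ) (hpos : ∀ x ∈ xs, 0 < x) (hx : xs ≠ []) :
    (bu b xs ys).head? = some b := by
  cases xs with
  | nil => exact absurd rfl hx
  | cons x xs =>
    obtain ⟨x', rfl⟩ : ∃ x', x = x' + 1 := by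
      have := hpos x (by simp); exact ⟨x - 1, by omega⟩
    rw [bu_cons, List.replicate_succ]
    simp

lemma bu_ne_nil (b : Bool) (xs ys : List ℕ) (hpos : ∀ x ∈ xs, 0 < x) (hx : xs ≠ []) :
    bu b xs ys ≠ [] := by
  intro h
  have := bu_head? b xs ys hpos hx
  rw [h] at this; simp at this

lemma bu_length (b : Bool) (xs ys : List ℕ)
    (hs : ys.length ≤ xs.length ∧ xs.length ≤ ys.length + 1) :
    (bu b xs ys).length = xs.sum + ys.sum := by
  induction b, xs, ys using bu.induct with
  | case1 b ys =>
    have : ys = [] := by rcases hs with ⟨h1, -⟩; simpa using h1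
    subst this; simp [bu_nil]
  | case2 b x xs ys ih =>
    rw [bu_cons]
    simp only [List.length_cons] at hs
    rw [List.length_append, List.length_replicate, ih (by omega)]
    simp [List.sum_cons]; omega

lemma bu_count (b : Bool) (xs ys : List ℕ)
    (hs : ys.length ≤ xs.length ∧ xs.length ≤ ys.length + 1) :
    (bu b xs ys).count true = if b then xs.sum else ys.sum := by
  induction b, xs, ys using bu.induct with
  | case1 b ys =>
    have : ys = [] := by rcases hs with ⟨h1, -⟩; simpa using h1
    subst this; cases b <;> simp [bu_nil]
  | case2 b x xs ys ih =>
    rw [bu_cons]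
    simp only [List.length_cons] at hs
    rw [List.count_append, List.count_replicate, ih (by omega)]
    cases b <;> simp [List.sum_cons]

lemma getLast?_replicate_succ (x : ℕ) (b : Bool) :
    (List.replicate (x + 1) b).getLast? = some b := by
  rw [List.replicate_succ', List.getLast?_concat]

lemma bu_getLast? (b : Bool) (xs ys : List ℕ)
    (hpx : ∀ x ∈ xs, 0 < x) (hpy : ∀ y ∈ ys, 0 < y)
    (hs : ys.length ≤ xs.length ∧ xs.length ≤ ys.length + 1) (hx : xs ≠ []) :
    (bu b xs ys).getLast? = some (if xs.length = ys.length + 1 then b else !b) := by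
  induction b, xs, ys using bu.induct with
  | case1 b ys => exact absurd rfl hx
  | case2 b x xs ys ih =>
    obtain ⟨x', rfl⟩ : ∃ x', x = x' + 1 := ⟨x - 1, by have := hpx x (by simp); omega⟩
    rw [bu_cons]
    by_cases hys : ys = []
    · subst hys
      have hxs : xs = [] := by
        have h2 := hs.2
        simp only [List.length_cons, List.length_nil] at h2
        exact List.eq_nil_of_length_eq_zero (by omega)
      subst hxs
      rw [bu_nil, List.append_nil, getLast?_replicate_succ]
      simp
    · rw [List.getLast?_append_of_ne_nil _ (bu_ne_nil _ _ _ hpy hys),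
        ih hpy (fun a ha => hpx a (List.mem_cons_of_mem _ ha)) ?_ hys]
      · simp only [List.length_cons] at hs ⊢
        rcases (by omega : ys.length = xs.length + 1 ∨ ys.length = xs.length) with h | h <;>
          simp [h]
      · simp only [List.length_cons] at hs; omega

lemma pk_bu (b : Bool) (xs ys : List ℕ)
    (hpx : ∀ x ∈ xs, 0 < x) (hpy : ∀ y ∈ ys, 0 < y)
    (hs : ys.length ≤ xs.length ∧ xs.length ≤ ys.length + 1) :
    pk (bu b xs ys) = ys.length - (if b = false ∧ xs.length = ys.length then 1 else 0) := by
  induction b, xs, ys using bu.induct with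
  | case1 b ys =>
    have hy : ys = [] := by rcases hs with ⟨h1, -⟩; simpa using h1
    subst hy; rw [bu_nil]; simp [pk]
  | case2 b x xs ys ih =>
    obtain ⟨x', rfl⟩ : ∃ x', x = x' + 1 := ⟨x - 1, by have := hpx x (by simp); omega⟩
    rw [bu_cons, pk_append, pk_replicate, getLast?_replicate_succ]
    simp only [List.length_cons] at hs ⊢
    by_cases hys : ys = []
    · subst hys
      have hxs : xs = [] := by
        have h2 := hs.2
        simp only [List.length_cons, List.length_nil] at h2
        exact List.eq_nil_of_length_eq_zero (by omega)
      subst hxs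
      rw [bu_nil]
      simp [pk]
    · rw [bu_head? _ _ _ hpy hys,
        ih hpy (fun a ha => hpx a (List.mem_cons_of_mem _ ha)) (by omega)]
      have h1 : 1 ≤ ys.length := by
        rcases ys with _ | ⟨y, ys⟩; · exact absurd rfl hys
        · simp
      cases b
      · simp only [Bool.not_false, Option.some.injEq]
        split_ifs with h2 h3 h3 <;> simp_all <;> omega
      · simp only [Bool.not_true, Option.some.injEq]
        split_ifs with h2 h3 h3 <;> simp_all <;> omega

lemma de_nil : de [] = ([], []) := by simp [de]

lemma de_cons (c : Bool) (t : List Bool) :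
    de (c :: t) = (((t.takeWhile (· == c)).length + 1) :: (de (t.dropWhile (· == c))).2,
      (de (t.dropWhile (· == c))).1) := by
  rw [de]

lemma de_pos (p : List Bool) :
    (∀ x ∈ (de p).1, 0 < x) ∧ (∀ x ∈ (de p).2, 0 < x) := by
  induction p using de.induct with
  | case1 => simp [de_nil]
  | case2 c t ih =>
    rw [de_cons]
    refine ⟨?_, ih.1⟩
    intro x hx
    rcases List.mem_cons.1 hx with h | h
    · omega
    · exact ih.2 x h

lemma de_shape (p : List Bool) :
    (de p).2.length ≤ (de p).1.length ∧ (de p).1.length ≤ (de p).2.length + 1 := by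
  induction p using de.induct with
  | case1 => simp [de_nil]
  | case2 c t ih =>
    rw [de_cons]
    simp only [List.length_cons]
    omega

lemma takeWhile_replicate_append (m : ℕ) (c : Bool) (q : List Bool) :
    (List.replicate m c ++ q).takeWhile (· == c) = List.replicate m c ++ q.takeWhile (· == c) := by
  induction m with
  | zero => simp
  | succ m ih => simp [List.replicate_succ, List.takeWhile_cons, ih]

lemma dropWhile_replicate_append (m : ℕ) (c : Bool) (q : List Bool) :
    (List.replicate m c ++ q).dropWhile (· == c) = q.dropWhile (· == c) := by
  induction m with
  | zero => simp
  | succ m ih => simp [List.replicate_succ, List.dropWhile_cons, ih]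

lemma dropWhile_head_false (q : Bool → Bool) (l : List Bool) : ∀ {a : Bool} {t : List Bool},
    l.dropWhile q = a :: t → q a = false := by
  induction l with
  | nil => intro a t h; simp at h
  | cons b l ih =>
    intro a t h
    rw [List.dropWhile_cons] at h
    split at h
    · exact ih h
    · rename_i hq
      rw [List.cons.injEq] at h
      rw [← h.1]
      simpa using hq

lemma de_bu (b : Bool) (xs ys : List ℕ)
    (hpx : ∀ x ∈ xs, 0 < x) (hpy : ∀ y ∈ ys, 0 < y)
    (hs : ys.length ≤ xs.length ∧ xs.length ≤ ys.length + 1) :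
    de (bu b xs ys) = (xs, ys) := by
  induction b, xs, ys using bu.induct with
  | case1 b ys =>
    have hy : ys = [] := by rcases hs with ⟨h1, -⟩; simpa using h1
    subst hy; rw [bu_nil, de_nil]
  | case2 b x xs ys ih =>
    obtain ⟨x', rfl⟩ : ∃ x', x = x' + 1 := ⟨x - 1, by have := hpx x (by simp); omega⟩
    rw [bu_cons, List.replicate_succ, List.cons_append, de_cons,
      takeWhile_replicate_append, dropWhile_replicate_append]
    have htw : (bu (!b) ys xs).takeWhile (· == b) = [] := by
      by_cases hys : ys = []
      · subst hys; rw [bu_nil]; rfl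
      · have hh := bu_head? (!b) ys xs hpy hys
        rcases hb : bu (!b) ys xs with _ | ⟨c, r⟩
        · rfl
        · rw [hb] at hh
          simp only [List.head?_cons, Option.some.injEq] at hh
          subst hh
          rw [List.takeWhile_cons_of_neg]
          simp
    have hdw : (bu (!b) ys xs).dropWhile (· == b) = bu (!b) ys xs := by
      by_cases hys : ys = []
      · subst hys; rw [bu_nil]; rfl
      · have hh := bu_head? (!b) ys xs hpy hys
        rcases hb : bu (!b) ys xs with _ | ⟨c, r⟩
        · rfl
        · rw [hb] at hh
          simp only [List.head?_cons, Option.some.injEq] at hh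
          subst hh
          rw [List.dropWhile_cons_of_neg]
          simp
    rw [htw, hdw, List.append_nil, List.length_replicate]
    simp only [List.length_cons] at hs
    rw [ih hpy (fun a ha => hpx a (List.mem_cons_of_mem _ ha)) (by omega)]

lemma bu_de (p : List Bool) : ∀ c, p.head? = some c → bu c (de p).1 (de p).2 = p := by
  induction p using de.induct with
  | case1 => intro c h; simp at h
  | case2 c' t ih =>
    intro c h
    simp only [List.head?_cons, Option.some.injEq] at h
    subst h
    simp only [de_cons]
    rw [bu_cons, List.replicate_succ, List.cons_append]
    have hbu : bu (!c') (de (t.dropWhile (· == c'))).1 (de (t.dropWhile (· == c'))).2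
        = t.dropWhile (· == c') := by
      rcases hr : t.dropWhile (· == c') with _ | ⟨d, r⟩
      · rw [de_nil]; exact bu_nil _ _
      · have hd : d = !c' := by
          have h0 := dropWhile_head_false (· == c') t hr
          cases c' <;> cases d <;> simp_all
        rw [← hr]
        exact ih (!c') (by rw [hr, hd, List.head?_cons])
    rw [hbu]
    have htw : t.takeWhile (· == c') = List.replicate (t.takeWhile (· == c')).length c' := by
      rw [List.eq_replicate_iff]
      exact ⟨rfl, fun b hb => by simpa using List.mem_takeWhile_imp hb⟩
    conv_rhs => rw [← List.takeWhile_append_dropWhile (p := (· == c')) (l := t), htw]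

/-! ### Compositions -/

def comps (n j : ℕ) := {l : List ℕ // l.length = j ∧ l.sum = n ∧ ∀ x ∈ l, 0 < x}

lemma getD_le_sum (l : List ℕ) (i : ℕ) : l.getD i 0 ≤ l.sum := by
  rcases lt_or_ge i l.length with h | h
  · rw [List.getD_eq_getElem l 0 h]
    exact List.single_le_sum (fun x _ => Nat.zero_le x) _ (l.getElem_mem h)
  · rw [List.getD_eq_default l 0 h]; exact Nat.zero_le _

instance compsFinite (n j : ℕ) : Finite (comps n j) := by
  apply Finite.of_injective (f := fun l : comps n j =>
    (fun i : Fin j => (⟨l.1.getD i 0,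
      Nat.lt_succ_of_le ((getD_le_sum l.1 i).trans_eq l.2.2.1)⟩ : Fin (n + 1))))
  intro l₁ l₂ h
  apply Subtype.ext
  apply List.ext_getElem (by rw [l₁.2.1, l₂.2.1])
  intro i h1 h2
  have hij : i < j := l₁.2.1 ▸ h1
  have h3 := congrFun h ⟨i, hij⟩
  simp only [Fin.mk.injEq] at h3
  rwa [List.getD_eq_getElem _ 0 h1, List.getD_eq_getElem _ 0 h2] at h3

lemma card_comps_nil (n : ℕ) : Nat.card (comps n 0) = if n = 0 then 1 else 0 := by
  by_cases h : n = 0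
  · subst h
    rw [if_pos rfl]
    have : Unique (comps 0 0) := by
      refine ⟨⟨⟨[], rfl, rfl, by simp⟩⟩, ?_⟩
      rintro ⟨l, h1, h2, h3⟩
      apply Subtype.ext
      exact List.eq_nil_of_length_eq_zero h1
    exact Nat.card_unique
  · rw [if_neg h]
    have : IsEmpty (comps n 0) := by
      refine ⟨?_⟩
      rintro ⟨l, h1, h2, h3⟩
      obtain rfl := List.eq_nil_of_length_eq_zero h1
      exact h h2.symm
    exact Nat.card_of_isEmpty

lemma card_comps_zero (j : ℕ) : Nat.card (comps 0 (j + 1)) = 0 := by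
  have : IsEmpty (comps 0 (j + 1)) := by
    refine ⟨?_⟩
    rintro ⟨l, h1, h2, h3⟩
    rcases l with _ | ⟨x, t⟩
    · simp at h1
    · have hx := h3 x (by simp)
      simp only [List.sum_cons] at h2
      omega
  exact Nat.card_of_isEmpty

lemma comps_cons_exists {n j : ℕ} (l : comps n (j + 1)) : ∃ x t, l.1 = x :: t := by
  rcases hl : l.1 with _ | ⟨x, t⟩
  · have := l.2.1; rw [hl] at this; simp at this
  · exact ⟨x, t, rfl⟩

lemma oneCons_proof {n j : ℕ} (l : comps n j) :
    ((1 : ℕ) :: l.1).length = j + 1 ∧ ((1 : ℕ) :: l.1).sum = n + 1 ∧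
      ∀ x ∈ (1 : ℕ) :: l.1, 0 < x := by
  obtain ⟨m, h1, h2, h3⟩ := l
  refine ⟨by simp [h1], by simp only [List.sum_cons, h2]; omega, ?_⟩
  intro x hx
  rcases List.mem_cons.1 hx with h | h
  · omega
  · exact h3 x h

lemma addOne_proof {n j : ℕ} (l : comps n (j + 1)) :
    ((l.1.headI + 1) :: l.1.tail).length = j + 1 ∧ ((l.1.headI + 1) :: l.1.tail).sum = n + 1 ∧
      ∀ x ∈ (l.1.headI + 1) :: l.1.tail, 0 < x := by
  obtain ⟨x, t, hxt⟩ := comps_cons_exists l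
  obtain ⟨m, h1, h2, h3⟩ := l
  simp only at hxt
  subst hxt
  simp only [List.headI_cons, List.tail_cons, List.length_cons, List.sum_cons] at h1 h2 ⊢
  refine ⟨by omega, by omega, ?_⟩
  intro a ha
  rcases List.mem_cons.1 ha with h | h
  · omega
  · exact h3 a (List.mem_cons_of_mem _ h)

def oneCons {n j : ℕ} (l : comps n j) : comps (n + 1) (j + 1) := ⟨1 :: l.1, oneCons_proof l⟩
def addOne {n j : ℕ} (l : comps n (j + 1)) : comps (n + 1) (j + 1) :=
  ⟨(l.1.headI + 1) :: l.1.tail, addOne_proof l⟩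

@[simp] lemma oneCons_val {n j : ℕ} (l : comps n j) : (oneCons l).1 = 1 :: l.1 := rfl
@[simp] lemma addOne_val {n j : ℕ} (l : comps n (j + 1)) :
    (addOne l).1 = (l.1.headI + 1) :: l.1.tail := rfl

lemma card_comps_succ (n j : ℕ) :
    Nat.card (comps (n + 1) (j + 1)) = Nat.card (comps n j) + Nat.card (comps n (j + 1)) := by
  rw [← Nat.card_sum]
  apply Nat.card_congr
  symm
  apply Equiv.ofBijective (f := Sum.elim (oneCons (n := n) (j := j)) (addOne (n := n) (j := j)))
  constructor
  · rintro (l₁ | l₁) (l₂ | l₂) h <;>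
      simp only [Sum.elim_inl, Sum.elim_inr] at h <;>
      have h' := congrArg Subtype.val h <;>
      simp only [oneCons_val, addOne_val, List.cons.injEq] at h'
    · exact congrArg Sum.inl (Subtype.ext h'.2)
    · exfalso
      obtain ⟨x, t, hxt⟩ := comps_cons_exists l₂
      have hx := l₂.2.2.2 x (by rw [hxt]; simp)
      rw [hxt] at h'
      simp only [List.headI_cons] at h'
      omega
    · exfalso
      obtain ⟨x, t, hxt⟩ := comps_cons_exists l₁
      have hx := l₁.2.2.2 x (by rw [hxt]; simp)
      rw [hxt] at h'
      simp only [List.headI_cons] at h'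
      omega
    · apply congrArg Sum.inr
      apply Subtype.ext
      obtain ⟨x, t, hxt⟩ := comps_cons_exists l₁
      obtain ⟨y, s, hys⟩ := comps_cons_exists l₂
      rw [hxt, hys] at h' ⊢
      simp only [List.headI_cons, List.tail_cons] at h'
      rw [List.cons.injEq]
      exact ⟨by omega, h'.2⟩
  · rintro ⟨l, h1, h2, h3⟩
    rcases l with _ | ⟨x, t⟩
    · simp at h1
    rcases x with _ | _ | y
    · exact absurd (h3 0 (by simp)) (by omega)
    · refine ⟨Sum.inl ⟨t, by simpa using h1, by simp only [List.sum_cons] at h2; omega,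
        fun a ha => h3 a (List.mem_cons_of_mem _ ha)⟩, ?_⟩
      apply Subtype.ext
      rfl
    · refine ⟨Sum.inr ⟨(y + 1) :: t, by simpa using h1,
        by simp only [List.sum_cons] at h2 ⊢; omega, ?_⟩, ?_⟩
      · intro a ha
        rcases List.mem_cons.1 ha with h | h
        · omega
        · exact h3 a (List.mem_cons_of_mem _ h)
      · apply Subtype.ext
        rfl

lemma card_comps (n j : ℕ) : Nat.card (comps (n + 1) (j + 1)) = Nat.choose n j := by
  induction n generalizing j with
  | zero =>
    rw [card_comps_succ]
    cases j with
    | zero => rw [card_comps_nil, card_comps_zero]; rfl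
    | succ j => rw [card_comps_zero, card_comps_zero]; simp
  | succ n ih =>
    rw [card_comps_succ]
    cases j with
    | zero =>
      rw [card_comps_nil, ih 0]
      simp
    | succ j =>
      rw [ih j, ih (j + 1)]
      rw [Nat.choose_succ_succ]

/-! ### Finsets of paths -/

def lists (L : ℕ) : Finset (List Bool) :=
  (Finset.univ : Finset (Fin L → Bool)).image List.ofFn

lemma mem_lists {L : ℕ} {l : List Bool} : l ∈ lists L ↔ l.length = L := by
  simp only [lists, Finset.mem_image, Finset.mem_univ, true_and]
  constructor
  · rintro ⟨f, rfl⟩; simp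
  · intro h
    exact ⟨fun i => l.get ⟨i, h ▸ i.2⟩, by subst h; exact List.ofFn_get l⟩

lemma card_subtype_filter (L : ℕ) (P : List Bool → Prop) [DecidablePred P]
    (h : ∀ p, P p → p.length = L) :
    Nat.card {p : List Bool // P p} = ((lists L).filter P).card := by
  rw [Nat.card_congr (Equiv.subtypeEquivRight (q := fun p => p ∈ (lists L).filter P)
    (fun p => by
      simp only [Finset.mem_filter, mem_lists]
      exact ⟨fun hp => ⟨h p hp, hp⟩, fun hp => hp.2⟩))]
  rw [Nat.card_eq_finsetCard]

lemma countP_getD (p : List Bool) :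
    (List.range p.length).countP (fun i => p.getD i false) = p.count true := by
  induction p with
  | nil => rfl
  | cons a t ih =>
    rw [List.length_cons, List.range_succ_eq_map, List.countP_cons, List.countP_map]
    have : ((fun i => (a :: t).getD i false) ∘ Nat.succ) = fun i => t.getD i false := rfl
    rw [this, ih, List.count_cons]
    cases a <;> simp

lemma count_false_add_count_true (l : List Bool) : l.count false + l.count true = l.length := by
  induction l with
  | nil => rfl
  | cons a t ih =>
    rw [List.length_cons, List.count_cons, List.count_cons]
    cases a <;> simp <;> omega

lemma upsBelow_bounds (n : ℕ) (hn : 1 ≤ n) (p : List Bool) (hlen : p.length = 2 * n)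
    (hcount : p.count true = n) (hhead : p.head? = some true) (hlast : p.getLast? = some true) :
    upsBelow p ∈ Finset.Icc 1 (n - 1) := by
  obtain ⟨t, rfl⟩ : ∃ t, p = true :: t := by
    rcases p with _ | ⟨a, t⟩
    · simp at hhead
    · simp only [List.head?_cons, Option.some.injEq] at hhead; subst hhead; exact ⟨t, rfl⟩
  rw [Finset.mem_Icc]
  constructor
  · rw [Nat.one_le_iff_ne_zero, ← Nat.pos_iff_ne_zero, upsBelow, List.countP_pos_iff]
    refine ⟨2 * n - 1, by rw [hlen]; exact List.mem_range.2 (by omega), ?_⟩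
    have hne : (true :: t) ≠ [] := by simp
    have hdl : (true :: t) = (true :: t).dropLast ++ [true] := by
      conv_lhs => rw [← List.dropLast_append_getLast hne]
      congr 1
      rw [List.getLast?_eq_getLast hne, Option.some.injEq] at hlast
      rw [hlast]
    have hdlen : (true :: t).dropLast.length = 2 * n - 1 := by
      rw [List.length_dropLast, hlen]
    have htake : (true :: t).take (2 * n - 1) = (true :: t).dropLast := by
      rw [List.dropLast_eq_take, hlen]
    have hcdl : (true :: t).dropLast.count true = n - 1 := by
      have := hcount
      conv_lhs at this => rw [hdl]
      rw [List.count_append] at this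
      simp at this
      omega
    have hcdf : (true :: t).dropLast.count false = n := by
      have hh := count_false_add_count_true (true :: t).dropLast
      rw [hcdl, hdlen] at hh
      omega
    have hget : (true :: t).getD (2 * n - 1) false = true := by
      set d := (true :: t).dropLast with hd
      rw [List.getD_eq_getElem?_getD, ← hdlen]
      conv_lhs => rw [hdl]
      rw [List.getElem?_concat_length]
      rfl
    rw [hget, htake, hcdl, hcdf]
    simp only [Bool.true_and, decide_eq_true_eq]
    omega
  · rw [upsBelow, List.length_cons, List.range_succ_eq_map, List.countP_cons, List.countP_map]
    have h0 : ((true :: t).getD 0 false &&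
        decide (((true :: t).take 0).count true < ((true :: t).take 0).count false)) = false := by
      simp
    rw [h0, if_neg (by simp)]
    have hle := List.countP_mono_left (l := List.range t.length)
      (p := (fun i => (true :: t).getD i false &&
        decide (((true :: t).take i).count true < ((true :: t).take i).count false)) ∘ Nat.succ)
      (q := fun i => t.getD i false) ?_
    · have hct : t.count true = n - 1 := by
        rw [List.count_cons] at hcount
        simp at hcount
        omega
      rw [countP_getD t] at hle
      omega
    · intro a _ ha
      simp only [Function.comp_apply, List.getD_cons_succ, Bool.and_eq_true] at ha
      exact ha.1

/-! ### Main bijection -/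

def Q (n k : ℕ) (p : List Bool) : Prop :=
  p.length = 2 * n ∧ p.count true = n ∧ peaks p = k ∧
    p.head? = some true ∧ p.getLast? = some true

lemma mem_forward {n k : ℕ} {p : List Bool} (hQ : Q n k p) :
    ((de p).1.length = k + 1 ∧ (de p).1.sum = n ∧ ∀ x ∈ (de p).1, 0 < x) ∧
    ((de p).2.length = k ∧ (de p).2.sum = n ∧ ∀ x ∈ (de p).2, 0 < x) := by
  obtain ⟨hlen, hcount, hpeaks, hhead, hlast⟩ := hQ
  have hpos := de_pos p
  have hsh := de_shape p
  have hb : bu true (de p).1 (de p).2 = p := bu_de p true hhead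
  have hl : p.length = (de p).1.sum + (de p).2.sum := by
    conv_lhs => rw [← hb]
    exact bu_length _ _ _ hsh
  have hc : p.count true = (de p).1.sum := by
    conv_lhs => rw [← hb]
    rw [bu_count _ _ _ hsh]; rfl
  have hsum1 : (de p).1.sum = n := by omega
  have hsum2 : (de p).2.sum = n := by omega
  have hune : (de p).1 ≠ [] := by
    intro h
    rw [h, bu_nil] at hb
    rw [← hb] at hhead
    simp at hhead
  have hlst := bu_getLast? true (de p).1 (de p).2 hpos.1 hpos.2 hsh hune
  rw [hb, hlast] at hlst
  have hsh1 : (de p).1.length = (de p).2.length + 1 := by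
    by_contra hc1
    rw [if_neg hc1] at hlst
    simp at hlst
  have hpk : pk p = (de p).2.length := by
    conv_lhs => rw [← hb]
    rw [pk_bu _ _ _ hpos.1 hpos.2 hsh]
    simp
  have hk2 : (de p).2.length = k := by
    rw [← hpk, ← peaks_eq_pk, hpeaks]
  exact ⟨⟨by omega, hsum1, hpos.1⟩, ⟨hk2, hsum2, hpos.2⟩⟩

lemma mem_backward {n k : ℕ} {u v : List ℕ}
    (hu : u.length = k + 1 ∧ u.sum = n ∧ ∀ x ∈ u, 0 < x)
    (hv : v.length = k ∧ v.sum = n ∧ ∀ x ∈ v, 0 < x) :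
    Q n k (bu true u v) := by
  obtain ⟨hul, hus, hup⟩ := hu
  obtain ⟨hvl, hvs, hvp⟩ := hv
  have hsh : v.length ≤ u.length ∧ u.length ≤ v.length + 1 := by omega
  have hune : u ≠ [] := by
    intro h; rw [h] at hul; simp at hul
  refine ⟨?_, ?_, ?_, ?_, ?_⟩
  · rw [bu_length _ _ _ hsh, hus, hvs]; omega
  · rw [bu_count _ _ _ hsh, if_pos rfl, hus]
  · rw [peaks_eq_pk, pk_bu _ _ _ hup hvp hsh]
    simp [hvl]
  · exact bu_head? _ _ _ hup hune
  · rw [bu_getLast? _ _ _ hup hvp hsh hune, if_pos (by omega)]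

noncomputable def mainEquiv (n k : ℕ) :
    {p : List Bool // Q n k p} ≃ comps n (k + 1) × comps n k where
  toFun p := (⟨(de p.1).1, (mem_forward p.2).1⟩, ⟨(de p.1).2, (mem_forward p.2).2⟩)
  invFun z := ⟨bu true z.1.1 z.2.1, mem_backward z.1.2 z.2.2⟩
  left_inv p := Subtype.ext (bu_de p.1 true p.2.2.2.2.1)
  right_inv z := by
    obtain ⟨⟨u, hu⟩, ⟨v, hv⟩⟩ := z
    have hsh : v.length ≤ u.length ∧ u.length ≤ v.length + 1 := by
      obtain ⟨h1, -, -⟩ := hu; obtain ⟨h2, -, -⟩ := hv; omega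
    have hde := de_bu true u v hu.2.2 hv.2.2 hsh
    simp only [Prod.mk.injEq]
    refine Prod.ext ?_ ?_ <;> apply Subtype.ext <;> simp [hde]

end Stmt10

open Stmt10 in
/-- `Σ_{m=1}^{n-1} p^{UU}_{n,m,k} = C(n-1,k) * C(n-1,k-1)`. -/
theorem stmt_10 (n k : ℕ) (hn : 1 ≤ n) (hk : 1 ≤ k) (hk' : k ≤ n) :
    ∑ m ∈ Finset.Icc 1 (n - 1), pXY n m k true true =
      Nat.choose (n - 1) k * Nat.choose (n - 1) (k - 1) := by
  classical
  have h1 : ∀ m, pXY n m k true true = ((lists (2 * n)).filter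
      (fun p => IsNM n m p ∧ peaks p = k ∧ p.head? = some true ∧ p.getLast? = some true)).card :=
    fun m => card_subtype_filter _ _ (fun p hp => hp.1.1)
  have h2 : ∀ m, (lists (2 * n)).filter
      (fun p => IsNM n m p ∧ peaks p = k ∧ p.head? = some true ∧ p.getLast? = some true) =
      ((lists (2 * n)).filter (Q n k)).filter (fun p => upsBelow p = m) := by
    intro m
    rw [Finset.filter_filter]
    apply Finset.filter_congr
    intro p hp
    rw [mem_lists] at hp
    unfold IsNM Q
    constructor
    · rintro ⟨⟨-, hc, hub⟩, hpk, hh, hl⟩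
      exact ⟨⟨hp, hc, hpk, hh, hl⟩, hub⟩
    · rintro ⟨⟨-, hc, hpk, hh, hl⟩, hub⟩
      exact ⟨⟨hp, hc, hub⟩, hpk, hh, hl⟩
  have h3 : ∑ m ∈ Finset.Icc 1 (n - 1), pXY n m k true true =
      ((lists (2 * n)).filter (Q n k)).card := by
    rw [Finset.card_eq_sum_card_fiberwise (f := upsBelow) (t := Finset.Icc 1 (n - 1)) ?_]
    · exact Finset.sum_congr rfl (fun m _ => by rw [h1 m, h2 m])
    · intro p hp
      rw [Finset.mem_coe, Finset.mem_filter, mem_lists] at hp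
      obtain ⟨hplen, -, hc, -, hh, hl⟩ := hp
      exact upsBelow_bounds n hn p hplen hc hh hl
  rw [h3, ← card_subtype_filter (2 * n) (Q n k) (fun p hp => hp.1),
    Nat.card_congr (mainEquiv n k), Nat.card_prod]
  obtain ⟨n', rfl⟩ : ∃ n', n = n' + 1 := ⟨n - 1, by omega⟩
  obtain ⟨k', rfl⟩ : ∃ k', k = k' + 1 := ⟨k - 1, by omega⟩
  rw [card_comps, card_comps]
  simp
end
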